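/- arXiv:2208.01484 — 8 statements merged into one kernel-verified Lean document; each statement's English description precedes it below -/
import Mathlib

section
/- If a permutation π contains the pattern 231 but contains no copy of the Fishburn pattern f, then π contains the pattern 3142. -/
/-- Two lists of naturals have the same length and the same relative order
(including ties). -/
def SameRelOrder (u v : List ℕ) : Prop :=
  u.length = v.length ∧
    ∀ i j, i < u.length → j < u.length →
      (u.getD i 0 < u.getD j 0 ↔ v.getD i 0 < v.getD j 0)

/-- `α` contains `β` as a pattern: some subsequence of `α` has the same length
and relative order as `β`. -/
def SeqContains (α β : List ℕ) : Prop :=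
  ∃ γ : List ℕ, γ.Sublist α ∧ SameRelOrder γ β

/-- A copy of the Fishburn pattern `f` in `l`: indices `j`, `k` with `j + 1 < k`,
`l j = l k + 1` and `l (j+1) > l j`. -/
def HasFishburnCopy (l : List ℕ) : Prop :=
  ∃ j k, j + 1 < k ∧ k < l.length ∧
    l.getD j 0 = l.getD k 0 + 1 ∧ l.getD j 0 < l.getD (j + 1) 0

/-- A Fishburn permutation contains no copy of the Fishburn pattern `f`. -/
def FishburnFree (l : List ℕ) : Prop := ¬ HasFishburnCopy l

/-- `l` is a permutation of `1, …, n`, written in one-line notation. -/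
def IsPermList (n : ℕ) (l : List ℕ) : Prop := l.Perm (List.range' 1 n)

/-- The set of Fishburn permutations of length `n` avoiding each pattern in `pats`. -/
def FishburnSet (n : ℕ) (pats : List (List ℕ)) : Set (List ℕ) :=
  {l | IsPermList n l ∧ FishburnFree l ∧ ∀ p ∈ pats, ¬ SeqContains l p}

/-- The set of all permutations of length `n` avoiding each pattern in `pats`. -/
def PermSet (n : ℕ) (pats : List (List ℕ)) : Set (List ℕ) :=
  {l | IsPermList n l ∧ ∀ p ∈ pats, ¬ SeqContains l p}

/-- The number of ascents of a sequence. -/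
def ascCount (l : List ℕ) : ℕ :=
  ((Finset.range l.length).filter
    (fun i => i + 1 < l.length ∧ l.getD i 0 < l.getD (i + 1) 0)).card

/-- `l` is an ascent sequence. -/
def IsAscentSeq (l : List ℕ) : Prop :=
  (0 < l.length → l.getD 0 0 = 0) ∧
    ∀ j, 0 < j → j < l.length → l.getD j 0 ≤ 1 + ascCount (l.take j)

/-- The set of ascent sequences of length `n` avoiding each pattern in `pats`. -/
def AscentSeqSet (n : ℕ) (pats : List (List ℕ)) : Set (List ℕ) :=
  {l | l.length = n ∧ IsAscentSeq l ∧ ∀ p ∈ pats, ¬ SeqContains l p}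

/-- Extract an explicit occurrence of the pattern 231. -/
lemma occ231 {π : List ℕ} (h : SeqContains π [2, 3, 1]) :
    ∃ i j k, i < j ∧ j < k ∧ k < π.length ∧
      π.getD k 0 < π.getD i 0 ∧ π.getD i 0 < π.getD j 0 := by
  obtain ⟨γ, hsub, hlen, hord⟩ := h
  have h3 : γ.length = 3 := by simpa using hlen
  rw [List.sublist_iff_exists_fin_orderEmbedding_get_eq] at hsub
  obtain ⟨f, hf⟩ := hsub
  have h0 : (0 : ℕ) < γ.length := by omega
  have h1 : (1 : ℕ) < γ.length := by omega
  have h2 : (2 : ℕ) < γ.length := by omega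
  have e0 := hf ⟨0, h0⟩
  have e1 := hf ⟨1, h1⟩
  have e2 := hf ⟨2, h2⟩
  have hlt01 : f ⟨0, h0⟩ < f ⟨1, h1⟩ := f.strictMono (Fin.mk_lt_mk.mpr (by omega))
  have hlt12 : f ⟨1, h1⟩ < f ⟨2, h2⟩ := f.strictMono (Fin.mk_lt_mk.mpr (by omega))
  have gv : ∀ (m : ℕ) (hm : m < γ.length), γ.getD m 0 = γ.get ⟨m, hm⟩ := by
    intro m hm
    rw [List.getD_eq_getElem γ 0 hm]
    rfl
  have pv : ∀ (x : Fin π.length), π.getD x.1 0 = π.get x := by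
    intro x
    rw [List.getD_eq_getElem π 0 x.2]
    rfl
  have o01 : γ.getD 0 0 < γ.getD 1 0 := (hord 0 1 h0 h1).mpr (by norm_num)
  have o20 : γ.getD 2 0 < γ.getD 0 0 := (hord 2 0 h2 h0).mpr (by norm_num)
  refine ⟨(f ⟨0, h0⟩).1, (f ⟨1, h1⟩).1, (f ⟨2, h2⟩).1, hlt01, hlt12, (f ⟨2, h2⟩).2, ?_, ?_⟩
  · rw [pv, pv, ← e0, ← e2, ← gv 0 h0, ← gv 2 h2]; exact o20
  · rw [pv, pv, ← e0, ← e1, ← gv 0 h0, ← gv 1 h1]; exact o01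

lemma cons_sublist_drop {l : List ℕ} {p : ℕ} (hp : p < l.length) {rest : List ℕ}
    (h : rest.Sublist (l.drop (p + 1))) : (l.getD p 0 :: rest).Sublist (l.drop p) := by
  rw [List.getD_eq_getElem l 0 hp, List.drop_eq_getElem_cons hp]
  exact h.cons₂ _

lemma drop_sublist_drop' {l : List ℕ} {p q : ℕ} (h : p ≤ q) :
    (l.drop q).Sublist (l.drop p) := by
  have : l.drop q = (l.drop p).drop (q - p) := by
    rw [List.drop_drop]; congr 1; omega
  rw [this]; exact List.drop_sublist _ _

/-- Build an occurrence of 3142 from explicit indices. -/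
lemma contains3142_of {π : List ℕ} {p q r s : ℕ} (h1 : p < q) (h2 : q < r) (h3 : r < s)
    (hs : s < π.length)
    (hqs : π.getD q 0 < π.getD s 0) (hsp : π.getD s 0 < π.getD p 0)
    (hpr : π.getD p 0 < π.getD r 0) :
    SeqContains π [3, 1, 4, 2] := by
  have hp : p < π.length := by omega
  have hq : q < π.length := by omega
  have hr : r < π.length := by omega
  refine ⟨[π.getD p 0, π.getD q 0, π.getD r 0, π.getD s 0], ?_, ?_, ?_⟩
  · have s4 : [π.getD s 0].Sublist (π.drop s) :=
      cons_sublist_drop hs (List.nil_sublist _)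
    have s3 : [π.getD r 0, π.getD s 0].Sublist (π.drop r) :=
      cons_sublist_drop hr (s4.trans (drop_sublist_drop' (by omega)))
    have s2 : [π.getD q 0, π.getD r 0, π.getD s 0].Sublist (π.drop q) :=
      cons_sublist_drop hq (s3.trans (drop_sublist_drop' (by omega)))
    have s1 : [π.getD p 0, π.getD q 0, π.getD r 0, π.getD s 0].Sublist (π.drop p) :=
      cons_sublist_drop hp (s2.trans (drop_sublist_drop' (by omega)))
    exact s1.trans (List.drop_sublist _ _)
  · rfl
  · intro i j hi hj
    simp only [List.length_cons, List.length_nil] at hi hj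
    interval_cases i <;> interval_cases j <;>
      simp only [List.getD_cons_zero, List.getD_cons_succ] <;> omega

/-- If a permutation `π` contains the pattern 231 but contains no copy of the
Fishburn pattern `f`, then `π` contains the pattern 3142. -/
theorem stmt0 {n : ℕ} (π : List ℕ) (hπ : IsPermList n π)
    (h231 : SeqContains π [2, 3, 1]) (hf : FishburnFree π) :
    SeqContains π [3, 1, 4, 2] := by
  classical
  by_contra hcon
  have hnodup : π.Nodup := hπ.nodup_iff.mpr (List.nodup_range' (h := Nat.one_pos))
  have hmem : ∀ v, v ∈ π ↔ 1 ≤ v ∧ v ≤ n := by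
    intro v
    rw [hπ.mem_iff, List.mem_range']
    constructor
    · rintro ⟨i, hi, rfl⟩; omega
    · intro hv; exact ⟨v - 1, by omega, by omega⟩
  have hget : ∀ i, i < π.length → (1 ≤ π.getD i 0 ∧ π.getD i 0 ≤ n) := by
    intro i hi
    have : π.getD i 0 ∈ π := by
      rw [List.getD_eq_getElem π 0 hi]; exact List.getElem_mem hi
    exact (hmem _).mp this
  have hinj : ∀ p q, p < π.length → q < π.length → π.getD p 0 = π.getD q 0 → p = q := by
    intro p q hp hq h
    rw [List.getD_eq_getElem π 0 hp, List.getD_eq_getElem π 0 hq] at h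
    exact (hnodup.getElem_inj_iff).mp h
  have hex : ∃ a, ∃ i j k, i < j ∧ j < k ∧ k < π.length ∧
      π.getD i 0 = a ∧ π.getD k 0 < a ∧ a < π.getD j 0 := by
    obtain ⟨i, j, k, h1, h2, h3, h4, h5⟩ := occ231 h231
    exact ⟨π.getD i 0, i, j, k, h1, h2, h3, rfl, h4, h5⟩
  obtain ⟨i, j, k, hij, hjk, hk, hia, hc, hb⟩ := Nat.find_spec hex
  set a := Nat.find hex with haa
  have hmin : ∀ b, (∃ i j k, i < j ∧ j < k ∧ k < π.length ∧
      π.getD i 0 = b ∧ π.getD k 0 < b ∧ b < π.getD j 0) → a ≤ b :=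
    fun b h => Nat.find_le h
  have hi : i < π.length := by omega
  have hi1 : i + 1 < π.length := by omega
  have hik : i + 1 < k := by omega
  have hc1 : 1 ≤ π.getD k 0 := (hget k hk).1
  have ha2 : 2 ≤ a := by omega
  have han : a ≤ n := by have := (hget i hi).2; omega
  by_cases hA : a < π.getD (i + 1) 0
  · -- ascent at i: Fishburn or a smaller occurrence
    have hmem' : (a - 1) ∈ π := (hmem _).mpr ⟨by omega, by omega⟩
    obtain ⟨p, hp, hpv⟩ := List.mem_iff_getElem.mp hmem'
    have hpv' : π.getD p 0 = a - 1 := by rw [List.getD_eq_getElem π 0 hp]; exact hpv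
    have hpik : p < i := by
      by_contra hpc
      push_neg at hpc
      have hpi : p ≠ i := by intro h; rw [h, hia] at hpv'; omega
      have hpi1 : p ≠ i + 1 := by intro h; rw [h] at hpv'; omega
      have hplt : i + 1 < p := by omega
      exact hf ⟨i, p, hplt, hp, by omega, by omega⟩
    by_cases hceq : π.getD k 0 = a - 1
    · exact hf ⟨i, k, hik, hk, by omega, by omega⟩
    · have hP' : ∃ i' j' k', i' < j' ∧ j' < k' ∧ k' < π.length ∧
          π.getD i' 0 = a - 1 ∧ π.getD k' 0 < a - 1 ∧ a - 1 < π.getD j' 0 :=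
        ⟨p, j, k, by omega, hjk, hk, hpv', by omega, by omega⟩
      have := hmin _ hP'
      omega
  · push_neg at hA
    have hne : π.getD (i + 1) 0 ≠ a := by
      intro h
      have : i + 1 = i := hinj (i + 1) i hi1 hi (by rw [h, hia])
      omega
    have hd : π.getD (i + 1) 0 < a := by omega
    have hji1 : i + 1 < j := by
      rcases Nat.lt_or_ge (i + 1) j with h | h
      · exact h
      · have hje : j = i + 1 := by omega
        rw [hje] at hb; omega
    have hdc : π.getD (i + 1) 0 ≠ π.getD k 0 := by
      intro h
      have : i + 1 = k := hinj (i + 1) k hi1 hk h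
      omega
    rcases Nat.lt_or_ge (π.getD (i + 1) 0) (π.getD k 0) with hlt | hge
    · exact hcon (contains3142_of (Nat.lt_succ_self i) hji1 hjk hk hlt (by omega) (by omega))
    · have hP' : ∃ i' j' k', i' < j' ∧ j' < k' ∧ k' < π.length ∧
          π.getD i' 0 = π.getD (i + 1) 0 ∧ π.getD k' 0 < π.getD (i + 1) 0 ∧
          π.getD (i + 1) 0 < π.getD j' 0 :=
        ⟨i + 1, j, k, hji1, hjk, hk, rfl, by omega, by omega⟩
      have := hmin _ hP'
      omega
end

section
/- For any permutations σ_1,…,σ_k, the following are equivalent: (i) F_n(σ_1,…,σ_k) = S_n(231, σ_1,…,σ_k) for all n ≥ 0; (ii) at least one of σ_1,…,σ_k is contained in the permutation 3142. -/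
/-- occurrence of pattern p in l via index map f -/
def Occ (l p : List ℕ) (f : ℕ → ℕ) : Prop :=
  (∀ i j, j < p.length → i < j → f i < f j) ∧
  (∀ i, i < p.length → f i < l.length) ∧
  ∀ i j, i < p.length → j < p.length →
    (l.getD (f i) 0 < l.getD (f j) 0 ↔ p.getD i 0 < p.getD j 0)

theorem seqContains_iff (l p : List ℕ) : SeqContains l p ↔ ∃ f, Occ l p f := by
  constructor
  · rintro ⟨γ, hsub, hlen, hrel⟩
    rw [List.sublist_iff_exists_fin_orderEmbedding_get_eq] at hsub
    obtain ⟨f, hf⟩ := hsub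
    refine ⟨fun i => if h : i < γ.length then (f ⟨i, h⟩ : ℕ) else 0, ?_, ?_, ?_⟩
    · intro i j hj hij
      rw [← hlen] at hj
      simp only []
      rw [dif_pos (lt_trans hij hj), dif_pos hj]
      exact f.strictMono (by exact_mod_cast hij)
    · intro i hi
      rw [← hlen] at hi
      simp only []
      rw [dif_pos hi]
      exact (f ⟨i, hi⟩).2
    · intro i j hi hj
      rw [← hlen] at hi hj
      simp only []
      rw [dif_pos hi, dif_pos hj]
      have h1 : l.getD (f ⟨i, hi⟩ : ℕ) 0 = γ.getD i 0 := by
        rw [List.getD_eq_getElem l 0 (f ⟨i, hi⟩).2, List.getD_eq_getElem γ 0 hi]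
        exact (hf ⟨i, hi⟩).symm
      have h2 : l.getD (f ⟨j, hj⟩ : ℕ) 0 = γ.getD j 0 := by
        rw [List.getD_eq_getElem l 0 (f ⟨j, hj⟩).2, List.getD_eq_getElem γ 0 hj]
        exact (hf ⟨j, hj⟩).symm
      rw [h1, h2]
      exact hrel i j hi hj
  · rintro ⟨f, hmono, hbd, hrel⟩
    refine ⟨(List.range p.length).map (fun i => l.getD (f i) 0), ?_, ?_, ?_⟩
    · have hsm : StrictMono (fun i => if i < p.length then f i else i + l.length) := by
        intro i j hij
        dsimp only
        split_ifs with h1 h2 h2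
        · exact hmono i j h2 hij
        · have := hbd i h1; omega
        · omega
        · omega
      apply List.sublist_of_orderEmbedding_getElem?_eq (OrderEmbedding.ofStrictMono _ hsm)
      intro i
      dsimp only [OrderEmbedding.coe_ofStrictMono]
      split_ifs with h
      · rw [List.getElem?_eq_getElem (by simpa using h), List.getElem?_eq_getElem (hbd i h)]
        simp only [List.get_eq_getElem, List.getElem_map, List.getElem_range,
          List.getD_eq_getElem l 0 (hbd i h)]
      · rw [List.getElem?_eq_none (by simpa using h), List.getElem?_eq_none (by omega)]
    · simp
    · intro i j hi hj
      simp only [List.length_map, List.length_range] at hi hj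
      rw [List.getD_eq_getElem _ 0 (by simpa using hi), List.getD_eq_getElem _ 0 (by simpa using hj)]
      simp only [List.getElem_map, List.getElem_range]
      exact hrel i j hi hj

theorem seqContains_trans {l a b : List ℕ} (h1 : SeqContains l a) (h2 : SeqContains a b) :
    SeqContains l b := by
  rw [seqContains_iff] at *
  obtain ⟨f, fmono, fbd, frel⟩ := h1
  obtain ⟨g, gmono, gbd, grel⟩ := h2
  refine ⟨f ∘ g, ?_, ?_, ?_⟩
  · intro i j hj hij
    exact fmono _ _ (gbd j hj) (gmono i j hj hij)
  · intro i hi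
    exact fbd _ (gbd i hi)
  · intro i j hi hj
    exact (frel _ _ (gbd i hi) (gbd j hj)).trans (grel i j hi hj)

theorem contains231_iff (l : List ℕ) :
    SeqContains l [2, 3, 1] ↔ ∃ i j k, i < j ∧ j < k ∧ k < l.length ∧
      l.getD k 0 < l.getD i 0 ∧ l.getD i 0 < l.getD j 0 := by
  rw [seqContains_iff]
  constructor
  · rintro ⟨f, fmono, fbd, frel⟩
    refine ⟨f 0, f 1, f 2, fmono 0 1 (by norm_num) (by norm_num),
      fmono 1 2 (by norm_num) (by norm_num), fbd 2 (by norm_num), ?_, ?_⟩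
    · have := frel 2 0 (by norm_num) (by norm_num)
      simpa using this
    · have := frel 0 1 (by norm_num) (by norm_num)
      simpa using this
  · rintro ⟨i, j, k, hij, hjk, hk, h1, h2⟩
    refine ⟨fun t => [i, j, k].getD t 0, ?_, ?_, ?_⟩
    · intro s t ht hst
      simp only [List.length_cons, List.length_nil] at ht
      interval_cases t <;> interval_cases s <;> simp <;> omega
    · intro t ht
      simp only [List.length_cons, List.length_nil] at ht
      interval_cases t <;> simp <;> omega
    · intro s t hs ht
      simp only [List.length_cons, List.length_nil] at hs ht
      interval_cases s <;> interval_cases t <;>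
        simp only [List.getD_cons_zero, List.getD_cons_succ, reduceIte] <;> omega

theorem contains3142_of_s1 (l : List ℕ) (p q r s : ℕ) (hpq : p < q) (hqr : q < r)
    (hrs : r < s) (hs : s < l.length)
    (h1 : l.getD q 0 < l.getD s 0) (h2 : l.getD s 0 < l.getD p 0)
    (h3 : l.getD p 0 < l.getD r 0) :
    SeqContains l [3, 1, 4, 2] := by
  rw [seqContains_iff]
  refine ⟨fun t => [p, q, r, s].getD t 0, ?_, ?_, ?_⟩
  · intro a b hb hab
    simp only [List.length_cons, List.length_nil] at hb
    interval_cases b <;> interval_cases a <;> simp <;> omega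
  · intro t ht
    simp only [List.length_cons, List.length_nil] at ht
    interval_cases t <;> simp <;> omega
  · intro a b ha hb
    simp only [List.length_cons, List.length_nil] at ha hb
    interval_cases a <;> interval_cases b <;>
      simp only [List.getD_cons_zero, List.getD_cons_succ, reduceIte] <;> omega

theorem permList_length {n : ℕ} {l : List ℕ} (h : IsPermList n l) : l.length = n := by
  simpa using h.length_eq

theorem permList_getD_mem {n : ℕ} {l : List ℕ} (h : IsPermList n l) {i : ℕ}
    (hi : i < l.length) : 1 ≤ l.getD i 0 ∧ l.getD i 0 ≤ n := by
  have hm : l.getD i 0 ∈ l := by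
    rw [List.getD_eq_getElem l 0 hi]; exact List.getElem_mem hi
  have := h.mem_iff.mp hm
  rw [List.mem_range'_1] at this
  omega

theorem permList_exists {n : ℕ} {l : List ℕ} (h : IsPermList n l) {v : ℕ}
    (h1 : 1 ≤ v) (h2 : v ≤ n) : ∃ m, m < l.length ∧ l.getD m 0 = v := by
  have hm : v ∈ l := h.mem_iff.mpr (by rw [List.mem_range'_1]; omega)
  obtain ⟨m, hml, he⟩ := List.getElem_of_mem hm
  exact ⟨m, hml, by rw [List.getD_eq_getElem l 0 hml, he]⟩

theorem permList_ne {n : ℕ} {l : List ℕ} (h : IsPermList n l) {i j : ℕ}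
    (hi : i < l.length) (hj : j < l.length) (hij : i ≠ j) :
    l.getD i 0 ≠ l.getD j 0 := by
  have hnd : l.Nodup := h.nodup_iff.mpr List.nodup_range'
  intro he
  rw [List.getD_eq_getElem l 0 hi, List.getD_eq_getElem l 0 hj] at he
  exact hij ((hnd.getElem_inj_iff).mp he)

theorem fishburn_ind {n : ℕ} {l : List ℕ} (hp : IsPermList n l) (hf : FishburnFree l)
    (g : ℕ) : ∀ p q r, p < q → q < r → r < l.length →
      l.getD r 0 < l.getD p 0 → l.getD p 0 < l.getD q 0 →
      l.getD p 0 - l.getD r 0 ≤ g →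
      SeqContains l [3, 1, 4, 2] := by
  induction g with
  | zero => intro p q r _ _ _ h1 _ hg; omega
  | succ g ih =>
    intro p q r hpq hqr hr h1 h2 hg
    have hq : q < l.length := by omega
    have hpl : p < l.length := by omega
    have ha1 : 1 ≤ l.getD r 0 := (permList_getD_mem hp hr).1
    by_cases hb1 : l.getD p 0 = l.getD r 0 + 1
    · -- gap 1 case: use entry at p + 1
      have hp1r : p + 1 < r := by omega
      have hp1l : p + 1 < l.length := by omega
      have hne : l.getD (p+1) 0 ≠ l.getD p 0 :=
        permList_ne hp hp1l hpl (by omega)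
      have hlt : l.getD (p+1) 0 < l.getD p 0 := by
        rcases lt_or_gt_of_ne hne with h | h
        · exact h
        · exact absurd ⟨p, r, hp1r, hr, hb1, h⟩ hf
      have hner : l.getD (p+1) 0 ≠ l.getD r 0 :=
        permList_ne hp hp1l hr (by omega)
      have hlta : l.getD (p+1) 0 < l.getD r 0 := by omega
      have hp1q : p + 1 < q := by
        rcases Nat.lt_or_ge (p+1) q with h | h
        · exact h
        · have : p + 1 = q := by omega
          rw [this] at hlt; omega
      exact contains3142_of_s1 l p (p+1) q r (by omega) hp1q hqr hr hlta h1 h2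
    · -- gap ≥ 2: find the entry with value (l.getD p 0) - 1
      have hbn : l.getD p 0 ≤ n := (permList_getD_mem hp hpl).2
      obtain ⟨m, hml, hmv⟩ := permList_exists hp (v := l.getD p 0 - 1)
        (by omega) (by omega)
      have hmp : m ≠ p := by
        intro he; rw [he] at hmv; omega
      have hmq : m ≠ q := by
        intro he; rw [he] at hmv; omega
      have hmr : m ≠ r := by
        intro he; rw [he] at hmv; omega
      rcases Nat.lt_or_ge m q with hmltq | hmgeq
      · -- copy (m, q, r), smaller gap
        exact ih m q r hmltq hqr hr (by omega) (by omega) (by omega)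
      · -- m > q : copy (p, q, m), gap 1
        have hmgtq : q < m := by omega
        exact ih p q m hpq hmgtq hml (by omega) h2 (by omega)

theorem fishburn_231_3142 {n : ℕ} {l : List ℕ} (hp : IsPermList n l) (hf : FishburnFree l)
    (h231 : SeqContains l [2, 3, 1]) : SeqContains l [3, 1, 4, 2] := by
  rw [contains231_iff] at h231
  obtain ⟨i, j, k, hij, hjk, hk, h1, h2⟩ := h231
  exact fishburn_ind hp hf (l.getD i 0 - l.getD k 0) i j k hij hjk hk h1 h2 le_rfl

/-- For any permutations `σ₁, …, σₖ`, we have `F_n(σ₁,…,σₖ) = S_n(231, σ₁,…,σₖ)`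
for all `n ≥ 0` if and only if at least one of `σ₁, …, σₖ` is contained in `3142`. -/
theorem stmt1 (pats : List (List ℕ)) (hperm : ∀ p ∈ pats, ∃ m, IsPermList m p)
    (hne : pats ≠ []) :
    (∀ n : ℕ, FishburnSet n pats = PermSet n ([2, 3, 1] :: pats)) ↔
      (∃ p ∈ pats, SeqContains [3, 1, 4, 2] p) := by
  constructor
  · intro heq
    by_contra hcon
    push_neg at hcon
    have hmem : [3, 1, 4, 2] ∈ FishburnSet 4 pats := by
      refine ⟨by unfold IsPermList; decide, ?_, fun p hp => hcon p hp⟩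
      rintro ⟨j, k, h1, h2, h3, h4⟩
      simp only [List.length_cons, List.length_nil] at h2
      have hj2 : j ≤ 1 := by omega
      interval_cases j <;> interval_cases k <;>
        simp_all [List.getD_cons_zero, List.getD_cons_succ]
    rw [heq 4] at hmem
    apply hmem.2 [2, 3, 1] List.mem_cons_self
    rw [contains231_iff]
    exact ⟨0, 2, 3, by norm_num, by norm_num, by norm_num, by norm_num, by norm_num⟩
  · rintro ⟨p0, hp0, hcont⟩ n
    ext l
    constructor
    · rintro ⟨hpl, hff, hav⟩
      refine ⟨hpl, ?_⟩
      intro p hp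
      rcases List.mem_cons.mp hp with he | hmem
      · subst he
        intro h231
        exact hav p0 hp0
          (seqContains_trans (fishburn_231_3142 hpl hff h231) hcont)
      · exact hav p hmem
    · rintro ⟨hpl, hav⟩
      refine ⟨hpl, ?_, fun p hp => hav p (List.mem_cons_of_mem _ hp)⟩
      rintro ⟨j, k, hjk, hk, he, hl⟩
      apply hav [2, 3, 1] List.mem_cons_self
      rw [contains231_iff]
      exact ⟨j, j + 1, k, by omega, hjk, hk, by omega, hl⟩
end

section
/- For each σ ∈ {132, 213, 312} and all n ≥ 1, the number of Fishburn permutations of length n which avoid σ is 2^{n−1}, i.e. |F_n(σ)| = 2^{n−1}. -/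
lemma seqContains_triple {a b c : ℕ} {l : List ℕ} :
    SeqContains l [a,b,c] ↔ ∃ x y z, [x,y,z].Sublist l ∧
      (x < y ↔ a < b) ∧ (y < x ↔ b < a) ∧ (x < z ↔ a < c) ∧ (z < x ↔ c < a) ∧
      (y < z ↔ b < c) ∧ (z < y ↔ c < b) := by
  constructor
  · rintro ⟨γ, hs, hlen, h⟩
    simp only [List.length_cons, List.length_nil] at hlen
    obtain ⟨x, y, z, rfl⟩ := List.length_eq_three.mp hlen
    rw [hlen] at h  -- ??? maybe not needed
    refine ⟨x, y, z, hs, ?_, ?_, ?_, ?_, ?_, ?_⟩ <;>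
      first
        | simpa using h 0 1 (by simp [hlen]) (by simp [hlen])
        | simpa using h 1 0 (by simp [hlen]) (by simp [hlen])
        | simpa using h 0 2 (by simp [hlen]) (by simp [hlen])
        | simpa using h 2 0 (by simp [hlen]) (by simp [hlen])
        | simpa using h 1 2 (by simp [hlen]) (by simp [hlen])
        | simpa using h 2 1 (by simp [hlen]) (by simp [hlen])
  · rintro ⟨x, y, z, hs, h1, h2, h3, h4, h5, h6⟩
    refine ⟨[x,y,z], hs, rfl, ?_⟩
    intro i j hi hj
    simp only [List.length_cons, List.length_nil] at hi hj
    interval_cases i <;> interval_cases j <;> simp_all [List.getD]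

def C132 (l : List ℕ) : Prop := ∃ x y z, [x,y,z].Sublist l ∧ x < z ∧ z < y
def C213 (l : List ℕ) : Prop := ∃ x y z, [x,y,z].Sublist l ∧ y < x ∧ x < z
def C312 (l : List ℕ) : Prop := ∃ x y z, [x,y,z].Sublist l ∧ y < z ∧ z < x
def C231 (l : List ℕ) : Prop := ∃ x y z, [x,y,z].Sublist l ∧ z < x ∧ x < y

lemma sc132 {l : List ℕ} : SeqContains l [1,3,2] ↔ C132 l := by
  rw [seqContains_triple]
  refine exists₃_congr fun x y z => and_congr_right fun _ => ?_
  constructor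
  · rintro ⟨h1,h2,h3,h4,h5,h6⟩; omega
  · intro h; refine ⟨?_,?_,?_,?_,?_,?_⟩ <;> omega

lemma sc213 {l : List ℕ} : SeqContains l [2,1,3] ↔ C213 l := by
  rw [seqContains_triple]
  refine exists₃_congr fun x y z => and_congr_right fun _ => ?_
  constructor
  · rintro ⟨h1,h2,h3,h4,h5,h6⟩; omega
  · intro h; refine ⟨?_,?_,?_,?_,?_,?_⟩ <;> omega

lemma sc312 {l : List ℕ} : SeqContains l [3,1,2] ↔ C312 l := by
  rw [seqContains_triple]
  refine exists₃_congr fun x y z => and_congr_right fun _ => ?_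
  constructor
  · rintro ⟨h1,h2,h3,h4,h5,h6⟩; omega
  · intro h; refine ⟨?_,?_,?_,?_,?_,?_⟩ <;> omega

lemma sc231 {l : List ℕ} : SeqContains l [2,3,1] ↔ C231 l := by
  rw [seqContains_triple]
  refine exists₃_congr fun x y z => and_congr_right fun _ => ?_
  constructor
  · rintro ⟨h1,h2,h3,h4,h5,h6⟩; omega
  · intro h; refine ⟨?_,?_,?_,?_,?_,?_⟩ <;> omega

lemma sublist3_of_indices {l : List ℕ} {i j k : ℕ} (hij : i < j) (hjk : j < k)
    (hk : k < l.length) : [l.getD i 0, l.getD j 0, l.getD k 0].Sublist l := by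
  have hi : i < l.length := by omega
  have hj : j < l.length := by omega
  have := List.map_getElem_sublist (l := l)
    (is := [⟨i, hi⟩, ⟨j, hj⟩, ⟨k, hk⟩]) (by simp [List.pairwise_cons]; omega)
  rw [List.getD_eq_getElem _ _ hi, List.getD_eq_getElem _ _ hj,
    List.getD_eq_getElem _ _ hk]
  simpa using this

lemma indices_of_sublist3 {l : List ℕ} {x y z : ℕ} (h : [x,y,z].Sublist l) :
    ∃ i j k, i < j ∧ j < k ∧ k < l.length ∧
      l.getD i 0 = x ∧ l.getD j 0 = y ∧ l.getD k 0 = z := by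
  obtain ⟨is, heq, hp⟩ := List.sublist_eq_map_getElem h
  match is, heq with
  | [i, j, k], heq =>
    simp only [List.map_cons, List.map_nil, List.cons.injEq, and_true] at heq
    simp only [List.pairwise_cons, List.mem_cons, List.mem_singleton] at hp
    refine ⟨i, j, k, ?_, ?_, k.isLt, ?_, ?_, ?_⟩
    · exact hp.1 j (by simp)
    · exact hp.2.1 k (by simp)
    · rw [List.getD_eq_getElem _ _ i.isLt]; exact heq.1.symm
    · rw [List.getD_eq_getElem _ _ j.isLt]; exact heq.2.1.symm
    · rw [List.getD_eq_getElem _ _ k.isLt]; exact heq.2.2.symm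

lemma c231_iff_indices {l : List ℕ} : C231 l ↔ ∃ i j k, i < j ∧ j < k ∧ k < l.length ∧
    l.getD k 0 < l.getD i 0 ∧ l.getD i 0 < l.getD j 0 := by
  constructor
  · rintro ⟨x, y, z, hs, h1, h2⟩
    obtain ⟨i, j, k, hij, hjk, hk, e1, e2, e3⟩ := indices_of_sublist3 hs
    exact ⟨i, j, k, hij, hjk, hk, by omega, by omega⟩
  · rintro ⟨i, j, k, hij, hjk, hk, h1, h2⟩
    exact ⟨_, _, _, sublist3_of_indices hij hjk hk, h1, h2⟩

lemma fishburnFree_of_not231 {l : List ℕ} (h : ¬ C231 l) : FishburnFree l := by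
  rintro ⟨j, k, hjk, hk, h1, h2⟩
  exact h (c231_iff_indices.mpr ⟨j, j+1, k, by omega, hjk, hk, by omega, h2⟩)

lemma not231_of_avoid {n : ℕ} {l : List ℕ} (hp : IsPermList n l)
    (hσ : ¬ C132 l ∨ ¬ C213 l ∨ ¬ C312 l) (hf : FishburnFree l) : ¬ C231 l := by
  have hnd : l.Nodup := hp.nodup_iff.mpr (List.nodup_range' (s := 1) (n := n))
  have hmem : ∀ x, x ∈ l ↔ 1 ≤ x ∧ x < 1 + n := fun x => hp.mem_iff.trans List.mem_range'_1
  have hval : ∀ i (hi : i < l.length), 1 ≤ l.getD i 0 ∧ l.getD i 0 < 1 + n := by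
    intro i hi
    rw [List.getD_eq_getElem _ _ hi, ← hmem]
    exact List.getElem_mem hi
  have hinj : ∀ i j, i < l.length → j < l.length → l.getD i 0 = l.getD j 0 → i = j := by
    intro i j hi hj h
    rw [List.getD_eq_getElem _ _ hi, List.getD_eq_getElem _ _ hj] at h
    exact (hnd.getElem_inj_iff).mp h
  intro hc
  set L := l.length with hL
  -- the set of weights of 231-copies
  set S : Set ℕ := {m | ∃ i j k, i < j ∧ j < k ∧ k < L ∧
      l.getD k 0 < l.getD i 0 ∧ l.getD i 0 < l.getD j 0 ∧
      m = (l.getD i 0) * (L + 1) + (j - i)} with hS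
  have hSne : S.Nonempty := by
    obtain ⟨i, j, k, hij, hjk, hk, h1, h2⟩ := c231_iff_indices.mp hc
    exact ⟨_, i, j, k, hij, hjk, hk, h1, h2, rfl⟩
  obtain ⟨i, j, k, hij, hjk, hk, h1, h2, hμ⟩ := Nat.sInf_mem hSne
  -- minimality in lexicographic (value, width) order
  have hmin : ∀ i' j' k', i' < j' → j' < k' → k' < L →
      l.getD k' 0 < l.getD i' 0 → l.getD i' 0 < l.getD j' 0 →
      (l.getD i' 0 < l.getD i 0 ∨ (l.getD i' 0 = l.getD i 0 ∧ j' - i' < j - i)) → False := by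
    intro i' j' k' hij' hjk' hk' h1' h2' hlex
    have hle : sInf S ≤ (l.getD i' 0) * (L + 1) + (j' - i') :=
      Nat.sInf_le ⟨i', j', k', hij', hjk', hk', h1', h2', rfl⟩
    rw [hμ] at hle
    rcases hlex with hlt | ⟨heq, hwidth⟩
    · have hm : (l.getD i' 0 + 1) * (L + 1) ≤ (l.getD i 0) * (L + 1) :=
        Nat.mul_le_mul_right _ (by omega)
      have : j' - i' < L + 1 := by omega
      nlinarith
    · rw [heq] at hle; omega
  -- case analysis
  rcases Nat.lt_or_ge (i + 1) j with hcase | hcase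
  · -- j > i + 1 : look at position i+1
    have hm1 : i + 1 < L := by omega
    have hiL : i < L := by omega
    have hjL : j < L := by omega
    set c := l.getD (i+1) 0 with hc'
    rcases Nat.lt_trichotomy c (l.getD i 0) with hlt | heq | hgt
    · rcases Nat.lt_trichotomy c (l.getD k 0) with hlt2 | heq2 | hgt2
      · -- c < z : use the avoided pattern
        rcases hσ with h132 | h213 | h312
        · exact h132 ⟨c, l.getD j 0, l.getD k 0,
            sublist3_of_indices (show i+1 < j by omega) hjk hk, by omega, by omega⟩
        · exact h213 ⟨l.getD i 0, c, l.getD j 0,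
            sublist3_of_indices (show i < i+1 by omega) hcase hjL, by omega, by omega⟩
        · exact h312 ⟨l.getD i 0, c, l.getD k 0,
            sublist3_of_indices (show i < i+1 by omega) (show i+1 < k by omega) hk,
            by omega, by omega⟩
      · exact absurd (hinj _ _ hm1 hk heq2) (by omega)
      · -- z < c < a : copy (i+1, j, k), smaller value
        exact hmin (i+1) j k hcase hjk hk (by omega) (by omega) (Or.inl (by omega))
    · exact absurd (hinj _ _ hm1 hiL heq) (by omega)
    · -- c > a : copy (i, i+1, k), same value smaller width
      exact hmin i (i+1) k (by omega) (show i+1 < k by omega) hk h1 (by omega)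
        (Or.inr ⟨rfl, by omega⟩)
  · -- j = i + 1
    have hj_eq : j = i + 1 := by omega
    have hkL : k < L := hk
    have hz1 : 1 ≤ l.getD k 0 := (hval k hk).1
    have ha_le : l.getD i 0 < 1 + n := (hval i (by omega)).2
    have ha2 : 2 ≤ l.getD i 0 := by omega
    -- position of the value a - 1
    have hmem' : l.getD i 0 - 1 ∈ l := (hmem _).mpr (by omega)
    obtain ⟨m, hmL, hmv⟩ := List.mem_iff_getElem.mp hmem'
    have hmv' : l.getD m 0 = l.getD i 0 - 1 := by
      rw [List.getD_eq_getElem _ _ hmL]; exact hmv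
    have hmi : m ≠ i := by
      intro h; rw [h] at hmv'; omega
    have hmj : m ≠ i + 1 := by
      intro h; rw [h, ← hj_eq] at hmv'; omega
    rcases Nat.lt_or_ge m i with hmlt | hmge
    · -- m < i : copy (m, i+1, k) with smaller value
      have hzm : l.getD k 0 ≠ l.getD m 0 := fun h => by
        have := hinj _ _ hk hmL h; omega
      refine hmin m (i+1) k (by omega) (by omega) hk (by omega) ?_ (Or.inl (by omega))
      rw [← hj_eq]; omega
    · -- m > i + 1 : Fishburn copy
      have hm2 : i + 1 < m := by omega
      exact hf ⟨i, m, hm2, hmL, by omega, by rw [← hj_eq]; omega⟩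

-- generic insertion lemmas for triple patterns
lemma sublist_concat_iff {t l : List ℕ} {a : ℕ} :
    t.Sublist (l ++ [a]) ↔ t.Sublist l ∨ ∃ t', t = t' ++ [a] ∧ t'.Sublist l := by
  rw [List.sublist_append_iff]
  constructor
  · rintro ⟨t₁, t₂, rfl, h1, h2⟩
    rcases List.sublist_singleton.mp h2 with rfl | rfl
    · exact Or.inl (by simpa using h1)
    · exact Or.inr ⟨t₁, rfl, h1⟩
  · rintro (h | ⟨t', rfl, h⟩)
    · exact ⟨t, [], by simp, h, by simp⟩
    · exact ⟨t', [a], rfl, h, by simp⟩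

lemma triple_cons_iff {P : ℕ → ℕ → ℕ → Prop} {a : ℕ} {l : List ℕ}
    (hnew : ∀ y z, [y,z].Sublist l → ¬ P a y z) :
    (∃ x y z, [x,y,z].Sublist (a :: l) ∧ P x y z) ↔
      (∃ x y z, [x,y,z].Sublist l ∧ P x y z) := by
  constructor
  · rintro ⟨x, y, z, hs, hP⟩
    rcases List.sublist_cons_iff.mp hs with h | ⟨r, hr, hrs⟩
    · exact ⟨x, y, z, h, hP⟩
    · obtain ⟨rfl, rfl⟩ : x = a ∧ r = [y, z] := by
        constructor <;> [skip; skip] <;> injection hr with h1 h2 <;> simp_all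
      exact absurd hP (hnew y z hrs)
  · rintro ⟨x, y, z, hs, hP⟩
    exact ⟨x, y, z, hs.cons a, hP⟩

lemma triple_concat_iff {P : ℕ → ℕ → ℕ → Prop} {a : ℕ} {l : List ℕ}
    (hnew : ∀ x y, [x,y].Sublist l → ¬ P x y a) :
    (∃ x y z, [x,y,z].Sublist (l ++ [a]) ∧ P x y z) ↔
      (∃ x y z, [x,y,z].Sublist l ∧ P x y z) := by
  constructor
  · rintro ⟨x, y, z, hs, hP⟩
    rcases sublist_concat_iff.mp hs with h | ⟨t', ht', hts⟩
    · exact ⟨x, y, z, h, hP⟩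
    · obtain ⟨p, q, rfl⟩ : ∃ p q, t' = [p, q] := by
        have hl := congrArg List.length ht'
        simp at hl
        exact List.length_eq_two.mp (by omega)
      simp only [List.cons_append, List.nil_append, List.cons.injEq, and_true] at ht'
      obtain ⟨rfl, rfl, rfl⟩ := ht'
      exact absurd hP (hnew _ _ hts)
  · rintro ⟨x, y, z, hs, hP⟩
    exact ⟨x, y, z, hs.trans (by simp), hP⟩

lemma triple_map_iff {P : ℕ → ℕ → ℕ → Prop} {f : ℕ → ℕ} {l : List ℕ}
    (hP : ∀ x y z, P (f x) (f y) (f z) ↔ P x y z) :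
    (∃ x y z, [x,y,z].Sublist (l.map f) ∧ P x y z) ↔
      (∃ x y z, [x,y,z].Sublist l ∧ P x y z) := by
  constructor
  · rintro ⟨x, y, z, hs, hPxyz⟩
    obtain ⟨t', hts, ht'⟩ := List.sublist_map_iff.mp hs
    have hlen : t'.length = 3 := by
      have := congrArg List.length ht'; simp at this; omega
    obtain ⟨p, q, r, rfl⟩ := List.length_eq_three.mp hlen
    simp only [List.map_cons, List.map_nil, List.cons.injEq] at ht'
    obtain ⟨rfl, rfl, rfl, -⟩ := ht'
    exact ⟨p, q, r, hts, (hP p q r).mp hPxyz⟩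
  · rintro ⟨x, y, z, hs, hPxyz⟩
    exact ⟨f x, f y, f z, by simpa using hs.map f, (hP x y z).mpr hPxyz⟩

lemma pair_mem_of_sublist {l : List ℕ} {y z : ℕ} (h : [y,z].Sublist l) :
    y ∈ l ∧ z ∈ l :=
  ⟨h.subset (by simp), h.subset (by simp)⟩

section inserts
variable {l : List ℕ} {a : ℕ}

-- prepend a maximum
lemma c132_cons (h : ∀ x ∈ l, x < a) : C132 (a :: l) ↔ C132 l :=
  triple_cons_iff fun y z hs hP =>
    absurd hP.1 (by have := (pair_mem_of_sublist hs).2; have := h z ‹_›; omega)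
lemma c213_cons (h : ∀ x ∈ l, x < a) : C213 (a :: l) ↔ C213 l :=
  triple_cons_iff fun y z hs hP =>
    absurd hP.2 (by have := (pair_mem_of_sublist hs).2; have := h z ‹_›; omega)
lemma c231_cons (h : ∀ x ∈ l, x < a) : C231 (a :: l) ↔ C231 l :=
  triple_cons_iff fun y z hs hP =>
    absurd hP.2 (by have := (pair_mem_of_sublist hs).1; have := h y ‹_›; omega)

-- append a maximum
lemma c132_concat (h : ∀ x ∈ l, x < a) : C132 (l ++ [a]) ↔ C132 l :=
  triple_concat_iff fun x y hs hP =>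
    absurd hP.2 (by have := (pair_mem_of_sublist hs).2; have := h y ‹_›; omega)
lemma c312_concat (h : ∀ x ∈ l, x < a) : C312 (l ++ [a]) ↔ C312 l :=
  triple_concat_iff fun x y hs hP =>
    absurd hP.2 (by have := (pair_mem_of_sublist hs).1; have := h x ‹_›; omega)
lemma c231_concat (h : ∀ x ∈ l, x < a) : C231 (l ++ [a]) ↔ C231 l :=
  triple_concat_iff fun x y hs hP =>
    absurd hP.1 (by have := (pair_mem_of_sublist hs).1; have := h x ‹_›; omega)

-- prepend 1 to a shift
lemma c213_one_shift : C213 (1 :: l.map (· + 1)) ↔ C213 l := by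
  rw [show C213 (1 :: l.map (· + 1)) ↔ C213 (l.map (· + 1)) from
    triple_cons_iff fun y z hs hP => by
      have := (pair_mem_of_sublist hs).1
      simp only [List.mem_map] at this
      obtain ⟨w, -, rfl⟩ := this
      omega]
  exact triple_map_iff (by intro x y z; omega)
lemma c231_one_shift : C231 (1 :: l.map (· + 1)) ↔ C231 l := by
  rw [show C231 (1 :: l.map (· + 1)) ↔ C231 (l.map (· + 1)) from
    triple_cons_iff fun y z hs hP => by
      have := (pair_mem_of_sublist hs).2
      simp only [List.mem_map] at this
      obtain ⟨w, -, rfl⟩ := this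
      omega]
  exact triple_map_iff (by intro x y z; omega)

end inserts

-- insertion of a+1 just before the maximum a (for the 312 case)
lemma sublist_mid {u v : List ℕ} {x a z : ℕ} (hx : x ∈ u) (hz : z ∈ v) :
    [x, a, z].Sublist (u ++ a :: v) :=
  List.Sublist.append (List.singleton_sublist.mpr hx)
    ((List.singleton_sublist.mpr hz).cons₂ a)

lemma triple_ins_cases {u v r t₁ : List ℕ} {x y z b : ℕ}
    (ht : [x, y, z] = t₁ ++ b :: r) (h₁ : t₁.Sublist u) (hrs : r.Sublist v) :
    (x = b ∧ [y, z].Sublist v) ∨ (y = b ∧ x ∈ u ∧ [z].Sublist v) ∨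
      (z = b ∧ [x, y].Sublist u) := by
  rcases t₁ with _ | ⟨p, t₁⟩
  · simp only [List.nil_append, List.cons.injEq] at ht
    obtain ⟨rfl, hr⟩ := ht
    exact Or.inl ⟨rfl, hr ▸ hrs⟩
  rcases t₁ with _ | ⟨q, t₁⟩
  · simp only [List.cons_append, List.nil_append, List.cons.injEq] at ht
    obtain ⟨rfl, rfl, hr⟩ := ht
    refine Or.inr (Or.inl ⟨rfl, ?_, hr ▸ hrs⟩)
    exact h₁.subset (by simp)
  rcases t₁ with _ | ⟨s, t₁⟩
  · simp only [List.cons_append, List.nil_append, List.cons.injEq] at ht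
    obtain ⟨rfl, rfl, rfl, hr⟩ := ht
    exact Or.inr (Or.inr ⟨rfl, by simpa using h₁⟩)
  · have := congrArg List.length ht
    simp at this

lemma c312_ins {u v : List ℕ} {a : ℕ} (hu : ∀ x ∈ u, x < a) (hv : ∀ x ∈ v, x < a) :
    C312 (u ++ (a+1) :: a :: v) ↔ C312 (u ++ a :: v) := by
  constructor
  · rintro ⟨x, y, z, hs, h1, h2⟩
    obtain ⟨t₁, t₂, ht, h₁, h₂⟩ := List.sublist_append_iff.mp hs
    rcases List.sublist_cons_iff.mp h₂ with h₂' | ⟨r, hr, hrs⟩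
    · exact ⟨x, y, z, ht ▸ List.Sublist.append h₁ h₂', h1, h2⟩
    rw [hr] at ht
    rcases triple_ins_cases ht h₁ hrs with ⟨rfl, hyz⟩ | ⟨rfl, hx, hz⟩ | ⟨rfl, hxy⟩
    · -- x = a+1, [y,z] <+ a :: v
      rcases List.sublist_cons_iff.mp hyz with h3 | ⟨r', hr', hrs'⟩
      · refine ⟨a, y, z, List.Sublist.append (List.nil_sublist u) (h3.cons₂ a), h1, ?_⟩
        exact hv z (pair_mem_of_sublist h3).2
      · -- y = a, impossible: y < z ≤ a
        injection hr' with hy hr''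
        subst hy
        have hzv : z ∈ v := (hr'' ▸ hrs').subset (by simp)
        exact absurd h1 (by have := hv z hzv; omega)
    · -- y = a+1, impossible: y < z and z ∈ a :: v so z ≤ a
      have hz' : z ∈ a :: v := hz.subset (by simp)
      rcases List.mem_cons.mp hz' with rfl | hz''
      · omega
      · exact absurd h1 (by have := hv z hz''; omega)
    · -- z = a+1, impossible: z < x with x ∈ u
      have hx : x ∈ u := hxy.subset (by simp)
      exact absurd h2 (by have := hu x hx; omega)
  · rintro ⟨x, y, z, hs, h1, h2⟩
    refine ⟨x, y, z, hs.trans ?_, h1, h2⟩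
    exact List.Sublist.append (List.Sublist.refl u) (List.sublist_cons_self _ _)

lemma c231_ins {u v : List ℕ} {a : ℕ} (hu : ∀ x ∈ u, x < a) (hv : ∀ x ∈ v, x < a) :
    C231 (u ++ (a+1) :: a :: v) ↔ C231 (u ++ a :: v) := by
  constructor
  · rintro ⟨x, y, z, hs, h1, h2⟩
    obtain ⟨t₁, t₂, ht, h₁, h₂⟩ := List.sublist_append_iff.mp hs
    rcases List.sublist_cons_iff.mp h₂ with h₂' | ⟨r, hr, hrs⟩
    · exact ⟨x, y, z, ht ▸ List.Sublist.append h₁ h₂', h1, h2⟩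
    rw [hr] at ht
    rcases triple_ins_cases ht h₁ hrs with ⟨rfl, hyz⟩ | ⟨rfl, hx, hz⟩ | ⟨rfl, hxy⟩
    · -- x = a+1 impossible: x < y with y ∈ a :: v
      have hy : y ∈ a :: v := hyz.subset (by simp)
      rcases List.mem_cons.mp hy with rfl | hy'
      · omega
      · exact absurd h2 (by have := hv y hy'; omega)
    · -- y = a+1 : replace by a
      rcases List.sublist_cons_iff.mp hz with h3 | ⟨r', hr', -⟩
      · refine ⟨x, a, z, sublist_mid hx (h3.subset (by simp)), h1, hu x hx⟩
      · -- z = a : impossible since z < x < a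
        have : z = a := by injection hr'
        exact absurd h1 (by have := hu x hx; omega)
    · -- z = a+1 impossible : z < x with x ∈ u
      have hx : x ∈ u := hxy.subset (by simp)
      exact absurd h1 (by have := hu x hx; omega)
  · rintro ⟨x, y, z, hs, h1, h2⟩
    refine ⟨x, y, z, hs.trans ?_, h1, h2⟩
    exact List.Sublist.append (List.Sublist.refl u) (List.sublist_cons_self _ _)

-- permutation utilities
lemma range'_perm_cons (n : ℕ) : (List.range' 1 (n+1)).Perm ((n+1) :: List.range' 1 n) := by
  have h : List.range' 1 (n+1) = List.range' 1 n ++ [n+1] := by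
    rw [List.range'_concat]; norm_num [Nat.add_comm]
  rw [h]; exact List.perm_append_singleton _ _

lemma isPermList_cons_max {n : ℕ} {l : List ℕ} :
    IsPermList (n+1) ((n+1) :: l) ↔ IsPermList n l := by
  unfold IsPermList
  constructor
  · intro h
    exact (List.perm_cons (n+1)).mp (h.trans (range'_perm_cons n))
  · intro h
    exact (h.cons (n+1)).trans (range'_perm_cons n).symm

lemma isPermList_concat_max {n : ℕ} {l : List ℕ} :
    IsPermList (n+1) (l ++ [n+1]) ↔ IsPermList n l := by
  have h : (l ++ [n+1]).Perm ((n+1) :: l) := List.perm_append_singleton _ _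
  constructor
  · intro hp
    exact isPermList_cons_max.mp (h.symm.trans hp)
  · intro hp
    exact h.trans (isPermList_cons_max.mpr hp)

lemma range'_two_eq_map (n : ℕ) : List.range' 2 n = (List.range' 1 n).map (· + 1) := by
  have := List.map_add_range' (a := 1) 1 n 1
  rw [← this]
  exact (List.map_congr_left fun x _ => by omega).symm

lemma isPermList_one_shift {n : ℕ} {l : List ℕ} :
    IsPermList (n+1) (1 :: l.map (· + 1)) ↔ IsPermList n l := by
  unfold IsPermList
  have h : List.range' 1 (n+1) = 1 :: List.range' 2 n := by rw [List.range'_succ]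
  rw [h, range'_two_eq_map]
  constructor
  · intro hp
    have h2 := (List.perm_cons 1).mp hp
    have h3 := h2.map (· - 1)
    have he : ∀ (r : List ℕ), List.map ((fun x => x - 1) ∘ fun x => x + 1) r = r := by
      intro r
      rw [show ((fun x => x - 1) ∘ fun x => x + 1) = id from funext fun x => by simp]
      exact List.map_id r
    rw [List.map_map, List.map_map, he, he] at h3
    exact h3
  · intro hp
    exact (hp.map _).cons 1

lemma isPermList_ins {n : ℕ} {u v : List ℕ} :
    IsPermList (n+1) (u ++ (n+1) :: n :: v) ↔ IsPermList n (u ++ n :: v) := by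
  unfold IsPermList
  have h : (u ++ (n+1) :: n :: v).Perm ((n+1) :: (u ++ n :: v)) := List.perm_middle
  constructor
  · intro hp
    exact (List.perm_cons (n+1)).mp ((h.symm.trans hp).trans (range'_perm_cons n))
  · intro hp
    exact h.trans (((hp.cons (n+1))).trans (range'_perm_cons n).symm)

lemma isPermList_bounds {n : ℕ} {l : List ℕ} (h : IsPermList n l) :
    ∀ x ∈ l, 1 ≤ x ∧ x < n + 1 := by
  intro x hx
  have := h.mem_iff.mp hx
  rw [List.mem_range'_1] at this
  omega

lemma isPermList_mem {n x : ℕ} {l : List ℕ} (h : IsPermList n l) (h1 : 1 ≤ x)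
    (h2 : x < n + 1) : x ∈ l := by
  rw [h.mem_iff, List.mem_range'_1]; omega

lemma isPermList_nodup {n : ℕ} {l : List ℕ} (h : IsPermList n l) : l.Nodup :=
  h.nodup_iff.mpr (List.nodup_range' (s := 1) (n := n))

lemma pair_sublist {l : List ℕ} {x y : ℕ} (hx : x ∈ l) (hy : y ∈ l) (hxy : x ≠ y) :
    [x, y].Sublist l ∨ [y, x].Sublist l := by
  induction l with
  | nil => cases hx
  | cons h t ih =>
    rcases List.mem_cons.mp hx with rfl | hx'
    · have hy' : y ∈ t := by
        rcases List.mem_cons.mp hy with rfl | h'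
        · exact absurd rfl hxy
        · exact h'
      exact Or.inl ((List.singleton_sublist.mpr hy').cons₂ x)
    · rcases List.mem_cons.mp hy with rfl | hy'
      · exact Or.inr ((List.singleton_sublist.mpr hx').cons₂ y)
      · rcases ih hx' hy' with h' | h'
        · exact Or.inl (h'.cons h)
        · exact Or.inr (h'.cons h)

def Av (n : ℕ) (C : List ℕ → Prop) : Set (List ℕ) :=
  {l | IsPermList n l ∧ ¬ C l ∧ ¬ C231 l}

lemma no_triple_short {P : ℕ → ℕ → ℕ → Prop} {l : List ℕ} (h : l.length < 3) :
    ¬ ∃ x y z, [x,y,z].Sublist l ∧ P x y z := by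
  rintro ⟨x, y, z, hs, -⟩
  have := hs.length_le; simp at this; omega

lemma av_finite (n : ℕ) (C : List ℕ → Prop) : (Av n C).Finite := by
  apply Set.Finite.subset (List.permutations (List.range' 1 n)).finite_toSet
  intro l hl
  simpa [List.mem_permutations, IsPermList] using hl.1

lemma av_one {C : List ℕ → Prop} (hC : ¬ C [1]) : Av 1 C = {[1]} := by
  ext l
  simp only [Av, Set.mem_setOf_eq, Set.mem_singleton_iff]
  constructor
  · rintro ⟨hp, -, -⟩
    exact List.perm_singleton.mp hp
  · rintro rfl
    exact ⟨List.Perm.refl _, hC, no_triple_short (by norm_num)⟩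

-- structure lemmas
lemma structure132 {n : ℕ} {l : List ℕ} (hl : l ∈ Av (n+1) C132) :
    (∃ l', l = (n+1) :: l') ∨ (∃ l', l = l' ++ [n+1]) := by
  obtain ⟨hp, h132, h231⟩ := hl
  obtain ⟨u, v, rfl⟩ := List.append_of_mem
    (isPermList_mem (x := n+1) hp (by omega) (by omega))
  rcases u with _ | ⟨p, u⟩
  · exact Or.inl ⟨v, rfl⟩
  rcases v.eq_nil_or_concat with rfl | ⟨v', b, rfl⟩
  · exact Or.inr ⟨p :: u, rfl⟩
  exfalso
  have hx : p ∈ p :: u := by simp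
  have hy : b ∈ v'.concat b := by simp
  have hnd := isPermList_nodup hp
  rw [List.nodup_append] at hnd
  have hpn : p ≠ n + 1 := fun h => hnd.2.2 p hx p (by simp [h]) rfl
  have hbn : b ≠ n + 1 := by
    have := hnd.2.1
    rw [List.nodup_cons] at this
    exact fun h => this.1 (by simp [← h])
  have hbp : p ≠ b := fun h => hnd.2.2 p hx p (by simp [h]) rfl
  have hpb : p < n + 1 := by
    have := isPermList_bounds hp p (by simp); omega
  have hbb : b < n + 1 := by
    have := isPermList_bounds hp b (by simp); omega
  rcases Nat.lt_or_ge p b with h | h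
  · exact h132 ⟨p, n+1, b, sublist_mid hx hy, h, hbb⟩
  · exact h231 ⟨p, n+1, b, sublist_mid hx hy, by omega, hpb⟩

lemma structure213 {n : ℕ} {l : List ℕ} (hl : l ∈ Av (n+1) C213) :
    (∃ l', l = (n+1) :: l') ∨ (∃ l', l = 1 :: l') := by
  obtain ⟨hp, h213, h231⟩ := hl
  rcases l with _ | ⟨h, t⟩
  · exact absurd (List.Perm.length_eq hp) (by simp)
  by_cases h1 : h = n + 1
  · exact Or.inl ⟨t, by rw [h1]⟩
  by_cases h2 : h = 1
  · exact Or.inr ⟨t, by rw [h2]⟩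
  exfalso
  have hb := isPermList_bounds hp h (by simp)
  have hmem1 : (1 : ℕ) ∈ t := by
    have h' : (1 : ℕ) ∈ h :: t := isPermList_mem (x := 1) hp le_rfl (by omega)
    rcases List.mem_cons.mp h' with h'' | h''
    · exact absurd h''.symm h2
    · exact h''
  have hmemn : (n+1 : ℕ) ∈ t := by
    have h' : (n+1 : ℕ) ∈ h :: t := isPermList_mem (x := n+1) hp (by omega) (by omega)
    rcases List.mem_cons.mp h' with h'' | h''
    · exact absurd h''.symm h1
    · exact h''
  rcases pair_sublist hmem1 hmemn (by omega) with hs | hs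
  · exact h213 ⟨h, 1, n+1, hs.cons₂ h, by omega, by omega⟩
  · exact h231 ⟨h, n+1, 1, hs.cons₂ h, by omega, by omega⟩

lemma structure312 {n : ℕ} (hn : 1 ≤ n) {l : List ℕ} (hl : l ∈ Av (n+1) C312) :
    (∃ l', l = l' ++ [n+1]) ∨ (∃ u v, l = u ++ (n+1) :: n :: v) := by
  obtain ⟨hp, h312, h231⟩ := hl
  obtain ⟨u, v, rfl⟩ := List.append_of_mem
    (isPermList_mem (x := n+1) hp (by omega) (by omega))
  rcases v with _ | ⟨h, v'⟩
  · exact Or.inl ⟨u, rfl⟩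
  by_cases hh : h = n
  · exact Or.inr ⟨u, v', by rw [hh]⟩
  exfalso
  have hnd := isPermList_nodup hp
  rw [List.nodup_append] at hnd
  have hhn : h ≠ n + 1 := by
    have := hnd.2.1
    rw [List.nodup_cons] at this
    exact fun h' => this.1 (by simp [← h'])
  have hhb : h < n + 1 := by
    have := isPermList_bounds hp h (by simp); omega
  have hnmem : (n : ℕ) ∈ u ++ (n+1) :: h :: v' :=
    isPermList_mem (x := n) hp (by omega) (by omega)
  rcases List.mem_append.mp hnmem with hnu | hnv
  · exact h231 ⟨n, n+1, h, sublist_mid hnu (by simp), by omega, by omega⟩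
  · have hnv' : n ∈ v' := by
      rcases List.mem_cons.mp hnv with h' | h'
      · omega
      · rcases List.mem_cons.mp h' with h'' | h''
        · exact absurd h''.symm hh
        · exact h''
    refine h312 ⟨n+1, h, n, ?_, by omega, by omega⟩
    have hsub : [h, n].Sublist (h :: v') := (List.singleton_sublist.mpr hnv').cons₂ h
    exact List.Sublist.append (List.nil_sublist u) (hsub.cons₂ (n+1))

lemma pow_halves {n : ℕ} (hn : 1 ≤ n) : 2 ^ (n-1) + 2 ^ (n-1) = 2 ^ n := by
  have h : n - 1 + 1 = n := by omega
  have h2 : 2 ^ (n-1+1) = 2 ^ (n-1) * 2 := pow_succ 2 (n-1)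
  rw [h] at h2; omega

theorem count132 : ∀ n, 1 ≤ n → (Av n C132).ncard = 2 ^ (n - 1) := by
  intro n hn
  induction n, hn using Nat.le_induction with
  | base => rw [av_one (no_triple_short (by norm_num))]; simp
  | succ n hn ih =>
    have hset : Av (n+1) C132 =
        ((fun l => (n+1) :: l) '' Av n C132) ∪ ((fun l => l ++ [n+1]) '' Av n C132) := by
      ext l
      constructor
      · intro hl
        obtain ⟨hp, h1, h2⟩ := id hl
        rcases structure132 hl with ⟨l', rfl⟩ | ⟨l', rfl⟩
        · left
          have hp' : IsPermList n l' := isPermList_cons_max.mp hp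
          have hb : ∀ x ∈ l', x < n + 1 := fun x hx => (isPermList_bounds hp' x hx).2
          exact ⟨l', ⟨hp', fun h => h1 ((c132_cons hb).mpr h),
            fun h => h2 ((c231_cons hb).mpr h)⟩, rfl⟩
        · right
          have hp' : IsPermList n l' := isPermList_concat_max.mp hp
          have hb : ∀ x ∈ l', x < n + 1 := fun x hx => (isPermList_bounds hp' x hx).2
          exact ⟨l', ⟨hp', fun h => h1 ((c132_concat hb).mpr h),
            fun h => h2 ((c231_concat hb).mpr h)⟩, rfl⟩
      · rintro (⟨l', ⟨hp', h1, h2⟩, rfl⟩ | ⟨l', ⟨hp', h1, h2⟩, rfl⟩)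
        · have hb : ∀ x ∈ l', x < n + 1 := fun x hx => (isPermList_bounds hp' x hx).2
          exact ⟨isPermList_cons_max.mpr hp', fun h => h1 ((c132_cons hb).mp h),
            fun h => h2 ((c231_cons hb).mp h)⟩
        · have hb : ∀ x ∈ l', x < n + 1 := fun x hx => (isPermList_bounds hp' x hx).2
          exact ⟨isPermList_concat_max.mpr hp', fun h => h1 ((c132_concat hb).mp h),
            fun h => h2 ((c231_concat hb).mp h)⟩
    have hdisj : Disjoint ((fun l => (n+1) :: l) '' Av n C132)
        ((fun l => l ++ [n+1]) '' Av n C132) := by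
      rw [Set.disjoint_left]
      rintro x ⟨l, hl, rfl⟩ ⟨l', hl', heq⟩
      rcases l' with _ | ⟨c, t⟩
      · have := List.Perm.length_eq hl'.1
        simp [List.length_range'] at this
        omega
      · simp only [List.cons_append] at heq
        have hc : c = n + 1 := by injection heq with h _
        have := (isPermList_bounds hl'.1 c (by simp)).2
        omega
    have hfin := av_finite n C132
    rw [hset, Set.ncard_union_eq hdisj (hfin.image _) (hfin.image _),
      Set.ncard_image_of_injOn (fun a _ b _ h => by injection h with _ h),
      Set.ncard_image_of_injOn (fun a _ b _ h => by simpa using h), ih,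
      Nat.add_sub_cancel]
    exact pow_halves hn

theorem count213 : ∀ n, 1 ≤ n → (Av n C213).ncard = 2 ^ (n - 1) := by
  intro n hn
  induction n, hn using Nat.le_induction with
  | base => rw [av_one (no_triple_short (by norm_num))]; simp
  | succ n hn ih =>
    have hset : Av (n+1) C213 =
        ((fun l => (n+1) :: l) '' Av n C213) ∪
          ((fun l => 1 :: l.map (· + 1)) '' Av n C213) := by
      ext l
      constructor
      · intro hl
        obtain ⟨hp, h1, h2⟩ := id hl
        rcases structure213 hl with ⟨l', rfl⟩ | ⟨t, rfl⟩
        · left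
          have hp' : IsPermList n l' := isPermList_cons_max.mp hp
          have hb : ∀ x ∈ l', x < n + 1 := fun x hx => (isPermList_bounds hp' x hx).2
          exact ⟨l', ⟨hp', fun h => h1 ((c213_cons hb).mpr h),
            fun h => h2 ((c231_cons hb).mpr h)⟩, rfl⟩
        · right
          have htwo : ∀ x ∈ t, 2 ≤ x := by
            intro x hx
            have hnd := isPermList_nodup hp
            rw [List.nodup_cons] at hnd
            have h1b := (isPermList_bounds hp x (by simp [hx])).1
            have : x ≠ 1 := fun h => hnd.1 (h ▸ hx)
            omega
          have ht : (t.map (· - 1)).map (· + 1) = t := by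
            rw [List.map_map]
            conv_rhs => rw [← List.map_id t]
            exact List.map_congr_left fun x hx => by
              have := htwo x hx; simp; omega
          refine ⟨t.map (· - 1), ?_, by show (1 : ℕ) :: (t.map (· - 1)).map (· + 1) = 1 :: t; rw [ht]⟩
          rw [show (1 : ℕ) :: t = 1 :: ((t.map (· - 1)).map (· + 1)) by rw [ht]] at hp h1 h2
          exact ⟨isPermList_one_shift.mp hp, fun h => h1 (c213_one_shift.mpr h),
            fun h => h2 (c231_one_shift.mpr h)⟩
      · rintro (⟨l', ⟨hp', h1, h2⟩, rfl⟩ | ⟨l', ⟨hp', h1, h2⟩, rfl⟩)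
        · have hb : ∀ x ∈ l', x < n + 1 := fun x hx => (isPermList_bounds hp' x hx).2
          exact ⟨isPermList_cons_max.mpr hp', fun h => h1 ((c213_cons hb).mp h),
            fun h => h2 ((c231_cons hb).mp h)⟩
        · exact ⟨isPermList_one_shift.mpr hp', fun h => h1 (c213_one_shift.mp h),
            fun h => h2 (c231_one_shift.mp h)⟩
    have hdisj : Disjoint ((fun l => (n+1) :: l) '' Av n C213)
        ((fun l => 1 :: l.map (· + 1)) '' Av n C213) := by
      rw [Set.disjoint_left]
      rintro x ⟨l, hl, rfl⟩ ⟨l', hl', heq⟩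
      injection heq with h _
      omega
    have hfin := av_finite n C213
    rw [hset, Set.ncard_union_eq hdisj (hfin.image _) (hfin.image _),
      Set.ncard_image_of_injOn (fun a _ b _ h => by injection h with _ h),
      Set.ncard_image_of_injOn (fun a _ b _ h => by
        injection h with _ h
        exact List.map_injective_iff.mpr (fun x y hxy => by omega) h), ih,
      Nat.add_sub_cancel]
    exact pow_halves hn

-- insertion function for the 312 case
def ins (a b : ℕ) (l : List ℕ) : List ℕ :=
  l.takeWhile (· != b) ++ a :: l.dropWhile (· != b)

lemma ins_spec {b : ℕ} {l : List ℕ} (hb : b ∈ l) (a : ℕ) :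
    ∃ u v, l = u ++ b :: v ∧ b ∉ u ∧ ins a b l = u ++ a :: b :: v := by
  induction l with
  | nil => cases hb
  | cons h t ih =>
    by_cases hhb : h = b
    · subst hhb
      refine ⟨[], t, rfl, by simp, ?_⟩
      simp [ins]
    · have hbt : b ∈ t := by
        rcases List.mem_cons.mp hb with h' | h'
        · exact absurd h'.symm hhb
        · exact h'
      obtain ⟨u, v, he, hnu, hi⟩ := ih hbt
      refine ⟨h :: u, v, by rw [he, List.cons_append], by simp [hnu]; omega, ?_⟩
      simp only [ins, List.takeWhile_cons, List.dropWhile_cons, show (h != b) = true by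
        simpa using hhb]
      rw [List.cons_append]
      congr 1
      simpa [ins] using hi

lemma append_cons_eq {a : ℕ} : ∀ {u u' v v' : List ℕ}, u ++ a :: v = u' ++ a :: v' →
    a ∉ u → a ∉ u' → u = u' ∧ v = v'
  | [], [], v, v', h, _, _ => by simp_all
  | [], c' :: u', v, v', h, _, hu' => by
    simp only [List.nil_append, List.cons_append, List.cons.injEq] at h
    exact absurd (by simp [h.1]) hu'
  | c :: u, [], v, v', h, hu, _ => by
    simp only [List.nil_append, List.cons_append, List.cons.injEq] at h
    exact absurd (by simp [h.1]) hu
  | c :: u, c' :: u', v, v', h, hu, hu' => by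
    simp only [List.cons_append, List.cons.injEq] at h
    obtain ⟨rfl, h2⟩ := h
    have := append_cons_eq h2 (fun hh => hu (by simp [hh])) (fun hh => hu' (by simp [hh]))
    exact ⟨by rw [this.1], this.2⟩

theorem count312 : ∀ n, 1 ≤ n → (Av n C312).ncard = 2 ^ (n - 1) := by
  intro n hn
  induction n, hn using Nat.le_induction with
  | base => rw [av_one (no_triple_short (by norm_num))]; simp
  | succ n hn ih =>
    have hset : Av (n+1) C312 =
        ((fun l => l ++ [n+1]) '' Av n C312) ∪ ((fun l => ins (n+1) n l) '' Av n C312) := by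
      ext l
      constructor
      · intro hl
        obtain ⟨hp, h1, h2⟩ := id hl
        rcases structure312 hn hl with ⟨l', rfl⟩ | ⟨u, v, rfl⟩
        · left
          have hp' : IsPermList n l' := isPermList_concat_max.mp hp
          have hb : ∀ x ∈ l', x < n + 1 := fun x hx => (isPermList_bounds hp' x hx).2
          exact ⟨l', ⟨hp', fun h => h1 ((c312_concat hb).mpr h),
            fun h => h2 ((c231_concat hb).mpr h)⟩, rfl⟩
        · right
          have hnd := isPermList_nodup hp
          rw [List.nodup_append] at hnd
          have hu : ∀ x ∈ u, x < n := by
            intro x hx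
            have hb := (isPermList_bounds hp x (by simp [hx])).2
            have h4 : x ≠ n + 1 := fun h => hnd.2.2 x hx x (by simp [h]) rfl
            have h5 : x ≠ n := fun h => hnd.2.2 x hx x (by simp [h]) rfl
            omega
          have hv : ∀ x ∈ v, x < n := by
            intro x hx
            have hb := (isPermList_bounds hp x (by simp [hx])).2
            have h3 := hnd.2.1
            rw [List.nodup_cons, List.nodup_cons] at h3
            have hx1 : x ≠ n + 1 := fun h => h3.1 (by simp [← h, hx])
            have hx2 : x ≠ n := fun h => h3.2.1 (h ▸ hx)
            omega
          have hp' : IsPermList n (u ++ n :: v) := isPermList_ins.mp hp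
          refine ⟨u ++ n :: v, ⟨hp', fun h => h1 ((c312_ins hu hv).mpr h),
            fun h => h2 ((c231_ins hu hv).mpr h)⟩, ?_⟩
          obtain ⟨u', v', he, hnu', hi⟩ := ins_spec (show n ∈ u ++ n :: v by simp) (n+1)
          obtain ⟨rfl, rfl⟩ := append_cons_eq he (fun h => by have := hu n h; omega) hnu'
          show ins (n+1) n (u ++ n :: v) = u ++ (n + 1) :: n :: v
          exact hi
      · rintro (⟨l', ⟨hp', h1, h2⟩, rfl⟩ | ⟨l', ⟨hp', h1, h2⟩, rfl⟩)
        · have hb : ∀ x ∈ l', x < n + 1 := fun x hx => (isPermList_bounds hp' x hx).2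
          exact ⟨isPermList_concat_max.mpr hp', fun h => h1 ((c312_concat hb).mp h),
            fun h => h2 ((c231_concat hb).mp h)⟩
        · obtain ⟨u, v, he, hnu, hi⟩ := ins_spec (isPermList_mem (x := n) hp' hn (by omega)) (n+1)
          show ins (n+1) n l' ∈ Av (n+1) C312
          subst he
          rw [hi]
          have hnd := isPermList_nodup hp'
          rw [List.nodup_append, List.nodup_cons] at hnd
          have hu : ∀ x ∈ u, x < n := by
            intro x hx
            have hb := (isPermList_bounds hp' x (by simp [hx])).2
            have : x ≠ n := fun h => hnd.2.2 x hx x (by simp [h]) rfl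
            omega
          have hv : ∀ x ∈ v, x < n := by
            intro x hx
            have hb := (isPermList_bounds hp' x (by simp [hx])).2
            have : x ≠ n := fun h => hnd.2.1.1 (h ▸ hx)
            omega
          refine ⟨isPermList_ins.mpr hp', fun h => h1 ((c312_ins hu hv).mp h),
            fun h => h2 ((c231_ins hu hv).mp h)⟩
    have hdisj : Disjoint ((fun l => l ++ [n+1]) '' Av n C312)
        ((fun l => ins (n+1) n l) '' Av n C312) := by
      rw [Set.disjoint_left]
      rintro x ⟨l, hl, rfl⟩ ⟨l', hl', heq⟩
      have heq' : ins (n+1) n l' = l ++ [n+1] := heq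
      obtain ⟨u, v, he, hnu, hi⟩ := ins_spec (isPermList_mem (x := n) hl'.1 hn (by omega)) (n+1)
      rw [hi] at heq'
      clear heq
      rcases v.eq_nil_or_concat with rfl | ⟨v', b, rfl⟩
      · have hL : u ++ [n+1, n] = (u ++ [n+1]) ++ [n] := by simp
        rw [hL] at heq'
        have := congrArg List.getLast? heq'
        rw [List.getLast?_concat, List.getLast?_concat] at this
        simp at this
      · have hb : b < n + 1 := by
          refine (isPermList_bounds hl'.1 b ?_).2
          rw [he]; simp
        have hL : u ++ (n+1) :: n :: v'.concat b = (u ++ (n+1) :: n :: v') ++ [b] := by simp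
        rw [hL] at heq'
        have := congrArg List.getLast? heq'
        rw [List.getLast?_concat, List.getLast?_concat] at this
        simp at this
        omega
    have hinj : Set.InjOn (fun l => ins (n+1) n l) (Av n C312) := by
      intro a ha b hb h
      obtain ⟨u1, v1, he1, hnu1, hi1⟩ := ins_spec (isPermList_mem (x := n) ha.1 hn (by omega)) (n+1)
      obtain ⟨u2, v2, he2, hnu2, hi2⟩ := ins_spec (isPermList_mem (x := n) hb.1 hn (by omega)) (n+1)
      have h' : ins (n+1) n a = ins (n+1) n b := h
      rw [hi1, hi2] at h'
      clear h
      have hb1 : (n+1) ∉ u1 := fun hh => by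
        have := (isPermList_bounds ha.1 (n+1) (by rw [he1]; simp [hh])).2; omega
      have hb2 : (n+1) ∉ u2 := fun hh => by
        have := (isPermList_bounds hb.1 (n+1) (by rw [he2]; simp [hh])).2; omega
      obtain ⟨rfl, hv⟩ := append_cons_eq h' hb1 hb2
      injection hv with _ hv
      rw [he1, he2, hv]
    have hfin := av_finite n C312
    rw [hset, Set.ncard_union_eq hdisj (hfin.image _) (hfin.image _),
      Set.ncard_image_of_injOn (fun a _ b _ h => by simpa using h),
      Set.ncard_image_of_injOn hinj, ih, Nat.add_sub_cancel]
    exact pow_halves hn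

/-- For each `σ ∈ {132, 213, 312}` we have `|F_n(σ)| = 2 ^ (n - 1)` for all `n ≥ 1`. -/
theorem stmt2 (σ : List ℕ) (hσ : σ = [1, 3, 2] ∨ σ = [2, 1, 3] ∨ σ = [3, 1, 2])
    (n : ℕ) (hn : 1 ≤ n) :
    (FishburnSet n [σ]).ncard = 2 ^ (n - 1) := by
  rcases hσ with rfl | rfl | rfl
  · have hset : FishburnSet n [[1,3,2]] = Av n C132 := by
      ext l
      simp only [FishburnSet, Av, Set.mem_setOf_eq, List.mem_singleton, forall_eq]
      constructor
      · rintro ⟨hp, hf, hs⟩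
        have h1 : ¬ C132 l := fun h => hs (sc132.mpr h)
        exact ⟨hp, h1, not231_of_avoid hp (Or.inl h1) hf⟩
      · rintro ⟨hp, h1, h2⟩
        exact ⟨hp, fishburnFree_of_not231 h2, fun h => h1 (sc132.mp h)⟩
    rw [hset]; exact count132 n hn
  · have hset : FishburnSet n [[2,1,3]] = Av n C213 := by
      ext l
      simp only [FishburnSet, Av, Set.mem_setOf_eq, List.mem_singleton, forall_eq]
      constructor
      · rintro ⟨hp, hf, hs⟩
        have h1 : ¬ C213 l := fun h => hs (sc213.mpr h)
        exact ⟨hp, h1, not231_of_avoid hp (Or.inr (Or.inl h1)) hf⟩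
      · rintro ⟨hp, h1, h2⟩
        exact ⟨hp, fishburnFree_of_not231 h2, fun h => h1 (sc213.mp h)⟩
    rw [hset]; exact count213 n hn
  · have hset : FishburnSet n [[3,1,2]] = Av n C312 := by
      ext l
      simp only [FishburnSet, Av, Set.mem_setOf_eq, List.mem_singleton, forall_eq]
      constructor
      · rintro ⟨hp, hf, hs⟩
        have h1 : ¬ C312 l := fun h => hs (sc312.mpr h)
        exact ⟨hp, h1, not231_of_avoid hp (Or.inr (Or.inr h1)) hf⟩
      · rintro ⟨hp, h1, h2⟩
        exact ⟨hp, fishburnFree_of_not231 h2, fun h => h1 (sc312.mp h)⟩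
    rw [hset]; exact count312 n hn
end

section
/- For any n ≥ 1, the map A ↦ π(A) is a bijection from the power set of {2,3,…,n} onto F_n(123), the set of Fishburn permutations of length n avoiding 123. -/
/-- The permutation `π(A)`: the elements of `A` in decreasing order, followed by `1`,
followed by the elements of `{2, …, n} \ A` in decreasing order. -/
def piA (n : ℕ) (A : Finset ℕ) : List ℕ :=
  (A.sort (· ≤ ·)).reverse ++ 1 :: ((Finset.Icc 2 n \ A).sort (· ≤ ·)).reverse

/- ### Auxiliary lemmas -/

lemma srel123_of {a b c : ℕ} (h1 : a < b) (h2 : b < c) :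
    SameRelOrder [a, b, c] [1, 2, 3] := by
  refine ⟨rfl, ?_⟩
  intro i j hi hj
  simp only [List.length_cons, List.length_nil] at hi hj
  interval_cases i <;> interval_cases j <;> simp [List.getD] <;> omega

lemma of_srel123 {γ : List ℕ} (h : SameRelOrder γ [1, 2, 3]) :
    ∃ a b c, γ = [a, b, c] ∧ a < b ∧ b < c := by
  obtain ⟨hl, hrel⟩ := h
  simp only [List.length_cons, List.length_nil] at hl
  obtain ⟨a, b, c, rfl⟩ := List.length_eq_three.1 hl
  refine ⟨a, b, c, rfl, ?_, ?_⟩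
  · have := (hrel 0 1 (by simp) (by simp)).2 (by simp [List.getD])
    simpa [List.getD] using this
  · have := (hrel 1 2 (by simp) (by simp)).2 (by simp [List.getD])
    simpa [List.getD] using this

lemma not_contains123_of_two_desc {x y l : List ℕ} (hl : l = x ++ y)
    (hx : x.Pairwise (· > ·)) (hy : y.Pairwise (· > ·)) : ¬ SeqContains l [1, 2, 3] := by
  rintro ⟨γ, hsub, hrel⟩
  obtain ⟨a, b, c, rfl, hab, hbc⟩ := of_srel123 hrel
  rw [hl, List.sublist_append_iff] at hsub
  obtain ⟨γ₁, γ₂, heq, h1, h2⟩ := hsub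
  rcases γ₁ with _ | ⟨a₁, _ | ⟨a₂, _ | ⟨a₃, t⟩⟩⟩
  · simp at heq; subst heq
    have := (hy.sublist h2)
    simp at this; omega
  · simp at heq
    obtain ⟨rfl, rfl⟩ := heq
    have := (hy.sublist h2)
    simp at this; omega
  · simp at heq
    obtain ⟨rfl, rfl, rfl⟩ := heq
    have := (hx.sublist h1)
    simp at this; omega
  · simp at heq
    obtain ⟨rfl, rfl, rfl, h4⟩ := heq
    have := (hx.sublist h1)
    simp at this; omega

lemma mem_bounds {n : ℕ} {l : List ℕ} (h : IsPermList n l) {x : ℕ} (hx : x ∈ l) :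
    1 ≤ x ∧ x < 1 + n := by
  have := h.mem_iff.1 hx
  simpa [List.mem_range'_1] using this

lemma fishburnFree_of_chain {n : ℕ} {l : List ℕ} (hperm : IsPermList n l)
    (hc : List.IsChain (fun a b => a < b → a = 1) l) : FishburnFree l := by
  rintro ⟨j, k, hjk, hk, heq, hasc⟩
  have hj1 : j + 1 < l.length := lt_trans hjk hk
  have hS := List.isChain_iff_getElem.1 hc j (by omega)
  rw [← List.getD_eq_getElem l 0 (show j < l.length by omega),
    ← List.getD_eq_getElem l 0 hj1] at hS
  have hj : l.getD j 0 = 1 := hS hasc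
  have hkmem : l.getD k 0 ∈ l := by
    rw [List.getD_eq_getElem l 0 hk]; exact List.getElem_mem _
  have := (mem_bounds hperm hkmem).1
  omega

lemma sort_eq_reverse {w : List ℕ} (hw : w.Pairwise (· > ·)) :
    w.toFinset.sort (· ≤ ·) = w.reverse := by
  have hnd : w.Nodup := hw.nodup
  rw [← List.toFinset_reverse]
  rw [List.toFinset_sort (· ≤ ·) (by simpa using hnd)]
  exact List.Pairwise.imp le_of_lt (List.pairwise_reverse.2 hw)

lemma append_cons_eq_s4 {x : ℕ} : ∀ {u₁ u₂ v₁ v₂ : List ℕ}, x ∉ u₁ → x ∉ u₂ →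
    u₁ ++ x :: v₁ = u₂ ++ x :: v₂ → u₁ = u₂ ∧ v₁ = v₂ := by
  intro u₁
  induction u₁ with
  | nil =>
    intro u₂ v₁ v₂ h1 h2 h
    cases u₂ with
    | nil => simpa using h
    | cons b t =>
      simp only [List.nil_append, List.cons_append, List.cons.injEq] at h
      exact absurd (h.1 ▸ List.mem_cons_self) h2
  | cons a s ih =>
    intro u₂ v₁ v₂ h1 h2 h
    cases u₂ with
    | nil =>
      simp only [List.nil_append, List.cons_append, List.cons.injEq] at h
      exact absurd (h.1.symm ▸ List.mem_cons_self) h1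
    | cons b t =>
      simp only [List.cons_append, List.cons.injEq] at h
      obtain ⟨rfl, h⟩ := h
      obtain ⟨rfl, rfl⟩ := ih (fun hm => h1 (List.mem_cons_of_mem _ hm))
        (fun hm => h2 (List.mem_cons_of_mem _ hm)) h
      exact ⟨rfl, rfl⟩

lemma ascent_bottom_eq_one {n : ℕ} {l : List ℕ} (hperm : IsPermList n l)
    (hff : FishburnFree l) (h123 : ¬ SeqContains l [1, 2, 3]) :
    ∀ p a b q, l = p ++ a :: b :: q → a < b → a = 1 := by
  intro p a b q hl hab
  by_contra hne
  have ha_mem : a ∈ l := by rw [hl]; simp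
  obtain ⟨ha1, ha2⟩ := mem_bounds hperm ha_mem
  have ha2' : 2 ≤ a := by omega
  have hcmem : a - 1 ∈ l := by
    apply hperm.mem_iff.2
    rw [List.mem_range'_1]; omega
  rw [hl] at hcmem
  have hcq : a - 1 ∈ p ∨ a - 1 ∈ q := by
    rcases List.mem_append.1 hcmem with h | h
    · exact Or.inl h
    · simp only [List.mem_cons] at h
      rcases h with h | h | h
      · omega
      · omega
      · exact Or.inr h
  rcases hcq with hcp | hcq
  · obtain ⟨p₁, p₂, rfl⟩ := List.append_of_mem hcp
    apply h123
    refine ⟨[a - 1, a, b], ?_, srel123_of (by omega) hab⟩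
    have hl' : l = (p₁ ++ (a - 1) :: p₂) ++ a :: b :: q := by rw [hl, List.append_assoc]
    rw [hl']
    have s1 : List.Sublist [a - 1] (p₁ ++ (a - 1) :: p₂) :=
      ((List.nil_sublist p₂).cons₂ _).trans (List.sublist_append_right _ _)
    have s2 : List.Sublist [a, b] (a :: b :: q) := ((List.nil_sublist q).cons₂ _).cons₂ _
    exact s1.append s2
  · obtain ⟨⟨m, hm⟩, hqm⟩ := List.mem_iff_get.1 hcq
    apply hff
    have hlen : l.length = p.length + 2 + q.length := by rw [hl]; simp; omega
    refine ⟨p.length, p.length + 2 + m, by omega, by omega, ?_, ?_⟩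
    · have e1 : l.getD p.length 0 = a := by
        rw [hl, List.getD_append_right _ _ _ _ le_rfl]
        simp
      have e2 : l.getD (p.length + 2 + m) 0 = a - 1 := by
        rw [hl, List.getD_append_right _ _ _ _ (by omega)]
        have : p.length + 2 + m - p.length = m + 2 := by omega
        rw [this]
        simp only [List.getD_cons_succ]
        rw [List.getD_eq_getElem _ 0 hm]; exact hqm
      rw [e1, e2]; omega
    · have e1 : l.getD p.length 0 = a := by
        rw [hl, List.getD_append_right _ _ _ _ le_rfl]; simp
      have e3 : l.getD (p.length + 1) 0 = b := by
        rw [hl, List.getD_append_right _ _ _ _ (by omega)]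
        have : p.length + 1 - p.length = 1 := by omega
        rw [this]; simp
      rw [e1, e3]; exact hab

lemma chain'_of_fs {n : ℕ} {l : List ℕ} (hperm : IsPermList n l)
    (hff : FishburnFree l) (h123 : ¬ SeqContains l [1, 2, 3]) :
    List.IsChain (fun a b => a < b → a = 1) l := by
  rw [List.isChain_iff_getElem]
  intro i h hlt
  have hi1 : i + 1 < l.length := by omega
  have hdecomp : l = l.take i ++ l[i] :: l[i+1] :: l.drop (i+2) := by
    conv_lhs => rw [← List.take_append_drop i l]
    rw [List.drop_eq_getElem_cons (show i < l.length by omega),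
      List.drop_eq_getElem_cons hi1]
  exact ascent_bottom_eq_one hperm hff h123 _ _ _ _ hdecomp hlt

lemma piA_perm {n : ℕ} (hn : 1 ≤ n) {A : Finset ℕ} (hA : A ⊆ Finset.Icc 2 n) :
    IsPermList n (piA n A) := by
  unfold IsPermList piA
  have p1 : ((A.sort (· ≤ ·)).reverse ++ 1 :: ((Finset.Icc 2 n \ A).sort (· ≤ ·)).reverse).Perm
      (1 :: (A.sort (· ≤ ·) ++ (Finset.Icc 2 n \ A).sort (· ≤ ·))) :=
    ((List.reverse_perm _).append ((List.reverse_perm _).cons 1)).trans List.perm_middle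
  refine p1.trans ?_
  rw [← Multiset.coe_eq_coe, ← Multiset.cons_coe, ← Multiset.coe_add,
    Finset.sort_eq, Finset.sort_eq, Finset.sdiff_val]
  have hle : A.val ≤ (Finset.Icc 2 n).val := Finset.val_le_iff.2 hA
  have h2 : A.val + ((Finset.Icc 2 n).val - A.val) = (Finset.Icc 2 n).val := by
    rw [add_comm]; exact tsub_add_cancel_of_le hle
  rw [h2]
  have h3 : (1 : ℕ) ::ₘ (Finset.Icc 2 n).val = (Finset.Icc 1 n).val := by
    show _ = (↑(List.range' 1 n) : Multiset ℕ)
    obtain ⟨m, rfl⟩ : ∃ m, n = m + 1 := ⟨n - 1, by omega⟩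
    show (1 : ℕ) ::ₘ ↑(List.range' 2 m) = _
    rw [List.range'_succ]
    rfl
  rw [h3]
  rfl

lemma sorted_gt_of_chain {u : List ℕ} (hc : u.IsChain (fun a b => a < b → a = 1))
    (hnd : u.Nodup) (h1 : (1 : ℕ) ∉ u) : u.Pairwise (· > ·) := by
  have hch : u.IsChain (· > ·) := by
    rw [List.isChain_iff_getElem] at hc ⊢
    intro i h
    have hS := hc i h
    have hne : u.get ⟨i, by omega⟩ ≠ u.get ⟨i + 1, by omega⟩ := by
      intro he
      have := (hnd.get_inj_iff).1 he
      simp at this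
    have hm : u.get ⟨i, by omega⟩ ∈ u := u.get_mem _
    rcases lt_trichotomy (u.get ⟨i, by omega⟩) (u.get ⟨i + 1, by omega⟩) with hlt | heq | hgt
    · exact absurd (hS hlt ▸ hm) h1
    · exact absurd heq hne
    · exact hgt
  exact List.isChain_iff_pairwise.1 hch

/-- For any `n ≥ 1`, the map `A ↦ π(A)` is a bijection from the power set of
`{2, 3, …, n}` onto `F_n(123)`. -/
theorem stmt4 (n : ℕ) (hn : 1 ≤ n) :
    Set.BijOn (piA n) {A : Finset ℕ | A ⊆ Finset.Icc 2 n}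
      (FishburnSet n [[1, 2, 3]]) := by
  refine ⟨?_, ?_, ?_⟩
  · -- MapsTo
    intro A hA
    simp only [Set.mem_setOf_eq] at hA
    have hperm := piA_perm hn hA
    have husort : ((A.sort (· ≤ ·)).reverse).Pairwise (· > ·) :=
      List.pairwise_reverse.2 ((Finset.sortedLT_sort A).pairwise)
    have hvsort : (((Finset.Icc 2 n \ A).sort (· ≤ ·)).reverse).Pairwise (· > ·) :=
      List.pairwise_reverse.2 ((Finset.sortedLT_sort _).pairwise)
    refine ⟨hperm, ?_, ?_⟩
    · apply fishburnFree_of_chain hperm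
      unfold piA
      rw [List.isChain_append]
      refine ⟨husort.isChain.imp (fun a b h hlt => by omega), ?_, ?_⟩
      · rw [List.isChain_cons]
        exact ⟨fun y _ => fun _ => rfl, hvsort.isChain.imp (fun a b h hlt => by omega)⟩
      · intro x hx y hy
        simp only [List.head?_cons, Option.mem_some_iff] at hy
        subst hy
        intro hlt
        have hxA : x ∈ A := by
          have := List.mem_of_mem_getLast? hx
          simpa using this
        have := hA hxA
        simp only [Finset.mem_Icc] at this
        omega
    · intro p hp
      simp only [List.mem_cons, List.not_mem_nil, or_false] at hp
      subst hp
      apply not_contains123_of_two_desc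
        (x := (A.sort (· ≤ ·)).reverse ++ [1])
        (y := ((Finset.Icc 2 n \ A).sort (· ≤ ·)).reverse)
      · simp [piA]
      · show List.Pairwise _ _
        rw [List.pairwise_append]
        refine ⟨husort, List.pairwise_singleton _ _, ?_⟩
        intro a ha b hb
        simp only [List.mem_singleton] at hb
        subst hb
        have haA : a ∈ A := by simpa using ha
        have := hA haA
        simp only [Finset.mem_Icc] at this
        omega
      · exact hvsort
  · -- InjOn
    intro A hA B hB h
    simp only [Set.mem_setOf_eq] at hA hB
    unfold piA at h
    have h1A : (1 : ℕ) ∉ (A.sort (· ≤ ·)).reverse := by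
      intro hm
      have : (1 : ℕ) ∈ A := by simpa using hm
      have := hA this
      simp [Finset.mem_Icc] at this
    have h1B : (1 : ℕ) ∉ (B.sort (· ≤ ·)).reverse := by
      intro hm
      have : (1 : ℕ) ∈ B := by simpa using hm
      have := hB this
      simp [Finset.mem_Icc] at this
    obtain ⟨he, _⟩ := append_cons_eq_s4 h1A h1B h
    have he2 : A.sort (· ≤ ·) = B.sort (· ≤ ·) := by
      have := congrArg List.reverse he
      simpa using this
    calc A = (A.sort (· ≤ ·)).toFinset := (Finset.sort_toFinset _ _).symm
      _ = (B.sort (· ≤ ·)).toFinset := by rw [he2]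
      _ = B := Finset.sort_toFinset _ _
  · -- SurjOn
    intro l hlmem
    obtain ⟨hperm, hff, havoid⟩ := hlmem
    have h123 : ¬ SeqContains l [1, 2, 3] := havoid _ (by simp)
    have hnd : l.Nodup := hperm.symm.nodup (List.nodup_range' (step := 1) (by omega))
    have h1mem : (1 : ℕ) ∈ l := hperm.mem_iff.2 (by rw [List.mem_range'_1]; omega)
    obtain ⟨u, v, hl⟩ := List.append_of_mem h1mem
    have hnd' := hl ▸ hnd
    rw [List.nodup_append'] at hnd'
    obtain ⟨hndu, hndv1, hdisj⟩ := hnd'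
    have h1u : (1 : ℕ) ∉ u := fun hh => hdisj hh (List.mem_cons_self)
    have h1v : (1 : ℕ) ∉ v := (List.nodup_cons.1 hndv1).1
    have hndv := (List.nodup_cons.1 hndv1).2
    have hchain := chain'_of_fs hperm hff h123
    rw [hl, List.isChain_append] at hchain
    obtain ⟨hcu, hcv1, _⟩ := hchain
    have hcv := (List.isChain_cons.1 hcv1).2
    have husort : u.Pairwise (· > ·) := sorted_gt_of_chain hcu hndu h1u
    have hvsort : v.Pairwise (· > ·) := sorted_gt_of_chain hcv hndv h1v
    refine ⟨u.toFinset, ?_, ?_⟩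
    · simp only [Set.mem_setOf_eq]
      intro x hx
      simp only [List.mem_toFinset] at hx
      have hxl : x ∈ l := by rw [hl]; exact List.mem_append_left _ hx
      have hb := mem_bounds hperm hxl
      have hx1 : x ≠ 1 := fun hee => h1u (hee ▸ hx)
      simp only [Finset.mem_Icc]
      omega
    · have hvfin : v.toFinset = Finset.Icc 2 n \ u.toFinset := by
        ext x
        simp only [List.mem_toFinset, Finset.mem_sdiff, Finset.mem_Icc]
        constructor
        · intro hx
          have hxl : x ∈ l := by
            rw [hl]; exact List.mem_append_right _ (List.mem_cons_of_mem _ hx)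
          have hb := mem_bounds hperm hxl
          have hx1 : x ≠ 1 := fun hee => h1v (hee ▸ hx)
          exact ⟨⟨by omega, by omega⟩, fun hxu => hdisj hxu (List.mem_cons_of_mem _ hx)⟩
        · rintro ⟨⟨hx2, hxn⟩, hxu⟩
          have hxl : x ∈ l := hperm.mem_iff.2 (by rw [List.mem_range'_1]; omega)
          rw [hl] at hxl
          rcases List.mem_append.1 hxl with hh | hh
          · exact absurd hh hxu
          · rcases List.mem_cons.1 hh with hh | hh
            · omega
            · exact hh
      show piA n u.toFinset = l
      unfold piA
      rw [← hvfin, sort_eq_reverse husort, sort_eq_reverse hvsort,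
        List.reverse_reverse, List.reverse_reverse, ← hl]
end

section
/- Let β be a binary sequence of length k ≥ 1. Then for all n ≥ 0, the number of binary sequences of length n which avoid β is |B_n(β)| = Σ_{j=0}^{k−1} C(n, j), where C(n,j) is the binomial coefficient. -/
/-- `l` is a binary sequence: every entry is `0` or `1`. -/
def IsBinarySeq (l : List ℕ) : Prop := ∀ x ∈ l, x = 0 ∨ x = 1

def IsBinarySeqAux (l : List ℕ) : Prop := ∀ x ∈ l, x = 0 ∨ x = 1

def binLists : ℕ → Finset (List ℕ)
  | 0 => {[]}
  | n+1 => (binLists n).image (List.cons 0) ∪ (binLists n).image (List.cons 1)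

lemma mem_binLists : ∀ {n : ℕ} {l : List ℕ},
    l ∈ binLists n ↔ IsBinarySeqAux l ∧ l.length = n := by
  intro n
  induction n with
  | zero =>
    intro l
    simp [binLists, List.length_eq_zero_iff, IsBinarySeqAux]
    rintro rfl; simp
  | succ n ih =>
    intro l
    cases l with
    | nil => simp [binLists, IsBinarySeqAux]
    | cons c t =>
      simp only [binLists, Finset.mem_union, Finset.mem_image, IsBinarySeqAux,
        List.forall_mem_cons, List.length_cons, Nat.succ_inj]
      constructor
      · rintro (⟨a, ha, h⟩ | ⟨a, ha, h⟩) <;>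
        · cases h
          rcases ih.mp ha with ⟨h1, h2⟩
          simp_all [IsBinarySeqAux]
      · rintro ⟨⟨hc, ht⟩, hlen⟩
        rcases hc with rfl | rfl
        · exact Or.inl ⟨t, ih.mpr ⟨ht, hlen⟩, rfl⟩
        · exact Or.inr ⟨t, ih.mpr ⟨ht, hlen⟩, rfl⟩

lemma cons_sublist_cons_ne {b c : ℕ} (hbc : b ≠ c) (β t : List ℕ) :
    (b :: β).Sublist (c :: t) ↔ (b :: β).Sublist t := by
  constructor
  · intro h
    cases h with
    | cons _ h => exact h
    | cons_cons => exact absurd rfl hbc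
  · exact fun h => h.cons c

lemma filter_cons_image (n c : ℕ) (p : List ℕ → Prop) [DecidablePred p] :
    (((binLists n).image (List.cons c)).filter p).card =
      ((binLists n).filter (fun t => p (c :: t))).card := by
  rw [Finset.filter_image, Finset.card_image_of_injective]
  intro a b h
  exact (List.cons_injective h)

lemma card_rec (n b : ℕ) (hb : b = 0 ∨ b = 1) (β : List ℕ) :
    ((binLists (n+1)).filter (fun l => ¬ (b :: β).Sublist l)).card =
      ((binLists n).filter (fun l => ¬ (b :: β).Sublist l)).card +
        ((binLists n).filter (fun l => ¬ β.Sublist l)).card := by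
  have hdisj : Disjoint ((binLists n).image (List.cons 0))
      ((binLists n).image (List.cons 1)) := by
    rw [Finset.disjoint_left]
    rintro l hl0 hl1
    simp only [Finset.mem_image] at hl0 hl1
    obtain ⟨a, _, rfl⟩ := hl0
    obtain ⟨a', _, h⟩ := hl1
    exact absurd (List.head_eq_of_cons_eq h) (by norm_num)
  show ((((binLists n).image (List.cons 0)) ∪ ((binLists n).image (List.cons 1))).filter _).card = _
  rw [Finset.filter_union, Finset.card_union_of_disjoint
    (Finset.disjoint_filter_filter hdisj), filter_cons_image, filter_cons_image]
  rcases hb with rfl | rfl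
  · rw [Nat.add_comm]
    congr 1
    · apply congrArg Finset.card
      apply Finset.filter_congr
      intro t _
      simp [cons_sublist_cons_ne (by norm_num : (0:ℕ) ≠ 1)]
    · apply congrArg Finset.card
      apply Finset.filter_congr
      intro t _
      simp [List.cons_sublist_cons]
  · congr 1
    · apply congrArg Finset.card
      apply Finset.filter_congr
      intro t _
      simp [cons_sublist_cons_ne (by norm_num : (1:ℕ) ≠ 0)]
    · apply congrArg Finset.card
      apply Finset.filter_congr
      intro t _
      simp [List.cons_sublist_cons]

lemma sum_choose_succ (n k : ℕ) :
    ∑ j ∈ Finset.range (k+1), (n+1).choose j =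
      ∑ j ∈ Finset.range (k+1), n.choose j + ∑ j ∈ Finset.range k, n.choose j := by
  rw [Finset.sum_range_succ' (fun j => (n+1).choose j),
      Finset.sum_range_succ' (fun j => n.choose j)]
  simp only [Nat.choose_succ_succ, Nat.choose_zero_right]
  rw [Finset.sum_add_distrib]
  ring

lemma key_count : ∀ (n : ℕ) (β : List ℕ), IsBinarySeqAux β → β ≠ [] →
    ((binLists n).filter (fun l => ¬ β.Sublist l)).card =
      ∑ j ∈ Finset.range β.length, n.choose j := by
  intro n
  induction n with
  | zero =>
    intro β hβ hne
    have h1 : ((binLists 0).filter (fun l => ¬ β.Sublist l)) = {[]} := by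
      show Finset.filter _ {[]} = {[]}
      rw [Finset.filter_singleton]
      simp [List.sublist_nil, hne]
    rw [h1, Finset.card_singleton]
    rw [Finset.sum_eq_single 0]
    · simp
    · intro j _ hj
      exact Nat.choose_eq_zero_of_lt (Nat.pos_of_ne_zero hj)
    · intro h
      exact absurd (Finset.mem_range.mpr (List.length_pos_iff.mpr hne)) h
  | succ n ih =>
    intro β hβ hne
    cases β with
    | nil => exact absurd rfl hne
    | cons b β' =>
      have hb : b = 0 ∨ b = 1 := hβ b List.mem_cons_self
      rw [card_rec n b hb β']
      cases hβ' : β' with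
      | nil =>
        subst hβ'
        have h0 : ((binLists n).filter (fun l => ¬ ([] : List ℕ).Sublist l)) = ∅ := by
          apply Finset.filter_false_of_mem
          intro l _
          simp
        rw [h0, Finset.card_empty, ih [b] (by intro x hx; simp only [List.mem_singleton] at hx; subst hx; exact hb) (by simp)]
        simp
      | cons c γ =>
        subst hβ'
        rw [ih (b :: c :: γ) hβ hne,
            ih (c :: γ) (fun x hx => hβ x (List.mem_cons_of_mem b hx)) (by simp)]
        show _ = ∑ j ∈ Finset.range ((c :: γ).length + 1), (n+1).choose j
        rw [sum_choose_succ]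
        simp [List.length_cons]

lemma isBinarySeqAux_iff (l : List ℕ) : IsBinarySeqAux l ↔ IsBinarySeq l := Iff.rfl

/-- Let `β` be a binary sequence of length `k ≥ 1`.  Then for all `n ≥ 0`, the number
of binary sequences of length `n` which avoid `β` (i.e. have no subsequence identical
to `β`) is `Σ_{j=0}^{k-1} C(n, j)`. -/
theorem stmt6 (k : ℕ) (hk : 1 ≤ k) (β : List ℕ) (hβ : IsBinarySeq β)
    (hlen : β.length = k) (n : ℕ) :
    {l : List ℕ | IsBinarySeq l ∧ l.length = n ∧ ¬ β.Sublist l}.ncard =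
      ∑ j ∈ Finset.range k, n.choose j := by
  have hne : β ≠ [] := by
    intro h
    rw [h] at hlen
    simp at hlen
    omega
  have hset : {l : List ℕ | IsBinarySeq l ∧ l.length = n ∧ ¬ β.Sublist l} =
      ↑((binLists n).filter (fun l => ¬ β.Sublist l)) := by
    ext l
    simp only [Set.mem_setOf_eq, Finset.coe_filter, mem_binLists]
    tauto
  rw [hset, Set.ncard_coe_finset, key_count n β hβ hne, hlen]
end

section
/- Suppose k ≥ 1 and β is an ascent sequence of length k which avoids the pattern 012 and contains at least one entry equal to 1. Then for all n ≥ 1, the number of ascent sequences of length n which avoid both the pattern 012 and the sequence β is |A_n(012, β)| = Σ_{j=0}^{k−2} C(n−1, j), where C(n−1,j) is the binomial coefficient. -/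
namespace Stmt7Aux

/-- binary words of length n -/
def binW : ℕ → Finset (List ℕ)
  | 0 => {[]}
  | n+1 => (binW n).image (0 :: ·) ∪ (binW n).image (1 :: ·)

lemma mem_binW {n : ℕ} {l : List ℕ} :
    l ∈ binW n ↔ l.length = n ∧ ∀ x ∈ l, x ≤ 1 := by
  induction n generalizing l with
  | zero =>
    simp only [binW, Finset.mem_singleton]
    constructor
    · rintro rfl; simp
    · rintro ⟨h, -⟩; exact List.length_eq_zero_iff.mp h
  | succ n ih =>
    simp only [binW, Finset.mem_union, Finset.mem_image]
    constructor
    · rintro (⟨m, hm, rfl⟩ | ⟨m, hm, rfl⟩) <;> obtain ⟨h1, h2⟩ := ih.mp hm <;>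
        constructor <;> simp_all
    · rintro ⟨hl, hb⟩
      match l with
      | a :: t =>
        have ht : t ∈ binW n := ih.mpr ⟨by simpa using hl, fun x hx => hb x (List.mem_cons_of_mem _ hx)⟩
        have ha : a ≤ 1 := hb a List.mem_cons_self
        interval_cases a
        · exact Or.inl ⟨t, ht, rfl⟩
        · exact Or.inr ⟨t, ht, rfl⟩

lemma cons_sublist_cons_iff' (a c : ℕ) (w l : List ℕ) :
    (a :: w).Sublist (c :: l) ↔ (if a = c then w.Sublist l else (a :: w).Sublist l) := by
  split_ifs with h
  · subst h; exact List.cons_sublist_cons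
  · rw [List.sublist_cons_iff]
    constructor
    · rintro (hs | ⟨r, he, hr⟩)
      · exact hs
      · rw [List.cons.injEq] at he; exact absurd he.1 h
    · exact Or.inl

lemma sum_choose_succ (n m : ℕ) :
    ∑ j ∈ Finset.range (m+1), (n+1).choose j
      = ∑ j ∈ Finset.range (m+1), n.choose j + ∑ j ∈ Finset.range m, n.choose j := by
  induction m with
  | zero => simp
  | succ m ih =>
    have hp := Nat.choose_succ_succ n m
    simp only [Finset.sum_range_succ, Nat.succ_eq_add_one] at *
    omega

lemma avW_card : ∀ (n : ℕ) (w : List ℕ), (∀ x ∈ w, x ≤ 1) →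
    ((binW n).filter (fun l => ¬ w.Sublist l)).card = ∑ j ∈ Finset.range w.length, n.choose j := by
  intro n
  induction n with
  | zero =>
    intro w _
    match w with
    | [] => simp [binW]
    | a :: t =>
      rw [show (a :: t).length = t.length + 1 from rfl, Finset.sum_range_succ']
      have : ∀ j ∈ Finset.range t.length, Nat.choose 0 (j+1) = 0 := by
        intro j _; exact Nat.choose_eq_zero_of_lt (Nat.succ_pos j)
      rw [Finset.sum_congr rfl this]
      simp only [binW]
      rw [Finset.filter_singleton, if_pos (by simp)]
      simp
  | succ n ih =>
    intro w hw
    match w with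
    | [] => simp [List.nil_sublist]
    | a :: t =>
      have hdisj : Disjoint ((binW n).image (0 :: ·)) ((binW n).image (1 :: ·)) := by
        rw [Finset.disjoint_left]
        rintro x hx hy
        simp only [Finset.mem_image] at hx hy
        obtain ⟨u, _, rfl⟩ := hx
        obtain ⟨v, _, hv⟩ := hy
        simp at hv
      have hat : ∀ x ∈ t, x ≤ 1 := fun x hx => hw x (List.mem_cons_of_mem _ hx)
      have ha : a ≤ 1 := hw a List.mem_cons_self
      have key : ∀ c : ℕ, (((binW n).image (c :: ·)).filter (fun l => ¬ (a :: t).Sublist l)).card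
          = ((binW n).filter (fun l => ¬ (if a = c then t else a :: t).Sublist l)).card := by
        intro c
        rw [Finset.filter_image]
        rw [Finset.card_image_of_injective _ (fun x y h => by simpa using h)]
        congr 1
        apply Finset.filter_congr
        intro l _
        simp only [Function.comp_apply, cons_sublist_cons_iff' a c t l]
        split_ifs <;> tauto
      rw [show binW (n+1) = (binW n).image (0 :: ·) ∪ (binW n).image (1 :: ·) from rfl,
        Finset.filter_union, Finset.card_union_of_disjoint (Finset.disjoint_filter_filter hdisj),
        key 0, key 1]
      have hlen : (a :: t).length = t.length + 1 := rfl
      rw [hlen, sum_choose_succ]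
      interval_cases a
      · norm_num
        rw [ih t hat, ih (0 :: t) (by simpa using hat)]
        simp only [List.length_cons]
        omega
      · norm_num
        rw [ih t hat, ih (1 :: t) (by intro x hx; simp only [List.mem_cons] at hx; rcases hx with rfl | h; exacts [le_refl 1, hat x h])]
        simp only [List.length_cons]
        try omega



lemma srefl (u : List ℕ) : SameRelOrder u u := ⟨rfl, fun _ _ _ _ => Iff.rfl⟩

lemma contains_of_sublist {l β : List ℕ} (h : β.Sublist l) : SeqContains l β := ⟨β, h, srefl β⟩

lemma getD_le {l : List ℕ} (hb : ∀ x ∈ l, x ≤ 1) {i : ℕ} (h : i < l.length) : l.getD i 0 ≤ 1 :=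
  hb _ (by rw [List.getD_eq_getElem _ _ h]; exact List.getElem_mem h)

lemma binary_avoids_012 {l : List ℕ} (hb : ∀ x ∈ l, x ≤ 1) : ¬ SeqContains l [0,1,2] := by
  rintro ⟨γ, hs, hlen, hord⟩
  have h3 : γ.length = 3 := by simpa using hlen
  have hγb : ∀ x ∈ γ, x ≤ 1 := fun x hx => hb x (hs.subset hx)
  have g1 : γ.getD 1 0 ≤ 1 := getD_le hγb (by omega)
  have g2 : γ.getD 2 0 ≤ 1 := getD_le hγb (by omega)
  have h01 : γ.getD 0 0 < γ.getD 1 0 := by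
    rw [hord 0 1 (by omega) (by omega)]
    simp only [List.getD_cons_zero, List.getD_cons_succ]; omega
  have h12 : γ.getD 1 0 < γ.getD 2 0 := by
    rw [hord 1 2 (by omega) (by omega)]
    simp only [List.getD_cons_zero, List.getD_cons_succ]; omega
  omega

lemma ascent_012_binary_aux {l : List ℕ}
    (ha1 : 0 < l.length → l.getD 0 0 = 0)
    (ha2 : ∀ j, 0 < j → j < l.length →
      l.getD j 0 ≤ 1 + ((Finset.range (l.take j).length).filter
        (fun i => i + 1 < (l.take j).length ∧
          (l.take j).getD i 0 < (l.take j).getD (i + 1) 0)).card)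
    (h012 : ¬ SeqContains l [0,1,2]) : ∀ x ∈ l, x ≤ 1 := by
  by_contra hc
  push_neg at hc
  obtain ⟨x, hx, hx2⟩ := hc
  obtain ⟨i0, hi0, rfl⟩ := List.getElem_of_mem hx
  have hP : ∃ m, m < l.length ∧ 2 ≤ l.getD m 0 :=
    ⟨i0, hi0, by rw [List.getD_eq_getElem _ _ hi0]; omega⟩
  classical
  obtain ⟨m, ⟨hm, hm2⟩, hmin'⟩ :
      ∃ m, (m < l.length ∧ 2 ≤ l.getD m 0) ∧ ∀ i, i < m → ¬(i < l.length ∧ 2 ≤ l.getD i 0) :=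
    ⟨Nat.find hP, Nat.find_spec hP, fun i hi => Nat.find_min hP hi⟩
  have hmin : ∀ i, i < m → i < l.length → l.getD i 0 ≤ 1 := by
    intro i hi hil
    have := hmin' i hi
    push_neg at this
    have := this hil
    omega
  have hm0 : 0 < m := by
    rcases Nat.eq_zero_or_pos m with h | h
    · exfalso
      have h0 := ha1 (by omega)
      rw [h, h0] at hm2; omega
    · exact h
  have hineq := ha2 m hm0 hm
  have ltm : (l.take m).length = m := by rw [List.length_take]; omega
  have hasc : 0 < ((Finset.range (l.take m).length).filter
      (fun i => i + 1 < (l.take m).length ∧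
        (l.take m).getD i 0 < (l.take m).getD (i + 1) 0)).card := by omega
  obtain ⟨i, hi⟩ := Finset.card_pos.mp hasc
  rw [Finset.mem_filter] at hi
  obtain ⟨-, hi1, hi2⟩ := hi
  rw [ltm] at hi1
  have htake : ∀ j, j < m → (l.take m).getD j 0 = l.getD j 0 := by
    intro j hj
    rw [List.getD_eq_getElem _ _ (by omega : j < (l.take m).length),
      List.getD_eq_getElem _ _ (by omega : j < l.length)]
    simp [List.getElem_take]
  rw [htake i (by omega), htake (i+1) hi1] at hi2
  -- now l.getD i 0 < l.getD (i+1) 0, i+1 < m, l.getD m 0 ≥ 2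
  have hb1 : l.getD (i+1) 0 ≤ 1 := hmin (i+1) hi1 (by omega)
  apply h012
  refine ⟨[l.getD i 0, l.getD (i+1) 0, l.getD m 0], ?_, ?_, ?_⟩
  · have hp : ([⟨i, by omega⟩, ⟨i+1, by omega⟩, ⟨m, by omega⟩] : List (Fin l.length)).Pairwise (· < ·) := by
      refine List.Pairwise.cons ?_ (List.Pairwise.cons ?_ (List.Pairwise.cons
          (fun x hx => absurd hx List.not_mem_nil) List.Pairwise.nil)) <;>
        intro x hx <;> fin_cases hx <;> exact Fin.mk_lt_mk.mpr (by omega)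
    have hsl := List.map_getElem_sublist hp
    simp only [List.map_cons, List.map_nil, Fin.getElem_fin] at hsl
    rw [List.getD_eq_getElem _ _ (by omega : i < l.length),
      List.getD_eq_getElem _ _ (by omega : i + 1 < l.length),
      List.getD_eq_getElem _ _ (by omega : m < l.length)]
    exact hsl
  · rfl
  · intro a b hA hB
    simp only [List.length_cons, List.length_nil] at hA hB
    interval_cases a <;> interval_cases b <;>
      simp only [List.getD_cons_zero, List.getD_cons_succ] <;> omega

lemma contains_to_sublist {l β : List ℕ} (hlb : ∀ x ∈ l, x ≤ 1) (hβb : ∀ x ∈ β, x ≤ 1)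
    (h0len : 0 < β.length) (h0 : β.getD 0 0 = 0)
    (q : ℕ) (hq : q < β.length) (hq1 : β.getD q 0 = 1) :
    SeqContains l β → β.Sublist l := by
  rintro ⟨γ, hs, hlenγ, hord⟩
  have hγb : ∀ x ∈ γ, x ≤ 1 := fun x hx => hlb x (hs.subset hx)
  have hγlen : γ.length = β.length := hlenγ
  have hγq : γ.getD 0 0 < γ.getD q 0 := by
    rw [hord 0 q (by omega) (by omega), h0, hq1]; omega
  have hqle : γ.getD q 0 ≤ 1 := getD_le hγb (by omega)
  have h0' : γ.getD 0 0 = 0 := by omega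
  have hq'' : γ.getD q 0 = 1 := by omega
  have heq : γ = β := by
    apply List.ext_getElem (by omega)
    intro i h1 h2
    rw [← List.getD_eq_getElem γ 0 h1, ← List.getD_eq_getElem β 0 h2]
    have hβi : β.getD i 0 ≤ 1 := getD_le hβb h2
    have hγi : γ.getD i 0 ≤ 1 := getD_le hγb h1
    rcases Nat.lt_or_ge (β.getD i 0) 1 with hcase | hcase
    · have ne1 : ¬ (γ.getD i 0 < γ.getD 0 0) := by
        rw [hord i 0 (by omega) (by omega), h0]; omega
      have ne2 : ¬ (γ.getD 0 0 < γ.getD i 0) := by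
        rw [hord 0 i (by omega) (by omega), h0]; omega
      omega
    · have ne1 : ¬ (γ.getD i 0 < γ.getD q 0) := by
        rw [hord i q (by omega) (by omega), hq1]; omega
      have ne2 : ¬ (γ.getD q 0 < γ.getD i 0) := by
        rw [hord q i (by omega) (by omega), hq1]; omega
      omega
  rwa [heq] at hs


lemma ascent_012_binary {l : List ℕ} (ha : IsAscentSeq l) (h012 : ¬ SeqContains l [0,1,2]) :
    ∀ x ∈ l, x ≤ 1 :=
  ascent_012_binary_aux ha.1 ha.2 h012

end Stmt7Aux

/-- Suppose `k ≥ 1` and `β` is an ascent sequence of length `k` which avoids the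
pattern 012 and contains at least one entry equal to `1`.  Then for all `n ≥ 1`,
`|A_n(012, β)| = Σ_{j=0}^{k-2} C(n-1, j)`. -/
theorem stmt7 (k : ℕ) (hk : 1 ≤ k) (β : List ℕ)
    (hβ : β ∈ AscentSeqSet k [[0, 1, 2]]) (hone : 1 ∈ β) (n : ℕ) (hn : 1 ≤ n) :
    (AscentSeqSet n [[0, 1, 2], β]).ncard =
      ∑ j ∈ Finset.range (k - 1), (n - 1).choose j := by
  classical
  obtain ⟨hβlen, hβasc, hβav⟩ := hβ
  have h012β : ¬ SeqContains β [0,1,2] := hβav _ List.mem_cons_self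
  have hβb : ∀ x ∈ β, x ≤ 1 := Stmt7Aux.ascent_012_binary hβasc h012β
  have hβ0 : β.getD 0 0 = 0 := hβasc.1 (by omega)
  obtain ⟨q, hq, hq1⟩ := List.getElem_of_mem hone
  have hq1' : β.getD q 0 = 1 := by rw [List.getD_eq_getElem _ _ hq]; exact hq1
  obtain ⟨b, βt, rfl⟩ : ∃ b βt, β = b :: βt := by
    cases β with
    | nil => simp at hone
    | cons b t => exact ⟨b, t, rfl⟩
  have hb0 : b = 0 := by simpa using hβ0
  subst hb0
  have hk2 : βt.length = k - 1 := by
    simp only [List.length_cons] at hβlen; omega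
  have hβtb : ∀ x ∈ βt, x ≤ 1 := fun x hx => hβb x (List.mem_cons_of_mem _ hx)
  set F := ((Stmt7Aux.binW (n-1)).filter (fun l => ¬ βt.Sublist l)).image (0 :: ·) with hF
  have hset : AscentSeqSet n [[0,1,2], 0 :: βt] = ↑F := by
    ext l
    simp only [AscentSeqSet, Set.mem_setOf_eq, hF, Finset.coe_image, Set.mem_image,
      Finset.mem_coe, Finset.mem_filter, Stmt7Aux.mem_binW]
    constructor
    · rintro ⟨hlen, hasc, hav⟩
      have h012 : ¬ SeqContains l [0,1,2] := hav _ (by simp)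
      have hβav' : ¬ SeqContains l (0 :: βt) := hav _ (by simp)
      have hlb : ∀ x ∈ l, x ≤ 1 := Stmt7Aux.ascent_012_binary hasc h012
      obtain ⟨c, l', rfl⟩ : ∃ c l', l = c :: l' := by
        cases l with
        | nil => exfalso; rw [← hlen] at hn; simp at hn
        | cons c t => exact ⟨c, t, rfl⟩
      have hc : c = 0 := by have := hasc.1 (by simp); simpa using this
      subst hc
      refine ⟨l', ⟨⟨by simp only [List.length_cons] at hlen; omega,
        fun x hx => hlb x (List.mem_cons_of_mem _ hx)⟩, ?_⟩, rfl⟩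
      intro hsub
      exact hβav' (Stmt7Aux.contains_of_sublist (List.cons_sublist_cons.mpr hsub))
    · rintro ⟨l', ⟨⟨hlen', hbin'⟩, hns⟩, rfl⟩
      have hlb : ∀ x ∈ 0 :: l', x ≤ 1 := by
        intro x hx
        rcases List.mem_cons.mp hx with rfl | h
        · omega
        · exact hbin' x h
      refine ⟨by simp only [List.length_cons, hlen']; omega, ⟨fun _ => rfl, ?_⟩, ?_⟩
      · intro j hj hjl
        have : (0 :: l').getD j 0 ≤ 1 := Stmt7Aux.getD_le hlb hjl
        omega
      · intro p hp
        rcases List.mem_cons.mp hp with rfl | hp'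
        · exact Stmt7Aux.binary_avoids_012 hlb
        · rcases List.mem_cons.mp hp' with rfl | hp''
          · intro hcon
            have hsub := Stmt7Aux.contains_to_sublist hlb hβb (by simp) hβ0 q hq hq1' hcon
            exact hns (List.cons_sublist_cons.mp hsub)
          · simp at hp''
  rw [hset, Set.ncard_coe_finset, hF,
    Finset.card_image_of_injective _ (fun x y h => by simpa using h),
    Stmt7Aux.avW_card (n-1) βt hβtb, hk2]
end

section
/- Suppose k ≥ 2 and β is a binary sequence of length k which begins with 1 and contains at least one 0. Then for all n ≥ 0, the number of ascent sequences of length n which avoid both the pattern 012 and the sequence β is |A_n(012, β)| = Σ_{j=0}^{k−1} C(n−1, j), where C(n−1,j) is the binomial coefficient. -/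
-- ============ auxiliary lemmas ============

lemma getD_take_aux (l : List ℕ) (j i : ℕ) (h : i < j) (h2 : i < l.length) :
    (l.take j).getD i 0 = l.getD i 0 := by
  rw [List.getD_eq_getElem _ _ (by simp; omega), List.getD_eq_getElem _ _ h2]
  exact List.getElem_take

lemma sameRelOrder_refl (u : List ℕ) : SameRelOrder u u :=
  ⟨rfl, fun _ _ _ _ => Iff.rfl⟩

lemma pair_sublist_s8 (l : List ℕ) (j k : ℕ) (hjk : j < k) (hk : k < l.length) :
    [l.getD j 0, l.getD k 0].Sublist l := by
  have hj : j < l.length := lt_trans hjk hk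
  have h1 : l.getD j 0 :: l.drop (j+1) = l.drop j := by
    rw [List.getD_eq_getElem _ _ hj]; exact List.getElem_cons_drop hj
  have h2 : [l.getD k 0].Sublist (l.drop (j+1)) := by
    have h3 : l.getD k 0 :: l.drop (k+1) = l.drop k := by
      rw [List.getD_eq_getElem _ _ hk]; exact List.getElem_cons_drop hk
    have h4 : (l.drop k).Sublist (l.drop (j+1)) := by
      have : l.drop k = (l.drop (j+1)).drop (k - (j+1)) := by
        rw [List.drop_drop]; congr 1; omega
      rw [this]; exact List.drop_sublist _ _
    have h5 : [l.getD k 0].Sublist (l.getD k 0 :: l.drop (k+1)) := by simp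
    rw [h3] at h5
    exact h5.trans h4
  have : ([l.getD j 0, l.getD k 0]).Sublist (l.drop j) := by
    rw [← h1]; exact List.cons_sublist_cons.mpr h2
  exact this.trans (List.drop_sublist _ _)

lemma triple_sublist (l : List ℕ) (i j k : ℕ) (hij : i < j) (hjk : j < k)
    (hk : k < l.length) : [l.getD i 0, l.getD j 0, l.getD k 0].Sublist l := by
  have hi : i < l.length := by omega
  have h1 : l.getD i 0 :: l.drop (i+1) = l.drop i := by
    rw [List.getD_eq_getElem _ _ hi]; exact List.getElem_cons_drop hi
  have hd : ∀ m, l.getD m 0 = (l.drop (i+1)).getD (m - (i+1)) 0 → True := fun _ _ => trivial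
  -- express tail values in the dropped list
  set t := l.drop (i+1) with ht
  have hjt : j - (i+1) < t.length := by simp [ht]; omega
  have hkt : k - (i+1) < t.length := by simp [ht]; omega
  have hjv : t.getD (j - (i+1)) 0 = l.getD j 0 := by
    rw [List.getD_eq_getElem _ _ hjt, List.getD_eq_getElem _ _ (by omega)]
    simp [ht, List.getElem_drop]; congr 1; omega
  have hkv : t.getD (k - (i+1)) 0 = l.getD k 0 := by
    rw [List.getD_eq_getElem _ _ hkt, List.getD_eq_getElem _ _ hk]
    simp [ht, List.getElem_drop]; congr 1; omega
  have hpair : [l.getD j 0, l.getD k 0].Sublist t := by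
    rw [← hjv, ← hkv]; exact pair_sublist_s8 t _ _ (by omega) hkt
  have : ([l.getD i 0, l.getD j 0, l.getD k 0]).Sublist (l.drop i) := by
    rw [← h1]; exact List.cons_sublist_cons.mpr hpair
  exact this.trans (List.drop_sublist _ _)

-- binary sequences: ascent sequences avoiding 012 are binary
lemma binary_of_ascent_avoid (l : List ℕ) (ha : IsAscentSeq l)
    (hav : ¬ SeqContains l [0, 1, 2]) : IsBinarySeq l := by
  by_contra hbin
  simp only [IsBinarySeq] at hbin
  push_neg at hbin
  obtain ⟨x, hxl, hx0, hx1⟩ := hbin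
  have hx2 : 2 ≤ x := by omega
  obtain ⟨j0, hj0, hj0v⟩ := List.mem_iff_getElem.mp hxl
  have hP : ∃ j, j < l.length ∧ 2 ≤ l.getD j 0 :=
    ⟨j0, hj0, by rw [List.getD_eq_getElem _ _ hj0, hj0v]; exact hx2⟩
  classical
  obtain ⟨j, ⟨hjlen, hjval⟩, hjmin⟩ := Nat.findX hP
  have hmin : ∀ m < j, l.getD m 0 ≤ 1 := by
    intro m hm
    by_contra hc
    exact hjmin m hm ⟨by omega, by omega⟩
  have hj0' : 0 < j := by
    rcases Nat.eq_zero_or_pos j with h | h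
    · have := ha.1 (by omega)
      rw [h] at hjval; omega
    · exact h
  have hb := ha.2 j hj0' hjlen
  have hasc : 1 ≤ ascCount (l.take j) := by omega
  have hne : ((Finset.range (l.take j).length).filter
      (fun i => i + 1 < (l.take j).length ∧ (l.take j).getD i 0 < (l.take j).getD (i + 1) 0)).Nonempty := by
    rw [← Finset.card_pos]; exact lt_of_lt_of_le Nat.zero_lt_one hasc
  obtain ⟨i, hi⟩ := hne
  simp only [Finset.mem_filter, Finset.mem_range] at hi
  have htl : (l.take j).length = j := by simp; omega
  rw [htl] at hi
  obtain ⟨hilt, hi1lt, hival⟩ := hi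
  rw [getD_take_aux l j i (by omega) (by omega),
      getD_take_aux l j (i+1) hi1lt (by omega)] at hival
  have hvi : l.getD i 0 = 0 := by have := hmin i (by omega); have := hmin (i+1) hi1lt; omega
  have hvi1 : l.getD (i+1) 0 = 1 := by have := hmin (i+1) hi1lt; omega
  apply hav
  refine ⟨[l.getD i 0, l.getD (i+1) 0, l.getD j 0],
    triple_sublist l i (i+1) j (by omega) (by omega) hjlen, ?_, ?_⟩
  · rfl
  · intro a b ha' hb'
    simp only [List.length_cons, List.length_nil] at ha' hb'
    simp only [hvi, hvi1]
    interval_cases a <;> interval_cases b <;>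
      simp only [List.getD_cons_zero, List.getD_cons_succ] <;> omega

-- pattern containment for binary patterns = sublist
lemma seqContains_iff_sublist (α β : List ℕ) (hα : IsBinarySeq α) (hβ : IsBinarySeq β)
    (hβ1 : β.getD 0 0 = 1) (hβ0 : 0 ∈ β) (hβlen : 0 < β.length) :
    SeqContains α β ↔ β.Sublist α := by
  constructor
  · rintro ⟨γ, hsub, hlen, hord⟩
    obtain ⟨q, hq, hqv⟩ := List.mem_iff_getElem.mp hβ0
    have hq' : β.getD q 0 = 0 := by rw [List.getD_eq_getElem _ _ hq, hqv]
    have hγbin : IsBinarySeq γ := fun x hx => hα x (hsub.subset hx)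
    have h0len : 0 < γ.length := by omega
    have hqγ : q < γ.length := by omega
    have hbinD : ∀ m, m < γ.length → γ.getD m 0 = 0 ∨ γ.getD m 0 = 1 := by
      intro m hm
      rw [List.getD_eq_getElem _ _ hm]
      exact hγbin _ (List.getElem_mem _)
    have hγq : γ.getD q 0 < γ.getD 0 0 := by
      rw [hord q 0 hqγ h0len, hq', hβ1]; omega
    have hγq0 : γ.getD q 0 = 0 := by
      have := hbinD q hqγ; have := hbinD 0 h0len; omega
    have hγ01 : γ.getD 0 0 = 1 := by
      have := hbinD q hqγ; have := hbinD 0 h0len; omega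
    have hγβ : γ = β := by
      apply List.ext_getElem (by omega)
      intro m h1 h2
      have hmβ : β.getD m 0 = 0 ∨ β.getD m 0 = 1 := by
        rw [List.getD_eq_getElem _ _ h2]
        exact hβ _ (List.getElem_mem h2)
      have hmγ := hbinD m h1
      have hmD : γ.getD m 0 = β.getD m 0 := by
        rcases hmβ with h | h
        · have hno : ¬ (β.getD q 0 < β.getD m 0) := by rw [hq', h]; omega
          rw [← hord q m hqγ h1] at hno
          omega
        · have hno : ¬ (β.getD m 0 < β.getD 0 0) := by rw [hβ1, h]; omega
          rw [← hord m 0 h1 h0len] at hno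
          omega
      rw [← List.getD_eq_getElem γ 0 h1, ← List.getD_eq_getElem β 0 h2, hmD]
    rwa [hγβ] at hsub
  · intro h
    exact ⟨β, h, sameRelOrder_refl β⟩

-- ============ counting ============

def binF : ℕ → Finset (List ℕ)
  | 0 => {[]}
  | m + 1 => ((binF m).image (List.cons 0)) ∪ ((binF m).image (List.cons 1))

lemma mem_binF (m : ℕ) (t : List ℕ) :
    t ∈ binF m ↔ t.length = m ∧ IsBinarySeq t := by
  induction m generalizing t with
  | zero =>
    simp [binF, IsBinarySeq, List.length_eq_zero_iff]
    rintro rfl; simp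
  | succ m ih =>
    simp only [binF, Finset.mem_union, Finset.mem_image]
    constructor
    · rintro (⟨s, hs, rfl⟩ | ⟨s, hs, rfl⟩) <;>
        obtain ⟨hlen, hbin⟩ := (ih s).mp hs <;>
        refine ⟨by simp [hlen], ?_⟩ <;>
        intro x hx <;> rcases List.mem_cons.mp hx with rfl | hx
      · left; rfl
      · exact hbin x hx
      · right; rfl
      · exact hbin x hx
    · rintro ⟨hlen, hbin⟩
      match t with
      | [] => simp at hlen
      | a :: s =>
        have hs : s ∈ binF m := (ih s).mpr ⟨by simpa using hlen,
          fun x hx => hbin x (List.mem_cons_of_mem a hx)⟩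
        rcases hbin a (List.mem_cons_self) with rfl | rfl
        · exact Or.inl ⟨s, hs, rfl⟩
        · exact Or.inr ⟨s, hs, rfl⟩

lemma pascal_sum (m r : ℕ) :
    ∑ j ∈ Finset.range (r + 1), (m + 1).choose j =
      ∑ j ∈ Finset.range (r + 1), m.choose j + ∑ j ∈ Finset.range r, m.choose j := by
  induction r with
  | zero => simp
  | succ r ih =>
    rw [Finset.sum_range_succ, ih, Finset.sum_range_succ (n := r + 1),
      Finset.sum_range_succ (n := r), Nat.choose_succ_succ']
    ring

lemma count_avoiders (m : ℕ) : ∀ δ : List ℕ, IsBinarySeq δ →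
    ((binF m).filter (fun t => ¬ δ.Sublist t)).card =
      ∑ j ∈ Finset.range δ.length, m.choose j := by
  induction m with
  | zero =>
    intro δ _
    match δ with
    | [] => simp [binF]
    | c :: δ' =>
      rw [Finset.filter_eq_self.mpr]
      · simp [binF, Finset.sum_range_succ']
      · intro t ht
        simp [binF] at ht
        subst ht
        simp
  | succ m ih =>
    intro δ hδ
    match δ with
    | [] =>
      rw [Finset.filter_eq_empty_iff.mpr (by intro t _; simp)]
      simp
    | c :: δ' =>
      have hδ' : IsBinarySeq δ' := fun x hx => hδ x (List.mem_cons_of_mem c hx)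
      have hc := hδ c (List.mem_cons_self)
      -- filter over union of two images
      have key : ∀ b : ℕ, (((binF m).image (List.cons b)).filter
          (fun t => ¬ (c :: δ').Sublist t)).card =
          ((binF m).filter (fun t => ¬ (c :: δ').Sublist (b :: t))).card := by
        intro b
        rw [Finset.filter_image, Finset.card_image_of_injective _
          (fun x y h => by injection h)]
      have hsplit : ∀ t : List ℕ, (c :: δ').Sublist (c :: t) ↔ δ'.Sublist t := by
        intro t
        constructor
        · intro h
          rcases List.cons_sublist_cons'.mp h with h | ⟨_, h⟩
          · exact (List.sublist_cons_self c δ').trans h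
          · exact h
        · exact fun h => List.cons_sublist_cons.mpr h
      have hmis : ∀ b : ℕ, b ≠ c → ∀ t : List ℕ,
          ((c :: δ').Sublist (b :: t) ↔ (c :: δ').Sublist t) := by
        intro b hb t
        constructor
        · intro h
          rcases List.cons_sublist_cons'.mp h with h | ⟨h, _⟩
          · exact h
          · exact absurd h.symm hb
        · exact fun h => h.cons b
      have hdisj : Disjoint (((binF m).image (List.cons 0)).filter
          (fun t => ¬ (c :: δ').Sublist t))
          (((binF m).image (List.cons 1)).filter (fun t => ¬ (c :: δ').Sublist t)) := by
        rw [Finset.disjoint_left]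
        intro a h0 h1
        simp only [Finset.mem_filter, Finset.mem_image] at h0 h1
        obtain ⟨⟨s, _, rfl⟩, _⟩ := h0
        obtain ⟨⟨s', _, hs'⟩, _⟩ := h1
        injection hs' with h _
        exact absurd h.symm (by omega)
      have hbranch : ((binF m).filter (fun t => ¬ (c :: δ').Sublist (0 :: t))).card +
          ((binF m).filter (fun t => ¬ (c :: δ').Sublist (1 :: t))).card =
          ∑ j ∈ Finset.range δ'.length, m.choose j +
          ∑ j ∈ Finset.range (δ'.length + 1), m.choose j := by
        rcases hc with rfl | rfl
        · rw [Finset.filter_congr (q := fun t => ¬ δ'.Sublist t)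
              (fun x _ => not_congr (hsplit x)),
            Finset.filter_congr (q := fun t => ¬ ((0 : ℕ) :: δ').Sublist t)
              (fun x _ => not_congr (hmis 1 (by omega) x)),
            ih δ' hδ', ih (0 :: δ') hδ]
          rfl
        · rw [Finset.filter_congr (q := fun t => ¬ ((1 : ℕ) :: δ').Sublist t)
              (fun x _ => not_congr (hmis 0 (by omega) x)),
            Finset.filter_congr (q := fun t => ¬ δ'.Sublist t)
              (fun x _ => not_congr (hsplit x)),
            ih δ' hδ', ih (1 :: δ') hδ]
          simp [Nat.add_comm]
      show (((binF m).image (List.cons 0) ∪ (binF m).image (List.cons 1)).filter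
          (fun t => ¬ (c :: δ').Sublist t)).card = _
      rw [Finset.filter_union, Finset.card_union_of_disjoint hdisj, key 0, key 1, hbranch]
      simp only [List.length_cons]
      rw [pascal_sum m δ'.length]
      ring

/-- Suppose `k ≥ 2` and `β` is a binary sequence of length `k` which begins with `1`
and contains at least one `0`.  Then for all `n ≥ 0`,
`|A_n(012, β)| = Σ_{j=0}^{k-1} C(n-1, j)`. -/
theorem stmt8 (k : ℕ) (hk : 2 ≤ k) (β : List ℕ) (hβ : IsBinarySeq β)
    (hlen : β.length = k) (hhead : β.getD 0 0 = 1) (hzero : 0 ∈ β) (n : ℕ) :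
    (AscentSeqSet n [[0, 1, 2], β]).ncard =
      ∑ j ∈ Finset.range k, (n - 1).choose j := by
  classical
  obtain ⟨b, β', rfl⟩ : ∃ b β', β = b :: β' := by
    cases β with
    | nil => simp at hlen; omega
    | cons b β' => exact ⟨b, β', rfl⟩
  have hb1 : b = 1 := by simpa using hhead
  subst hb1
  rcases n with _ | m
  · -- n = 0
    have hset : AscentSeqSet 0 [[0, 1, 2], 1 :: β'] = {[]} := by
      ext l
      simp only [AscentSeqSet, Set.mem_setOf_eq, Set.mem_singleton_iff]
      constructor
      · rintro ⟨hl, _, _⟩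
        exact List.length_eq_zero_iff.mp hl
      · rintro rfl
        refine ⟨rfl, ⟨by simp, by simp⟩, ?_⟩
        rintro p hp ⟨γ, hγ, hlen', _⟩
        have hγnil : γ = [] := List.sublist_nil.mp hγ
        subst hγnil
        simp only [List.mem_cons, List.not_mem_nil, or_false] at hp
        rcases hp with rfl | rfl <;> simp at hlen'
    rw [hset, Set.ncard_singleton]
    symm
    rw [Finset.sum_eq_single_of_mem 0 (Finset.mem_range.mpr (by omega))]
    · simp
    · intro b hb hb0
      simp only [Nat.zero_sub]
      exact Nat.choose_eq_zero_of_lt (by omega)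
  · -- n = m + 1
    have hset : AscentSeqSet (m + 1) [[0, 1, 2], 1 :: β'] =
        ↑((((binF m).filter (fun t => ¬ (1 :: β').Sublist t)).image (List.cons 0))) := by
      ext l
      simp only [AscentSeqSet, Set.mem_setOf_eq, Finset.coe_image, Set.mem_image,
        Finset.mem_coe, Finset.mem_filter]
      constructor
      · rintro ⟨hllen, hasc, havoid⟩
        have hav012 : ¬ SeqContains l [0, 1, 2] := havoid _ (by simp)
        have havβ : ¬ SeqContains l (1 :: β') := havoid _ (by simp)
        have hbin : IsBinarySeq l := binary_of_ascent_avoid l hasc hav012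
        cases l with
        | nil => simp at hllen
        | cons a t =>
          have ha0 : a = 0 := by simpa using hasc.1 (by simp)
          subst ha0
          refine ⟨t, ⟨⟨(mem_binF m t).mpr ⟨by simpa using hllen,
            fun x hx => hbin x (List.mem_cons_of_mem 0 hx)⟩, ?_⟩, rfl⟩⟩
          intro h
          exact havβ ⟨1 :: β', h.trans (List.sublist_cons_self 0 t),
            sameRelOrder_refl _⟩
      · rintro ⟨t, ⟨⟨htm, hnsub⟩, rfl⟩⟩
        obtain ⟨htlen, htbin⟩ := (mem_binF m t).mp htm
        have hbin : IsBinarySeq (0 :: t) := by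
          intro x hx
          rcases List.mem_cons.mp hx with rfl | hx
          · exact Or.inl rfl
          · exact htbin x hx
        have hbinD : ∀ i, (0 :: t).getD i 0 ≤ 1 := by
          intro i
          rcases Nat.lt_or_ge i (0 :: t).length with h | h
          · rw [List.getD_eq_getElem _ _ h]
            rcases hbin _ (List.getElem_mem h) with h' | h' <;> omega
          · rw [List.getD_eq_default _ _ h]; omega
        refine ⟨by simpa using htlen, ⟨fun _ => rfl, fun j _ _ => by
          have := hbinD j; omega⟩, ?_⟩
        rintro p hp
        simp only [List.mem_cons, List.not_mem_nil, or_false] at hp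
        rcases hp with rfl | rfl
        · rintro ⟨γ, hsub, hlen3, hord⟩
          simp only [List.length_cons, List.length_nil] at hlen3
          have hγbin : ∀ i, i < γ.length → γ.getD i 0 ≤ 1 := by
            intro i hi
            rw [List.getD_eq_getElem _ _ hi]
            rcases hbin _ (hsub.subset (List.getElem_mem hi)) with h' | h' <;> omega
          have h01 : γ.getD 0 0 < γ.getD 1 0 := by
            rw [hord 0 1 (by omega) (by omega)]
            simp [List.getD]
          have h12 : γ.getD 1 0 < γ.getD 2 0 := by
            rw [hord 1 2 (by omega) (by omega)]
            simp [List.getD]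
          have := hγbin 0 (by omega)
          have := hγbin 1 (by omega)
          have := hγbin 2 (by omega)
          omega
        · rw [seqContains_iff_sublist _ _ hbin hβ hhead hzero (by simp)]
          intro h
          rcases List.cons_sublist_cons'.mp h with h | ⟨h, _⟩
          · exact hnsub h
          · omega
    rw [hset, Set.ncard_coe_finset,
      Finset.card_image_of_injective _ (fun x y h => by injection h),
      count_avoiders m _ hβ]
    simp [hlen]
end

section
/- Suppose k ≥ 1, σ is a Fishburn permutation of length k which avoids 123, and σ is not the decreasing permutation k⋯21. Then for all n ≥ 0, the number of Fishburn permutations of length n avoiding both 123 and σ is |F_n(123, σ)| = Σ_{j=0}^{k−2} C(n−1, j), where C(n−1,j) is the binomial coefficient. -/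
namespace S9
open List

def runs : List Bool → List ℕ × List ℕ
  | [] => ([], [])
  | x :: w => if x then ((w.length + 1) :: (runs w).1, (runs w).2)
              else ((runs w).1, (w.length + 1) :: (runs w).2)

def wperm (w : List Bool) : List ℕ := (runs w).1 ++ (runs w).2

def wlabel (w : List Bool) (x : ℕ) : Bool := w.getD (w.length - x) false

lemma wlabel_cons (b : Bool) (w : List Bool) (x : ℕ) (h1 : 1 ≤ x) (h2 : x ≤ w.length) :
    wlabel (b :: w) x = wlabel w x := by
  unfold wlabel
  have : (b :: w).length - x = (w.length - x) + 1 := by simp; omega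
  rw [this]; simp

lemma wlabel_top (b : Bool) (w : List Bool) : wlabel (b :: w) (w.length + 1) = b := by
  unfold wlabel; simp

lemma mem_runs_fst (w : List Bool) (x : ℕ) :
    x ∈ (runs w).1 ↔ 1 ≤ x ∧ x ≤ w.length ∧ wlabel w x = true := by
  induction w with
  | nil => simp [runs, wlabel] <;> omega
  | cons b w ih =>
    rcases Nat.lt_or_ge w.length x with hx | hx
    · -- x > w.length : only candidate x = w.length+1
      rcases Nat.lt_or_ge x (w.length + 2) with hx2 | hx2
      · have hxe : x = w.length + 1 := by omega
        subst hxe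
        have hnot : (w.length + 1) ∉ (runs w).1 := by
          rw [ih]; rintro ⟨_, h, _⟩; omega
        cases b <;> simp [runs, hnot, wlabel_top]
      · have hnot : x ∉ (runs w).1 := by rw [ih]; rintro ⟨_, h, _⟩; omega
        have hxt : x ≠ w.length + 1 := by omega
        cases b <;> simp [runs, hnot, hxt] <;> omega
    · rcases Nat.lt_or_ge 0 x with h0 | h0
      · have h1 : 1 ≤ x := h0
        have hxt : x ≠ w.length + 1 := by omega
        cases b <;>
          simp [runs, hxt, ih, wlabel_cons _ w x h1 hx] <;>
          (intros; omega)
      · have hxe : x = 0 := by omega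
        subst hxe
        have hnot : (0:ℕ) ∉ (runs w).1 := by rw [ih]; rintro ⟨h, _, _⟩; omega
        cases b <;> simp [runs, hnot]

lemma mem_runs_snd (w : List Bool) (x : ℕ) :
    x ∈ (runs w).2 ↔ 1 ≤ x ∧ x ≤ w.length ∧ wlabel w x = false := by
  induction w with
  | nil => simp [runs, wlabel] <;> omega
  | cons b w ih =>
    rcases Nat.lt_or_ge w.length x with hx | hx
    · rcases Nat.lt_or_ge x (w.length + 2) with hx2 | hx2
      · have hxe : x = w.length + 1 := by omega
        subst hxe
        have hnot : (w.length + 1) ∉ (runs w).2 := by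
          rw [ih]; rintro ⟨_, h, _⟩; omega
        cases b <;> simp [runs, hnot, wlabel_top]
      · have hnot : x ∉ (runs w).2 := by rw [ih]; rintro ⟨_, h, _⟩; omega
        have hxt : x ≠ w.length + 1 := by omega
        cases b <;> simp [runs, hnot, hxt] <;> omega
    · rcases Nat.lt_or_ge 0 x with h0 | h0
      · have h1 : 1 ≤ x := h0
        have hxt : x ≠ w.length + 1 := by omega
        cases b <;>
          simp [runs, hxt, ih, wlabel_cons _ w x h1 hx] <;>
          (intros; omega)
      · have hxe : x = 0 := by omega
        subst hxe
        have hnot : (0:ℕ) ∉ (runs w).2 := by rw [ih]; rintro ⟨h, _, _⟩; omega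
        cases b <;> simp [runs, hnot]

lemma sorted_runs_fst (w : List Bool) : ((runs w).1).Pairwise (· > ·) := by
  induction w with
  | nil => simp [runs]
  | cons b w ih =>
    cases b <;> simp [runs, List.pairwise_cons, ih]
    intro y hy
    have := (mem_runs_fst w y).mp hy
    omega

lemma sorted_runs_snd (w : List Bool) : ((runs w).2).Pairwise (· > ·) := by
  induction w with
  | nil => simp [runs]
  | cons b w ih =>
    cases b <;> simp [runs, List.pairwise_cons, ih]
    intro y hy
    have := (mem_runs_snd w y).mp hy
    omega

lemma wperm_perm (w : List Bool) : (wperm w).Perm (List.range' 1 w.length) := by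
  induction w with
  | nil => simp [wperm, runs]
  | cons b w ih =>
    have hr : List.range' 1 (w.length + 1) = List.range' 1 w.length ++ [1 + w.length] :=
      List.range'_1_concat (s := 1) (n := w.length)
    have key : ((w.length + 1) :: wperm w).Perm (List.range' 1 (w.length + 1)) := by
      rw [hr, Nat.add_comm 1 w.length]
      exact ((ih.cons _).trans (List.perm_append_singleton _ _).symm)
    cases b
    · show ((runs w).1 ++ (w.length + 1) :: (runs w).2).Perm (List.range' 1 (w.length + 1))
      exact List.perm_middle.trans key
    · show (((w.length + 1) :: (runs w).1) ++ (runs w).2).Perm (List.range' 1 (w.length + 1))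
      exact key

lemma wperm_length (w : List Bool) : (wperm w).length = w.length := by
  rw [(wperm_perm w).length_eq, List.length_range']

lemma mem_wperm (w : List Bool) (x : ℕ) : x ∈ wperm w ↔ 1 ≤ x ∧ x ≤ w.length := by
  rw [(wperm_perm w).mem_iff, List.mem_range'_1]
  omega

lemma nodup_wperm (w : List Bool) : (wperm w).Nodup :=
  (wperm_perm w).nodup_iff.mpr (List.nodup_range' ..)

lemma sublist_of_sorted_subset : ∀ (L g : List ℕ), g.Pairwise (· > ·) → L.Pairwise (· > ·) →
    (∀ x ∈ g, x ∈ L) → g.Sublist L := by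
  intro L
  induction L with
  | nil =>
    intro g _ _ hsub
    cases g with
    | nil => exact List.Sublist.refl _
    | cons a g => exact absurd (hsub a (by simp)) (by simp)
  | cons b L ih =>
    intro g hg hL hsub
    cases g with
    | nil => exact List.nil_sublist _
    | cons a g =>
      rw [List.pairwise_cons] at hg hL
      by_cases hab : a = b
      · subst hab
        apply List.cons_sublist_cons.mpr
        apply ih g hg.2 hL.2
        intro x hx
        have hxa : x < a := hg.1 x hx
        rcases List.mem_cons.mp (hsub x (by simp [hx])) with heq | h
        · omega
        · assumption
      · have haL : a ∈ L := by
          have := hsub a (by simp)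
          rcases this with _ | h
          · exact absurd rfl hab
          · assumption
        have hab' : a < b := hL.1 a haL
        apply List.Sublist.cons
        apply ih (a :: g) (by rw [List.pairwise_cons]; exact hg) hL.2
        intro x hx
        have hmem : x ∈ b :: L := hsub x hx
        have hxb : x < b := by
          rcases List.mem_cons.mp hx with heq | hx2
          · omega
          · have := hg.1 x hx2; omega
        rcases List.mem_cons.mp hmem with heq | h
        · omega
        · assumption

end S9

namespace S9
open List

def GoodMap (w wσ : List Bool) (g : ℕ → ℕ) : Prop :=
  (∀ c, 1 ≤ c → c ≤ wσ.length → 1 ≤ g c ∧ g c ≤ w.length ∧ wlabel w (g c) = wlabel wσ c) ∧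
  (∀ c c', 1 ≤ c → c < c' → c' ≤ wσ.length → g c < g c')

lemma goodmap_of_sublist {wσ w : List Bool} (h : wσ.Sublist w) : ∃ g, GoodMap w wσ g := by
  induction h with
  | slnil =>
    exact ⟨id, fun c h1 h2 => absurd (h1.trans h2) (by simp),
      fun c c' h1 h2 h3 => by simp at h3; omega⟩
  | @cons l₁ l₂ x h ih =>
    obtain ⟨g, hg1, hg2⟩ := ih
    refine ⟨g, fun c h1 h2 => ?_, hg2⟩
    obtain ⟨ha, hb, hc⟩ := hg1 c h1 h2
    exact ⟨ha, by simp; omega, by rw [wlabel_cons x l₂ (g c) ha hb]; exact hc⟩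
  | @cons_cons l₁ l₂ x h ih =>
    obtain ⟨g, hg1, hg2⟩ := ih
    refine ⟨fun c => if c = l₁.length + 1 then l₂.length + 1 else g c,
      fun c h1 h2 => ?_, fun c c' h1 h2 h3 => ?_⟩
    · simp only [List.length_cons] at h2
      by_cases hc : c = l₁.length + 1
      · subst hc; simp [wlabel_top]
      · have h2' : c ≤ l₁.length := by omega
        obtain ⟨ha, hb, hcc⟩ := hg1 c h1 h2'
        simp only [if_neg hc]
        refine ⟨ha, by simp; omega, ?_⟩
        rw [wlabel_cons x l₂ (g c) ha hb, wlabel_cons x l₁ c h1 h2']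
        exact hcc
    · simp only [List.length_cons] at h3
      have hcne : c ≠ l₁.length + 1 := by omega
      by_cases hc' : c' = l₁.length + 1
      · have h2' : c ≤ l₁.length := by omega
        obtain ⟨_, hb, _⟩ := hg1 c h1 h2'
        simp only [if_neg hcne, if_pos hc']
        omega
      · have h3' : c' ≤ l₁.length := by omega
        simp only [if_neg hcne, if_neg hc']
        exact hg2 c c' h1 h2 h3'

lemma sublist_of_goodmap : ∀ (w wσ : List Bool) (g : ℕ → ℕ), GoodMap w wσ g → wσ.Sublist w := by
  intro w
  induction w with
  | nil =>
    intro wσ g hg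
    cases wσ with
    | nil => exact List.Sublist.refl _
    | cons y wσ' =>
      obtain ⟨h1, h2, _⟩ := hg.1 1 le_rfl (by simp)
      simp at h2; omega
  | cons x w' ih =>
    intro wσ g hg
    cases wσ with
    | nil => exact List.nil_sublist _
    | cons y wσ' =>
      by_cases htop : g (wσ'.length + 1) = w'.length + 1
      · have hxy : y = x := by
          have h := (hg.1 (wσ'.length + 1) (by omega) (by simp)).2.2
          rw [htop] at h
          rw [wlabel_top x w', wlabel_top y wσ'] at h
          exact h.symm
        subst hxy
        apply List.cons_sublist_cons.mpr
        apply ih wσ' g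
        constructor
        · intro c h1 h2
          have hlt : g c < g (wσ'.length + 1) := hg.2 c (wσ'.length+1) h1 (by omega) (by simp)
          obtain ⟨ha, hb, hcc⟩ := hg.1 c h1 (by simp; omega)
          refine ⟨ha, by omega, ?_⟩
          rw [wlabel_cons y w' (g c) ha (by omega)] at hcc
          rw [wlabel_cons y wσ' c h1 h2] at hcc
          exact hcc
        · exact fun c c' h1 h2 h3 => hg.2 c c' h1 h2 (by simp; omega)
      · apply List.Sublist.cons
        apply ih (y :: wσ') g
        constructor
        · intro c h1 h2
          obtain ⟨ha, hb, hcc⟩ := hg.1 c h1 h2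
          have hble : g c ≤ w'.length := by
            have hb' : g c ≤ w'.length + 1 := by simpa using hb
            rcases Nat.lt_or_ge (g c) (w'.length + 1) with hlt | hge
            · omega
            · have hge' : g c = w'.length + 1 := by omega
              by_cases hct : c = wσ'.length + 1
              · rw [hct] at hge'; exact absurd hge' htop
              · have hlt2 : g c < g (wσ'.length + 1) :=
                  hg.2 c _ h1 (by simp at h2; omega) (by simp)
                have h2' := (hg.1 (wσ'.length+1) (by omega) (by simp)).2.1
                simp at h2'
                omega
          refine ⟨ha, hble, ?_⟩
          rw [wlabel_cons x w' (g c) ha hble] at hcc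
          exact hcc
        · exact hg.2

lemma sublist_append_true {v u : List Bool} :
    (v ++ [true]).Sublist (u ++ [true]) ↔ v.Sublist u := by
  constructor
  · intro h
    have h2 : (v ++ [true]).reverse.Sublist (u ++ [true]).reverse :=
      List.reverse_sublist.mpr h
    simp only [List.reverse_append, List.reverse_cons, List.reverse_nil, List.nil_append,
      List.singleton_append] at h2
    exact List.reverse_sublist.mp (List.cons_sublist_cons.mp h2)
  · intro h
    exact h.append (List.Sublist.refl _)

end S9

namespace S9
open List

lemma getD_indexOf {l : List ℕ} {c : ℕ} (h : c ∈ l) : l.getD (l.idxOf c) 0 = c := by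
  rw [List.getD_eq_getElem l 0 (List.idxOf_lt_length_iff.mpr h)]
  have := List.idxOf_get (List.idxOf_lt_length_iff.mpr h)
  rwa [List.get_eq_getElem] at this

lemma sorted_getD_lt {L : List ℕ} (hs : L.Pairwise (· > ·)) {i j : ℕ} (hij : i < j)
    (hj : j < L.length) : L.getD j 0 < L.getD i 0 := by
  rw [List.getD_eq_getElem L 0 hj, List.getD_eq_getElem L 0 (by omega)]
  exact List.pairwise_iff_getElem.mp hs i j (by omega) hj hij

lemma getD_last_sorted {L : List ℕ} (hs : L.Pairwise (· > ·)) (h1 : (1:ℕ) ∈ L)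
    (hge : ∀ y ∈ L, 1 ≤ y) : L.getD (L.length - 1) 0 = 1 := by
  have hlen : 0 < L.length := List.length_pos_iff.mpr (List.ne_nil_of_mem h1)
  have hp : L.idxOf 1 < L.length := List.idxOf_lt_length_iff.mpr h1
  have hval : L.getD (L.idxOf 1) 0 = 1 := getD_indexOf h1
  rcases Nat.lt_or_ge (L.idxOf 1) (L.length - 1) with hlt | hgeq
  · exfalso
    have h2 := sorted_getD_lt hs hlt (by omega)
    rw [hval] at h2
    have hmem : L.getD (L.length - 1) 0 ∈ L := by
      rw [List.getD_eq_getElem L 0 (by omega)]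
      exact List.getElem_mem _
    have := hge _ hmem
    omega
  · have : L.idxOf 1 = L.length - 1 := by omega
    rw [← this]; exact hval

lemma contains_of_goodmap {w wσ : List Bool} (g : ℕ → ℕ) (hg : GoodMap w wσ g) :
    SeqContains (wperm w) (wperm wσ) := by
  have hmapsub : ∀ (S P : List ℕ), S.Pairwise (· > ·) → P.Pairwise (· > ·) →
      (∀ y ∈ S, 1 ≤ y ∧ y ≤ wσ.length) → (∀ y ∈ S, g y ∈ P) → (S.map g).Sublist P := by
    intro S P hS hP hb hm
    apply sublist_of_sorted_subset
    · rw [List.pairwise_iff_getElem]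
      intro i j hi hj hij
      simp only [List.length_map] at hi hj
      rw [List.getElem_map, List.getElem_map]
      have hmi : S[i] ∈ S := List.getElem_mem _
      have hmj : S[j] ∈ S := List.getElem_mem _
      have hlt : S[j] < S[i] := List.pairwise_iff_getElem.mp hS i j hi hj hij
      exact hg.2 S[j] S[i] (hb _ hmj).1 hlt (hb _ hmi).2
    · exact hP
    · intro x hx
      obtain ⟨y, hy, rfl⟩ := List.mem_map.mp hx
      exact hm y hy
  refine ⟨(wperm wσ).map g, ?_, ?_⟩
  · show ((((runs wσ).1 ++ (runs wσ).2)).map g).Sublist ((runs w).1 ++ (runs w).2)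
    rw [List.map_append]
    apply List.Sublist.append
    · apply hmapsub _ _ (sorted_runs_fst wσ) (sorted_runs_fst w)
      · intro y hy; have := (mem_runs_fst wσ y).mp hy; exact ⟨this.1, this.2.1⟩
      · intro y hy
        have h := (mem_runs_fst wσ y).mp hy
        obtain ⟨ha, hb', hc⟩ := hg.1 y h.1 h.2.1
        rw [h.2.2] at hc
        exact (mem_runs_fst w (g y)).mpr ⟨ha, hb', hc⟩
    · apply hmapsub _ _ (sorted_runs_snd wσ) (sorted_runs_snd w)
      · intro y hy; have := (mem_runs_snd wσ y).mp hy; exact ⟨this.1, this.2.1⟩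
      · intro y hy
        have h := (mem_runs_snd wσ y).mp hy
        obtain ⟨ha, hb', hc⟩ := hg.1 y h.1 h.2.1
        rw [h.2.2] at hc
        exact (mem_runs_snd w (g y)).mpr ⟨ha, hb', hc⟩
  · constructor
    · simp
    · intro i j hi hj
      simp only [List.length_map] at hi hj
      rw [List.getD_eq_getElem _ 0 (by simpa using hi), List.getD_eq_getElem _ 0 (by simpa using hj),
        List.getD_eq_getElem _ 0 hi, List.getD_eq_getElem _ 0 hj,
        List.getElem_map, List.getElem_map]
      have hbi := (mem_wperm wσ _).mp (List.getElem_mem hi)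
      have hbj := (mem_wperm wσ _).mp (List.getElem_mem hj)
      constructor
      · intro hlt
        by_contra hge
        rcases Nat.lt_or_ge ((wperm wσ)[j]) ((wperm wσ)[i]) with h' | h'
        · have := hg.2 _ _ hbj.1 h' hbi.2
          omega
        · have : (wperm wσ)[i] = (wperm wσ)[j] := by omega
          rw [this] at hlt
          omega
      · intro hlt
        exact hg.2 _ _ hbi.1 hlt hbj.2

lemma goodmap_of_contains {w wσ : List Bool} (hw1 : wlabel wσ 1 = true) (hkk : 1 ≤ wσ.length)
    (hfalse : ∃ x, 1 ≤ x ∧ x ≤ wσ.length ∧ wlabel wσ x = false)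
    (hc : SeqContains (wperm w) (wperm wσ)) : ∃ g, GoodMap w wσ g := by
  obtain ⟨γ, hsub, hrel⟩ := hc
  set S := (runs wσ).1 with hSdef
  set T := (runs wσ).2 with hTdef
  have hσlen : (wperm wσ).length = wσ.length := wperm_length wσ
  have hlenγ : γ.length = wσ.length := hrel.1.trans hσlen
  obtain ⟨γ₁, γ₂, heqγ, hsub1, hsub2⟩ := List.sublist_append_iff.mp hsub
  have hst : S.length + T.length = wσ.length := by
    have : (wperm wσ).length = S.length + T.length := List.length_append
    omega
  have hs1 : (1:ℕ) ∈ S := (mem_runs_fst wσ 1).mpr ⟨le_rfl, hkk, hw1⟩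
  have hs : 1 ≤ S.length := List.length_pos_iff.mpr (List.ne_nil_of_mem hs1)
  have ht : 1 ≤ T.length := by
    obtain ⟨x, hx1, hx2, hx3⟩ := hfalse
    have : x ∈ T := (mem_runs_snd wσ x).mpr ⟨hx1, hx2, hx3⟩
    exact List.length_pos_iff.mpr (List.ne_nil_of_mem this)
  have hgetS : (wperm wσ).getD (S.length - 1) 0 = 1 := by
    show (S ++ T).getD (S.length - 1) 0 = 1
    rw [List.getD_append _ _ _ _ (by omega)]
    exact getD_last_sorted (sorted_runs_fst wσ) hs1
      (fun y hy => ((mem_runs_fst wσ y).mp hy).1)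
  have hgetT : 1 < (wperm wσ).getD S.length 0 := by
    show 1 < (S ++ T).getD S.length 0
    rw [List.getD_append_right _ _ _ _ (le_refl _), Nat.sub_self]
    have hmem : T.getD 0 0 ∈ T := by
      rw [List.getD_eq_getElem T 0 (by omega)]; exact List.getElem_mem _
    have h := (mem_runs_snd wσ _).mp hmem
    rcases Nat.lt_or_ge 1 (T.getD 0 0) with h' | h'
    · exact h'
    · exfalso
      have : T.getD 0 0 = 1 := by omega
      rw [this] at h
      rw [hw1] at h
      exact absurd h.2.2 (by simp)
  have hasc : γ.getD (S.length - 1) 0 < γ.getD S.length 0 := by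
    apply (hrel.2 (S.length - 1) (S.length) (by omega) (by omega)).mpr
    rw [hgetS]; exact hgetT
  have hsort1 : γ₁.Pairwise (· > ·) := List.Pairwise.sublist hsub1 (sorted_runs_fst w)
  have hsort2 : γ₂.Pairwise (· > ·) := List.Pairwise.sublist hsub2 (sorted_runs_snd w)
  have hlen12 : γ₁.length + γ₂.length = wσ.length := by
    rw [← List.length_append, ← heqγ]; exact hlenγ
  have hlen1 : γ₁.length = S.length := by
    by_contra hne
    rcases Nat.lt_or_ge γ₁.length S.length with hlt | hge
    · have e1 : γ.getD (S.length - 1) 0 = γ₂.getD (S.length - 1 - γ₁.length) 0 := by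
        rw [heqγ]; exact List.getD_append_right _ _ _ _ (by omega)
      have e2 : γ.getD S.length 0 = γ₂.getD (S.length - γ₁.length) 0 := by
        rw [heqγ]; exact List.getD_append_right _ _ _ _ (by omega)
      rw [e1, e2] at hasc
      have := sorted_getD_lt hsort2
        (show S.length - 1 - γ₁.length < S.length - γ₁.length by omega) (by omega)
      omega
    · have hgt : S.length < γ₁.length := by omega
      have e1 : γ.getD (S.length - 1) 0 = γ₁.getD (S.length - 1) 0 := by
        rw [heqγ]; exact List.getD_append _ _ _ _ (by omega)
      have e2 : γ.getD S.length 0 = γ₁.getD S.length 0 := by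
        rw [heqγ]; exact List.getD_append _ _ _ _ (by omega)
      rw [e1, e2] at hasc
      have := sorted_getD_lt hsort1 (show S.length - 1 < S.length by omega) (by omega)
      omega
  refine ⟨fun c => γ.getD ((wperm wσ).idxOf c) 0, ?_, ?_⟩
  · intro c h1c h2c
    have hcmem : c ∈ wperm wσ := (mem_wperm wσ c).mpr ⟨h1c, h2c⟩
    have hidx : (wperm wσ).idxOf c < wσ.length := by
      have := List.idxOf_lt_length_iff.mpr hcmem; omega
    cases hlab : wlabel wσ c with
    | true =>
      have hcS : c ∈ S := (mem_runs_fst wσ c).mpr ⟨h1c, h2c, hlab⟩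
      have hidxS : (wperm wσ).idxOf c = S.idxOf c := by
        show (S ++ T).idxOf c = S.idxOf c
        exact List.idxOf_append_of_mem hcS
      have hidxlt : (wperm wσ).idxOf c < S.length := by
        rw [hidxS]; exact List.idxOf_lt_length_iff.mpr hcS
      have hval : γ.getD ((wperm wσ).idxOf c) 0 ∈ γ₁ := by
        rw [heqγ, List.getD_append _ _ _ _ (by omega),
          List.getD_eq_getElem γ₁ 0 (by omega)]
        exact List.getElem_mem _
      have hP : γ.getD ((wperm wσ).idxOf c) 0 ∈ (runs w).1 := hsub1.subset hval
      have := (mem_runs_fst w _).mp hP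
      exact ⟨this.1, this.2.1, by rw [this.2.2]⟩
    | false =>
      have hcT : c ∈ T := (mem_runs_snd wσ c).mpr ⟨h1c, h2c, hlab⟩
      have hcnS : c ∉ S := by
        intro hmem
        have := (mem_runs_fst wσ c).mp hmem
        rw [hlab] at this
        exact absurd this.2.2 (by simp)
      have hidxS : (wperm wσ).idxOf c = S.length + T.idxOf c := by
        show (S ++ T).idxOf c = S.length + T.idxOf c
        exact List.idxOf_append_of_notMem hcnS
      have hidxT : T.idxOf c < T.length := List.idxOf_lt_length_iff.mpr hcT
      have hval : γ.getD ((wperm wσ).idxOf c) 0 ∈ γ₂ := by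
        rw [heqγ, List.getD_append_right _ _ _ _ (by omega),
          List.getD_eq_getElem γ₂ 0 (by omega)]
        exact List.getElem_mem _
      have hQ : γ.getD ((wperm wσ).idxOf c) 0 ∈ (runs w).2 := hsub2.subset hval
      have := (mem_runs_snd w _).mp hQ
      exact ⟨this.1, this.2.1, by rw [this.2.2]⟩
  · intro c c' h1 h2 h3
    have hcmem : c ∈ wperm wσ := (mem_wperm wσ c).mpr ⟨h1, by omega⟩
    have hcmem' : c' ∈ wperm wσ := (mem_wperm wσ c').mpr ⟨by omega, h3⟩
    have hidx : (wperm wσ).idxOf c < wσ.length := by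
      have := List.idxOf_lt_length_iff.mpr hcmem; omega
    have hidx' : (wperm wσ).idxOf c' < wσ.length := by
      have := List.idxOf_lt_length_iff.mpr hcmem'; omega
    apply (hrel.2 _ _ (by omega) (by omega)).mpr
    rw [getD_indexOf hcmem, getD_indexOf hcmem']
    exact h2

end S9

namespace S9
open List

lemma wlabel_append_true_one (u : List Bool) : wlabel (u ++ [true]) 1 = true := by
  unfold wlabel
  have h : (u ++ [true]).length - 1 = u.length := by simp
  rw [h, List.getD_append_right _ _ _ _ (le_refl u.length)]
  simp

lemma one_mem_runs_fst (u : List Bool) : (1:ℕ) ∈ (runs (u ++ [true])).1 :=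
  (mem_runs_fst _ 1).mpr ⟨le_rfl, by simp, wlabel_append_true_one u⟩

lemma wperm_isPermList (u : List Bool) : IsPermList (u.length + 1) (wperm (u ++ [true])) := by
  have h := wperm_perm (u ++ [true])
  simpa [IsPermList] using h

lemma wperm_fishburnFree (u : List Bool) : FishburnFree (wperm (u ++ [true])) := by
  rintro ⟨j, k, hjk, hk, heq, hasc⟩
  have hplen : (wperm (u ++ [true])).length
      = (runs (u ++ [true])).1.length + (runs (u ++ [true])).2.length :=
    List.length_append
  have hP1 : (1:ℕ) ∈ (runs (u ++ [true])).1 := one_mem_runs_fst u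
  have hPlen : 1 ≤ (runs (u ++ [true])).1.length :=
    List.length_pos_iff.mpr (List.ne_nil_of_mem hP1)
  have hj1 : j + 1 = (runs (u ++ [true])).1.length := by
    by_contra hne
    rcases Nat.lt_or_ge (j+1) (runs (u ++ [true])).1.length with hlt | hge
    · have e1 : (wperm (u ++ [true])).getD j 0 = (runs (u ++ [true])).1.getD j 0 :=
        List.getD_append _ _ _ _ (by omega)
      have e2 : (wperm (u ++ [true])).getD (j+1) 0 = (runs (u ++ [true])).1.getD (j+1) 0 :=
        List.getD_append _ _ _ _ hlt
      rw [e1, e2] at hasc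
      have := sorted_getD_lt (sorted_runs_fst (u ++ [true])) (show j < j + 1 by omega) hlt
      omega
    · have e1 : (wperm (u ++ [true])).getD j 0
          = (runs (u ++ [true])).2.getD (j - (runs (u ++ [true])).1.length) 0 :=
        List.getD_append_right _ _ _ _ (by omega)
      have e2 : (wperm (u ++ [true])).getD (j+1) 0
          = (runs (u ++ [true])).2.getD (j+1 - (runs (u ++ [true])).1.length) 0 :=
        List.getD_append_right _ _ _ _ (by omega)
      rw [e1, e2] at hasc
      have := sorted_getD_lt (sorted_runs_snd (u ++ [true]))
        (show j - (runs (u ++ [true])).1.length < j + 1 - (runs (u ++ [true])).1.length by omega)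
        (by omega)
      omega
  have hval : (wperm (u ++ [true])).getD j 0 = 1 := by
    have e1 : (wperm (u ++ [true])).getD j 0 = (runs (u ++ [true])).1.getD j 0 :=
      List.getD_append _ _ _ _ (by omega)
    rw [e1, show j = (runs (u ++ [true])).1.length - 1 by omega]
    exact getD_last_sorted (sorted_runs_fst (u ++ [true])) hP1
      (fun y hy => ((mem_runs_fst (u ++ [true]) y).mp hy).1)
  have hkmem : (wperm (u ++ [true])).getD k 0 ∈ wperm (u ++ [true]) := by
    rw [List.getD_eq_getElem _ 0 hk]; exact List.getElem_mem _
  have := (mem_wperm (u ++ [true]) _).mp hkmem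
  omega

lemma wperm_avoid123 (w : List Bool) : ¬ SeqContains (wperm w) [1,2,3] := by
  rintro ⟨γ, hsub, hrel⟩
  have hlen : γ.length = 3 := by simpa using hrel.1
  have h01 : γ.getD 0 0 < γ.getD 1 0 := by
    apply (hrel.2 0 1 (by omega) (by omega)).mpr
    decide
  have h12 : γ.getD 1 0 < γ.getD 2 0 := by
    apply (hrel.2 1 2 (by omega) (by omega)).mpr
    decide
  obtain ⟨γ₁, γ₂, heq, h1, h2⟩ := List.sublist_append_iff.mp hsub
  have hs1 : γ₁.Pairwise (· > ·) := List.Pairwise.sublist h1 (sorted_runs_fst w)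
  have hs2 : γ₂.Pairwise (· > ·) := List.Pairwise.sublist h2 (sorted_runs_snd w)
  have hl : γ₁.length + γ₂.length = 3 := by rw [← List.length_append, ← heq]; exact hlen
  rcases Nat.lt_or_ge γ₁.length 2 with hc | hc
  · have e1 : γ.getD 1 0 = γ₂.getD (1 - γ₁.length) 0 := by
      rw [heq]; exact List.getD_append_right _ _ _ _ (by omega)
    have e2 : γ.getD 2 0 = γ₂.getD (2 - γ₁.length) 0 := by
      rw [heq]; exact List.getD_append_right _ _ _ _ (by omega)
    rw [e1, e2] at h12
    have := sorted_getD_lt hs2 (show 1 - γ₁.length < 2 - γ₁.length by omega) (by omega)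
    omega
  · have e1 : γ.getD 0 0 = γ₁.getD 0 0 := by
      rw [heq]; exact List.getD_append _ _ _ _ (by omega)
    have e2 : γ.getD 1 0 = γ₁.getD 1 0 := by
      rw [heq]; exact List.getD_append _ _ _ _ (by omega)
    rw [e1, e2] at h01
    have := sorted_getD_lt hs1 (show (0:ℕ) < 1 by omega) (by omega)
    omega

lemma wperm_mem_fishburnSet (u : List Bool) :
    wperm (u ++ [true]) ∈ FishburnSet (u.length + 1) [[1,2,3]] := by
  refine ⟨wperm_isPermList u, wperm_fishburnFree u, ?_⟩
  intro p hp
  simp at hp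
  subst hp
  exact wperm_avoid123 _

lemma srel3 {a b c : ℕ} (h1 : a < b) (h2 : b < c) : SameRelOrder [a,b,c] [1,2,3] := by
  refine ⟨rfl, ?_⟩
  intro i j hi hj
  simp at hi hj
  interval_cases i <;> interval_cases j <;> simp [List.getD] <;> omega

lemma exists_word_of_runs : ∀ n : ℕ, 1 ≤ n → ∀ L R : List ℕ, L.Pairwise (· > ·) →
    R.Pairwise (· > ·) → (1:ℕ) ∈ L → (L ++ R).Perm (List.range' 1 n) →
    ∃ u : List Bool, u.length = n - 1 ∧ runs (u ++ [true]) = (L, R) := by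
  intro n
  induction n with
  | zero => omega
  | succ n ih =>
    intro _ L R hL hR h1L hperm
    rcases Nat.eq_zero_or_pos n with hn0 | hn0
    · subst hn0
      have h : L ++ R = [1] := List.perm_singleton.mp (by simpa using hperm)
      cases L with
      | nil => simp at h1L
      | cons a L' =>
        rw [List.cons_append] at h
        obtain ⟨ha, hrest⟩ := List.cons_eq_cons.mp h
        obtain ⟨hL', hR'⟩ := List.append_eq_nil_iff.mp hrest
        subst ha hL' hR'
        exact ⟨[], rfl, rfl⟩
    · have hmem : (n+1) ∈ L ++ R := hperm.mem_iff.mpr (by rw [List.mem_range'_1]; omega)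
      have hbound : ∀ x ∈ L ++ R, x ≤ n + 1 := by
        intro x hx
        have h := hperm.subset hx
        rw [List.mem_range'_1] at h; omega
      have hrange : List.range' 1 (n+1) = List.range' 1 n ++ [1+n] := List.range'_1_concat (s := 1) (n := n)
      rcases List.mem_append.mp hmem with hmL | hmR
      · cases L with
        | nil => simp at hmL
        | cons a L' =>
          have ha : a = n + 1 := by
            rcases List.mem_cons.mp hmL with h | h
            · omega
            · have h2 := (List.pairwise_cons.mp hL).1 _ h
              have h3 := hbound a (by simp)
              omega
          subst ha
          have h1L' : (1:ℕ) ∈ L' := by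
            rcases List.mem_cons.mp h1L with h | h
            · omega
            · exact h
          have hperm' : (L' ++ R).Perm (List.range' 1 n) := by
            have h2 : ((n+1) :: (L' ++ R)).Perm ((n+1) :: List.range' 1 n) := by
              rw [List.cons_append] at hperm
              refine hperm.trans ?_
              rw [hrange, Nat.add_comm 1 n]
              exact List.perm_append_singleton _ _
            exact h2.cons_inv
          obtain ⟨u', hul, hruns⟩ := ih hn0 L' R (List.pairwise_cons.mp hL).2 hR h1L' hperm'
          have hlen' : (u' ++ [true]).length = n := by simp [hul]; omega
          refine ⟨true :: u', by simp [hul]; omega, ?_⟩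
          show runs (true :: (u' ++ [true])) = ((n+1) :: L', R)
          show (((u' ++ [true]).length + 1) :: (runs (u' ++ [true])).1, (runs (u' ++ [true])).2)
            = ((n+1) :: L', R)
          rw [hruns, hlen']
      · cases R with
        | nil => simp at hmR
        | cons b R' =>
          have hb : b = n + 1 := by
            rcases List.mem_cons.mp hmR with h | h
            · omega
            · have h2 := (List.pairwise_cons.mp hR).1 _ h
              have h3 := hbound b (by simp)
              omega
          subst hb
          have hperm' : (L ++ R').Perm (List.range' 1 n) := by
            have h2 : ((n+1) :: (L ++ R')).Perm ((n+1) :: List.range' 1 n) := by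
              refine (List.perm_middle.symm.trans hperm).trans ?_
              rw [hrange, Nat.add_comm 1 n]
              exact List.perm_append_singleton _ _
            exact h2.cons_inv
          obtain ⟨u', hul, hruns⟩ := ih hn0 L R' hL (List.pairwise_cons.mp hR).2 h1L hperm'
          have hlen' : (u' ++ [true]).length = n := by simp [hul]; omega
          refine ⟨false :: u', by simp [hul]; omega, ?_⟩
          show runs (false :: (u' ++ [true])) = (L, (n+1) :: R')
          show ((runs (u' ++ [true])).1, ((u' ++ [true]).length + 1) :: (runs (u' ++ [true])).2)
            = (L, (n+1) :: R')
          rw [hruns, hlen']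

end S9

namespace S9
open List

lemma exists_word {n : ℕ} (hn : 1 ≤ n) {π : List ℕ} (hperm : IsPermList n π)
    (hff : FishburnFree π) (h123 : ¬ SeqContains π [1,2,3]) :
    ∃ u : List Bool, u.length = n - 1 ∧ π = wperm (u ++ [true]) := by
  have hlen : π.length = n := by rw [hperm.length_eq, List.length_range']
  have hmem : ∀ x, x ∈ π ↔ 1 ≤ x ∧ x ≤ n := by
    intro x; rw [hperm.mem_iff, List.mem_range'_1]; omega
  have hnd : π.Nodup := hperm.nodup_iff.mpr (List.nodup_range' ..)
  have htriple : ∀ p i : ℕ, p < i → i + 1 < n →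
      ([π.getD p 0, π.getD i 0, π.getD (i+1) 0]).Sublist π := by
    intro p i hpi hin
    have e : ∀ (jj : ℕ) (h : jj < π.length), π.getD jj 0 = π.get ⟨jj, h⟩ := fun jj h => by
      rw [List.getD_eq_getElem π 0 h, List.get_eq_getElem]
    rw [e p (by omega), e i (by omega), e (i+1) (by omega)]
    apply List.map_getElem_sublist (is := [⟨p, by omega⟩, ⟨i, by omega⟩, ⟨i+1, by omega⟩])
    refine List.pairwise_cons.mpr ⟨?_, List.pairwise_cons.mpr ⟨?_, List.pairwise_singleton _ _⟩⟩
    · intro b hb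
      rcases List.mem_cons.mp hb with rfl | hb
      · exact Fin.mk_lt_mk.mpr (by omega)
      · rcases List.mem_singleton.mp hb with rfl
        exact Fin.mk_lt_mk.mpr (by omega)
    · intro b hb
      rcases List.mem_singleton.mp hb with rfl
      exact Fin.mk_lt_mk.mpr (by omega)
  have claimC : ∀ i, i + 1 < n → π.getD i 0 < π.getD (i+1) 0 → π.getD i 0 = 1 := by
    intro i hin hasc
    by_contra hne
    have hmi : π.getD i 0 ∈ π := by
      rw [List.getD_eq_getElem π 0 (by omega)]; exact List.getElem_mem _
    have hb := (hmem _).mp hmi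
    have hm1 : (π.getD i 0 - 1) ∈ π := (hmem _).mpr ⟨by omega, by omega⟩
    have hpl : π.idxOf (π.getD i 0 - 1) < n := by
      have := List.idxOf_lt_length_iff.mpr hm1; omega
    have hpv : π.getD (π.idxOf (π.getD i 0 - 1)) 0 = π.getD i 0 - 1 := getD_indexOf hm1
    have hpi : π.idxOf (π.getD i 0 - 1) ≠ i := by intro h; rw [h] at hpv; omega
    have hpi1 : π.idxOf (π.getD i 0 - 1) ≠ i + 1 := by intro h; rw [h] at hpv; omega
    rcases Nat.lt_or_ge (π.idxOf (π.getD i 0 - 1)) i with hlt | hge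
    · apply h123
      exact ⟨[π.getD (π.idxOf (π.getD i 0 - 1)) 0, π.getD i 0, π.getD (i+1) 0],
        htriple _ i hlt hin, srel3 (by omega) (by omega)⟩
    · apply hff
      refine ⟨i, π.idxOf (π.getD i 0 - 1), by omega, by omega, by omega, hasc⟩
  have h1π : (1:ℕ) ∈ π := (hmem 1).mpr ⟨le_rfl, hn⟩
  have hi0 : π.idxOf 1 < n := by have := List.idxOf_lt_length_iff.mpr h1π; omega
  have hi0v : π.getD (π.idxOf 1) 0 = 1 := getD_indexOf h1π
  have huniq : ∀ i, i + 1 < n → π.getD i 0 < π.getD (i+1) 0 → i = π.idxOf 1 := by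
    intro i hin hasc
    have h1 := claimC i hin hasc
    have e1 : π[i]'(by omega) = π[π.idxOf 1]'(by omega) := by
      rw [← List.getD_eq_getElem π 0 (by omega : i < π.length),
        ← List.getD_eq_getElem π 0 (by omega : π.idxOf 1 < π.length), h1, hi0v]
    exact hnd.getElem_inj_iff.mp e1
  have hdesc : ∀ i, i + 1 < n → i ≠ π.idxOf 1 → π.getD (i+1) 0 < π.getD i 0 := by
    intro i hin hne
    have hne2 : π.getD i 0 ≠ π.getD (i+1) 0 := by
      intro h
      have e1 : π[i]'(by omega) = π[i+1]'(by omega) := by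
        rw [← List.getD_eq_getElem π 0 (by omega : i < π.length),
          ← List.getD_eq_getElem π 0 (by omega : i + 1 < π.length), h]
      have := hnd.getElem_inj_iff.mp e1
      omega
    rcases Nat.lt_or_ge (π.getD i 0) (π.getD (i+1) 0) with h | h
    · exact absurd (huniq i hin h) hne
    · omega
  have hLlen : (π.take (π.idxOf 1 + 1)).length = π.idxOf 1 + 1 := by
    rw [List.length_take]; omega
  have hRlen : (π.drop (π.idxOf 1 + 1)).length = n - (π.idxOf 1 + 1) := by
    rw [List.length_drop]; omega
  have hLsorted : (π.take (π.idxOf 1 + 1)).Pairwise (· > ·) := by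
    have hch : List.IsChain (· > ·) (π.take (π.idxOf 1 + 1)) := by
      rw [List.isChain_iff_getElem]
      intro jj hjj
      rw [hLlen] at hjj
      have hjn : jj + 1 < n := by omega
      have e1 : ∀ (m : ℕ) (h : m < π.idxOf 1 + 1),
          (π.take (π.idxOf 1 + 1))[m]'(by omega) = π.getD m 0 := by
        intro m h
        rw [List.getElem_take,
          List.getD_eq_getElem π 0 (show m < π.length by omega)]
      rw [e1 jj (by omega), e1 (jj+1) (by omega)]
      exact hdesc jj hjn (by omega)
    exact List.isChain_iff_pairwise.mp hch
  have hRsorted : (π.drop (π.idxOf 1 + 1)).Pairwise (· > ·) := by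
    have hch : List.IsChain (· > ·) (π.drop (π.idxOf 1 + 1)) := by
      rw [List.isChain_iff_getElem]
      intro jj hjj
      rw [hRlen] at hjj
      have e1 : ∀ (m : ℕ) (h : m < n - (π.idxOf 1 + 1)),
          (π.drop (π.idxOf 1 + 1))[m]'(by rw [hRlen]; omega)
            = π.getD (π.idxOf 1 + 1 + m) 0 := by
        intro m h
        rw [List.getElem_drop,
          List.getD_eq_getElem π 0 (show π.idxOf 1 + 1 + m < π.length by omega)]
      rw [e1 jj (by omega), e1 (jj+1) (by omega)]
      have : π.idxOf 1 + 1 + (jj + 1) = (π.idxOf 1 + 1 + jj) + 1 := by omega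
      rw [this]
      exact hdesc _ (by omega) (by omega)
    exact List.isChain_iff_pairwise.mp hch
  have h1L : (1:ℕ) ∈ π.take (π.idxOf 1 + 1) := by
    have hgl : (π.take (π.idxOf 1 + 1))[π.idxOf 1]'(by rw [hLlen]; omega) = 1 := by
      rw [List.getElem_take, ← List.getD_eq_getElem π 0 (by omega : π.idxOf 1 < π.length)]
      exact hi0v
    exact List.mem_iff_getElem.mpr ⟨π.idxOf 1, by rw [hLlen]; omega, hgl⟩
  have hcat : π.take (π.idxOf 1 + 1) ++ π.drop (π.idxOf 1 + 1) = π :=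
    List.take_append_drop _ π
  obtain ⟨u, hul, hruns⟩ := exists_word_of_runs n hn _ _ hLsorted hRsorted h1L
    (by rw [hcat]; exact hperm)
  refine ⟨u, hul, ?_⟩
  show π = (runs (u ++ [true])).1 ++ (runs (u ++ [true])).2
  rw [hruns]
  exact hcat.symm

end S9

namespace S9
open List

def BW : ℕ → Finset (List Bool)
  | 0 => {[]}
  | m+1 => (BW m).image (List.cons true) ∪ (BW m).image (List.cons false)

lemma mem_BW : ∀ m (u : List Bool), u ∈ BW m ↔ u.length = m := by
  intro m
  induction m with
  | zero => intro u; simp [BW, List.length_eq_zero_iff]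
  | succ m ih =>
    intro u
    cases u with
    | nil => simp [BW, ih]
    | cons x u' =>
      cases x <;> simp [BW, ih]

lemma sum_choose_zero {r : ℕ} (hr : 1 ≤ r) : ∑ j ∈ Finset.range r, Nat.choose 0 j = 1 := by
  induction r with
  | zero => omega
  | succ r ihr =>
    rcases Nat.eq_zero_or_pos r with h0 | h0
    · subst h0; simp
    · rw [Finset.sum_range_succ, ihr h0, Nat.choose_eq_zero_of_lt (by omega)]

lemma sum_choose_succ (m r : ℕ) :
    ∑ j ∈ Finset.range (r+1), (m+1).choose j
      = (∑ j ∈ Finset.range r, m.choose j) + ∑ j ∈ Finset.range (r+1), m.choose j := by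
  induction r with
  | zero => simp
  | succ r ihr =>
    rw [Finset.sum_range_succ, ihr, Nat.choose_succ_succ,
      Finset.sum_range_succ (fun j => m.choose j) r,
      Finset.sum_range_succ (fun j => m.choose j) (r+1),
      Finset.sum_range_succ (fun j => m.choose j) r]
    ring

lemma sublist_cons_of_ne {c x : Bool} {v u : List Bool} (h : c ≠ x) :
    (c :: v).Sublist (x :: u) ↔ (c :: v).Sublist u := by
  constructor
  · intro hs
    cases hs with
    | cons _ hs => exact hs
    | cons_cons => exact absurd rfl h
  · exact fun hs => hs.cons _

lemma card_avoid : ∀ m (v : List Bool),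
    ((BW m).filter (fun u => ¬ v.Sublist u)).card = ∑ j ∈ Finset.range v.length, m.choose j := by
  intro m
  induction m with
  | zero =>
    intro v
    cases v with
    | nil => simp [BW]
    | cons c v' =>
      rw [show BW 0 = {[]} from rfl]
      rw [Finset.filter_singleton]
      simp only [List.sublist_nil]
      rw [if_pos (by simp)]
      rw [Finset.card_singleton]
      exact (sum_choose_zero (by simp)).symm
  | succ m ih =>
    intro v
    cases v with
    | nil =>
      simp
    | cons c v' =>
      have hdisj : Disjoint ((BW m).image (List.cons true)) ((BW m).image (List.cons false)) := by
        rw [Finset.disjoint_left]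
        intro a ha hb
        obtain ⟨a1, _, rfl⟩ := Finset.mem_image.mp ha
        obtain ⟨a2, _, heq⟩ := Finset.mem_image.mp hb
        exact absurd (List.cons_eq_cons.mp heq).1 (by simp)
      have hinj : ∀ (b : Bool), Set.InjOn (List.cons b) (BW m) := by
        intro b x _ y _ h
        exact (List.cons_eq_cons.mp h).2
      have key : ∀ (b : Bool), (((BW m).image (List.cons b)).filter (fun u => ¬ (c :: v').Sublist u)).card
          = if c = b then ∑ j ∈ Finset.range v'.length, m.choose j
            else ∑ j ∈ Finset.range (v'.length + 1), m.choose j := by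
        intro b
        rw [Finset.filter_image]
        rw [Finset.card_image_of_injOn (fun x hx y hy h => (List.cons_eq_cons.mp h).2)]
        by_cases hcb : c = b
        · subst hcb
          rw [if_pos rfl, ← ih v']
          exact congrArg Finset.card
            (Finset.filter_congr (fun u _ => not_congr List.cons_sublist_cons))
        · rw [if_neg hcb]
          have h2 := ih (c :: v')
          rw [List.length_cons] at h2
          rw [← h2]
          exact congrArg Finset.card
            (Finset.filter_congr (fun u _ => not_congr (sublist_cons_of_ne hcb)))
      show ((((BW m).image (List.cons true)) ∪ ((BW m).image (List.cons false))).filter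
          (fun u => ¬ (c :: v').Sublist u)).card = _
      rw [Finset.filter_union, Finset.card_union_of_disjoint
        (Finset.disjoint_filter_filter hdisj), key true, key false]
      rw [List.length_cons, sum_choose_succ m v'.length]
      cases c
      · rw [if_neg (by decide), if_pos rfl]
        exact Nat.add_comm _ _
      · rw [if_pos rfl, if_neg (by decide)]

end S9

namespace S9
open List

lemma pair_eq : ∀ (P₁ : List ℕ), ∀ {Q₁ P₂ Q₂ : List ℕ}, P₁.Pairwise (· > ·) → P₂.Pairwise (· > ·) →
    (∀ x ∈ P₁, 1 ≤ x) → (∀ x ∈ P₂, 1 ≤ x) → (1:ℕ) ∈ P₁ → (1:ℕ) ∈ P₂ →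
    P₁ ++ Q₁ = P₂ ++ Q₂ → P₁ = P₂ ∧ Q₁ = Q₂ := by
  intro P₁
  induction P₁ with
  | nil => intro Q₁ P₂ Q₂ _ _ _ _ h1 _ _; simp at h1
  | cons a P₁' ih =>
    intro Q₁ P₂ Q₂ hs1 hs2 hb1 hb2 h1 h2 heq
    cases P₂ with
    | nil => simp at h2
    | cons b P₂' =>
      rw [List.cons_append, List.cons_append] at heq
      obtain ⟨hab, htail⟩ := List.cons_eq_cons.mp heq
      subst hab
      by_cases ha1 : a = 1
      · subst ha1
        have hP1' : P₁' = [] := by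
          cases P₁' with
          | nil => rfl
          | cons z P'' =>
            have hz := (List.pairwise_cons.mp hs1).1 z (by simp)
            have := hb1 z (by simp)
            omega
        have hP2' : P₂' = [] := by
          cases P₂' with
          | nil => rfl
          | cons z P'' =>
            have hz := (List.pairwise_cons.mp hs2).1 z (by simp)
            have := hb2 z (by simp)
            omega
        subst hP1' hP2'
        simpa using htail
      · have h1' : (1:ℕ) ∈ P₁' := by
          rcases List.mem_cons.mp h1 with h | h
          · exact absurd h.symm ha1
          · exact h
        have h2' : (1:ℕ) ∈ P₂' := by
          rcases List.mem_cons.mp h2 with h | h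
          · exact absurd h.symm ha1
          · exact h
        obtain ⟨e1, e2⟩ := ih (List.pairwise_cons.mp hs1).2 (List.pairwise_cons.mp hs2).2
          (fun x hx => hb1 x (by simp [hx])) (fun x hx => hb2 x (by simp [hx])) h1' h2' htail
        exact ⟨by rw [e1], e2⟩

lemma wperm_inj {u₁ u₂ : List Bool} (hlen : u₁.length = u₂.length)
    (heq : wperm (u₁ ++ [true]) = wperm (u₂ ++ [true])) : u₁ = u₂ := by
  have hpair := pair_eq (runs (u₁ ++ [true])).1
    (sorted_runs_fst _) (sorted_runs_fst _)
    (fun x hx => ((mem_runs_fst _ x).mp hx).1)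
    (fun x hx => ((mem_runs_fst _ x).mp hx).1)
    (one_mem_runs_fst u₁) (one_mem_runs_fst u₂) heq
  have hlab : ∀ x, 1 ≤ x → x ≤ u₁.length + 1 →
      wlabel (u₁ ++ [true]) x = wlabel (u₂ ++ [true]) x := by
    intro x hx1 hx2
    have hiff : x ∈ (runs (u₁ ++ [true])).1 ↔ x ∈ (runs (u₂ ++ [true])).1 := by
      rw [hpair.1]
    rw [mem_runs_fst, mem_runs_fst] at hiff
    simp only [List.length_append, List.length_singleton] at hiff
    cases hl1 : wlabel (u₁ ++ [true]) x <;> cases hl2 : wlabel (u₂ ++ [true]) x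
    · rfl
    · exfalso
      have := hiff.mpr ⟨hx1, by omega, hl2⟩
      rw [hl1] at this
      simp at this
    · exfalso
      have := hiff.mp ⟨hx1, by omega, hl1⟩
      rw [hl2] at this
      simp at this
    · rfl
  apply List.ext_getElem hlen
  intro i h1 h2
  have e : ∀ (u : List Bool) (h : i < u.length),
      (u ++ [true]).getD i false = u[i] := by
    intro u h
    rw [List.getD_append _ _ _ _ (by omega), List.getD_eq_getElem u false h]
  have lab : ∀ (u : List Bool) (h : i < u.length),
      wlabel (u ++ [true]) (u.length + 1 - i) = u[i] := by
    intro u h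
    unfold wlabel
    have hidx : (u ++ [true]).length - (u.length + 1 - i) = i := by simp; omega
    rw [hidx]
    exact e u h
  have := hlab (u₁.length + 1 - i) (by omega) (by omega)
  rw [lab u₁ h1] at this
  rw [show u₁.length + 1 - i = u₂.length + 1 - i by omega] at this
  rw [lab u₂ h2] at this
  exact this

lemma wperm_replicate : ∀ m : ℕ, wperm (List.replicate m true) = (List.range' 1 m).reverse := by
  intro m
  induction m with
  | zero => simp [wperm, runs]
  | succ m ih =>
    rw [List.replicate_succ]
    show ((List.replicate m true).length + 1) :: (runs (List.replicate m true)).1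
        ++ (runs (List.replicate m true)).2 = _
    rw [List.range'_1_concat, List.reverse_append]
    simp only [List.length_replicate, List.reverse_singleton, List.singleton_append]
    rw [Nat.add_comm 1 m]
    rw [← ih]
    rfl

end S9


open S9

/-- Suppose `k ≥ 1`, `σ ∈ F_k(123)`, and `σ` is not the decreasing permutation
`k ⋯ 2 1`.  Then for all `n ≥ 0`, `|F_n(123, σ)| = Σ_{j=0}^{k-2} C(n-1, j)`. -/
theorem stmt9 (k : ℕ) (hk : 1 ≤ k) (σ : List ℕ) (hσ : σ ∈ FishburnSet k [[1, 2, 3]])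
    (hdec : σ ≠ (List.range' 1 k).reverse) (n : ℕ) :
    (FishburnSet n [[1, 2, 3], σ]).ncard =
      ∑ j ∈ Finset.range (k - 1), (n - 1).choose j := by
  obtain ⟨hσperm, hσff, hσav⟩ := hσ
  have hσlen : σ.length = k := by rw [hσperm.length_eq, List.length_range']
  have hk2 : 2 ≤ k := by
    by_contra h
    have hk1 : k = 1 := by omega
    subst hk1
    have hσ1 : σ = [1] := List.perm_singleton.mp (by simpa [IsPermList] using hσperm)
    exact hdec (by simp [hσ1])
  obtain ⟨v, hvlen, hσw⟩ := exists_word hk hσperm hσff (hσav _ (by simp))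
  have hvfalse : false ∈ v := by
    by_contra hf
    have hall : v = List.replicate v.length true := List.eq_replicate_of_mem (fun x hx => by
      cases x
      · exact absurd hx hf
      · rfl)
    rw [hvlen] at hall
    apply hdec
    rw [hσw, hall]
    have hrep : List.replicate (k-1) true ++ [true] = List.replicate k true := by
      rw [← List.replicate_succ']
      congr 1
      omega
    rw [hrep, wperm_replicate]
  have hwlab : wlabel (v ++ [true]) (v.length + 1 - v.idxOf false) = false := by
    unfold wlabel
    have h1 : (v ++ [true]).length = v.length + 1 := by simp
    have hp : v.idxOf false < v.length := List.idxOf_lt_length_iff.mpr hvfalse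
    rw [h1, show v.length + 1 - (v.length + 1 - v.idxOf false) = v.idxOf false by omega]
    rw [List.getD_append _ _ _ _ hp, List.getD_eq_getElem v false hp]
    have h2 := List.idxOf_get (List.idxOf_lt_length_iff.mpr hvfalse)
    rwa [List.get_eq_getElem] at h2
  have hpidx : v.idxOf false < v.length := List.idxOf_lt_length_iff.mpr hvfalse
  rcases Nat.eq_zero_or_pos n with hn0 | hn
  · subst hn0
    have hset : FishburnSet 0 [[1,2,3], σ] = {([] : List ℕ)} := by
      ext l
      simp only [FishburnSet, Set.mem_setOf_eq, Set.mem_singleton_iff]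
      constructor
      · rintro ⟨h1, _, _⟩
        simpa [IsPermList] using h1
      · rintro rfl
        refine ⟨by simp [IsPermList], ?_, ?_⟩
        · rintro ⟨j, kk, h1, h2, _⟩
          simp at h2
        · intro p hp
          rintro ⟨γ, hsub, hrel⟩
          have hγ : γ = [] := List.sublist_nil.mp hsub
          subst hγ
          have hplen := hrel.1
          simp only [List.mem_cons, List.not_mem_nil, or_false] at hp
          rcases hp with rfl | rfl
          · simp at hplen
          · rw [← hplen] at hσlen
            simp at hσlen
            omega
    rw [hset, Set.ncard_singleton]
    simp only [Nat.zero_sub]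
    exact (sum_choose_zero (by omega)).symm
  · have hset : FishburnSet n [[1,2,3], σ]
        = ↑(((BW (n-1)).filter (fun u => ¬ v.Sublist u)).image (fun u => wperm (u ++ [true]))) := by
      ext π
      simp only [Finset.coe_image, Set.mem_image, Finset.mem_coe, Finset.mem_filter, mem_BW]
      constructor
      · rintro ⟨h1, h2, h3⟩
        obtain ⟨u, hul, hπ⟩ := exists_word hn h1 h2 (h3 _ (by simp))
        refine ⟨u, ⟨hul, ?_⟩, hπ.symm⟩
        intro hvu
        apply h3 σ (by simp)
        rw [hπ, hσw]
        obtain ⟨g, hg⟩ := goodmap_of_sublist (sublist_append_true.mpr hvu)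
        exact contains_of_goodmap g hg
      · rintro ⟨u, ⟨hul, havoid⟩, rfl⟩
        have hn1 : u.length + 1 = n := by omega
        obtain ⟨m1, m2, m3⟩ := wperm_mem_fishburnSet u
        refine ⟨by rw [← hn1]; exact m1, m2, ?_⟩
        intro p hp
        simp only [List.mem_cons, List.not_mem_nil, or_false] at hp
        rcases hp with rfl | rfl
        · exact m3 _ (by simp)
        · rw [hσw]
          intro hcont
          obtain ⟨g, hg⟩ := goodmap_of_contains (wlabel_append_true_one v)
            (by simp)
            ⟨v.length + 1 - v.idxOf false, by omega, by simp, hwlab⟩ hcont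
          exact havoid (sublist_append_true.mp (sublist_of_goodmap _ _ g hg))
    rw [hset, Set.ncard_coe_finset]
    rw [Finset.card_image_of_injOn (fun x hx y hy h => wperm_inj
      (by
        have hx' := (mem_BW _ _).mp (Finset.mem_filter.mp hx).1
        have hy' := (mem_BW _ _).mp (Finset.mem_filter.mp hy).1
        rw [hx', hy'])
      h)]
    rw [card_avoid (n-1) v, hvlen]
end
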